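/- arXiv:math/0212252 — 5 statements merged into one kernel-verified Lean document; each statement's English description precedes it below -/
import Mathlib

section
/- Let H be a Hopf algebra over a field k. The category YD(H) of left-left Yetter-Drinfeld modules over H is isomorphic (as a category, and as a braided monoidal category) to the Drinfeld center Z(Rep(H)) of the category of left H-modules: the functor sending a half-braiding (V, c) to V with coaction Δ_V(v) = c⁻¹_H(1_H ⊗ v) ∈ V ⊗ H, and the functor sending a Yetter-Drinfeld module (V, Δ_V) to V with half-braiding c_X(v⊗x) = s(v_{(1)})x ⊗ v_{(V)}, are mutually inverse. -/
open TensorProduct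

universe u

variable (k : Type u) [Field k] (H : Type u) [Ring H] [HopfAlgebra k H]

/-- The Yetter–Drinfeld crossing condition for a left `H`-module (action `aV`)
and left `H`-comodule (coaction `ΔV`) `V`: as linear maps `H ⊗ V → V ⊗ H`,
`h' v_{(V)} ⊗ h'' v_{(1)} = (h'' v)_{(V)} ⊗ (h'' v)_{(1)} h'`. -/
def YDCrossing (V : Type u) [AddCommGroup V] [Module k V]
    (aV : H →ₗ[k] V →ₗ[k] V) (ΔV : V →ₗ[k] V ⊗[k] H) : Prop :=
  (TensorProduct.map (TensorProduct.lift aV) (LinearMap.mul' k H)) ∘ₗ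
      (TensorProduct.tensorTensorTensorComm k H H V H).toLinearMap ∘ₗ
      (TensorProduct.map (Coalgebra.comul (R := k)) ΔV) =
    (TensorProduct.map LinearMap.id (LinearMap.mul' k H)) ∘ₗ
      (TensorProduct.assoc k V H H).toLinearMap ∘ₗ
      (TensorProduct.comm k H (V ⊗[k] H)).toLinearMap ∘ₗ
      (TensorProduct.map LinearMap.id ΔV) ∘ₗ
      (TensorProduct.map LinearMap.id (TensorProduct.lift aV)) ∘ₗ
      (TensorProduct.assoc k H H V).toLinearMap ∘ₗ
      (TensorProduct.map (Coalgebra.comul (R := k)) LinearMap.id)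

/-- Coassociativity of a comodule coaction. -/
def YDCoassoc (V : Type u) [AddCommGroup V] [Module k V]
    (ΔV : V →ₗ[k] V ⊗[k] H) : Prop :=
  (TensorProduct.assoc k V H H).toLinearMap ∘ₗ
      (TensorProduct.map ΔV LinearMap.id) ∘ₗ ΔV =
    (TensorProduct.map LinearMap.id (Coalgebra.comul (R := k))) ∘ₗ ΔV

/-- Counitarity of a comodule coaction. -/
def YDCounital (V : Type u) [AddCommGroup V] [Module k V]
    (ΔV : V →ₗ[k] V ⊗[k] H) : Prop :=
  (TensorProduct.rid k V).toLinearMap ∘ₗ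
      (TensorProduct.map LinearMap.id (Coalgebra.counit (R := k))) ∘ₗ ΔV =
    LinearMap.id

/-- Unitality and multiplicativity of a module action. -/
def IsAction (V : Type u) [AddCommGroup V] [Module k V]
    (aV : H →ₗ[k] V →ₗ[k] V) : Prop :=
  (∀ v : V, aV 1 v = v) ∧ (∀ (g h : H) (v : V), aV (g * h) v = aV g (aV h v))

/-- The diagonal (comultiplication) action of `H` on a tensor product of two
modules with actions `aM`, `aN` (given as linear maps `H ⊗ M → M`). -/
noncomputable def tAct {k : Type u} [Field k] {H : Type u} [Ring H] [HopfAlgebra k H]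
    {M N : Type u} [AddCommGroup M] [Module k M] [AddCommGroup N] [Module k N]
    (aM : H ⊗[k] M →ₗ[k] M) (aN : H ⊗[k] N →ₗ[k] N) :
    H ⊗[k] (M ⊗[k] N) →ₗ[k] M ⊗[k] N :=
  (TensorProduct.map aM aN) ∘ₗ
    (TensorProduct.tensorTensorTensorComm k H H M N).toLinearMap ∘ₗ
    (TensorProduct.map (Coalgebra.comul (R := k)) LinearMap.id)

/-- The half-braiding `c_X(v ⊗ x) = s(v_{(1)}) x ⊗ v_{(V)}` associated with a
Yetter-Drinfeld coaction `ΔV` and a module `X` with action `aX`. -/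
noncomputable def ydHalfBraiding {k : Type u} [Field k] {H : Type u} [Ring H]
    [HopfAlgebra k H] {V X : Type u}
    [AddCommGroup V] [Module k V] [AddCommGroup X] [Module k X]
    (ΔV : V →ₗ[k] V ⊗[k] H) (aX : H ⊗[k] X →ₗ[k] X) :
    V ⊗[k] X →ₗ[k] X ⊗[k] V :=
  (TensorProduct.comm k V X).toLinearMap ∘ₗ
    (TensorProduct.map LinearMap.id
      (aX ∘ₗ (TensorProduct.map (HopfAlgebra.antipode (R := k)) LinearMap.id))) ∘ₗ
    (TensorProduct.assoc k V H X).toLinearMap ∘ₗ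
    (TensorProduct.map ΔV LinearMap.id)

/-- The candidate inverse `ĉ_X(x ⊗ v) = v_{(V)} ⊗ v_{(1)} x`. -/
noncomputable def ydHalfBraidingInv {k : Type u} [Field k] {H : Type u} [Ring H]
    [HopfAlgebra k H] {V X : Type u}
    [AddCommGroup V] [Module k V] [AddCommGroup X] [Module k X]
    (ΔV : V →ₗ[k] V ⊗[k] H) (aX : H ⊗[k] X →ₗ[k] X) :
    X ⊗[k] V →ₗ[k] V ⊗[k] X :=
  (TensorProduct.map LinearMap.id aX) ∘ₗ
    (TensorProduct.assoc k V H X).toLinearMap ∘ₗ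
    (TensorProduct.map ΔV LinearMap.id) ∘ₗ
    (TensorProduct.comm k X V).toLinearMap

/-- A half-braiding on a `k`-module `V` with `H`-action `aV`, relative to the
category of left `H`-modules: a family of `H`-linear isomorphisms
`c_X : V ⊗ X → X ⊗ V`, natural in `X`, satisfying the half-braiding axiom. -/
def IsHalfBraiding {k : Type u} [Field k] {H : Type u} [Ring H] [HopfAlgebra k H]
    (V : Type u) [AddCommGroup V] [Module k V] (aV : H →ₗ[k] V →ₗ[k] V)
    (c : ∀ (X : Type u) [AddCommGroup X] [Module k X],
      (H ⊗[k] X →ₗ[k] X) → (V ⊗[k] X →ₗ[k] X ⊗[k] V)) : Prop :=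
  (∀ (X : Type u) [AddCommGroup X] [Module k X] (aX : H ⊗[k] X →ₗ[k] X),
    (∀ x : X, aX (1 ⊗ₜ x) = x) →
    (∀ (g h : H) (x : X), aX ((g * h) ⊗ₜ x) = aX (g ⊗ₜ aX (h ⊗ₜ x))) →
    Function.Bijective (c X aX)) ∧
  (∀ (X : Type u) [AddCommGroup X] [Module k X] (aX : H ⊗[k] X →ₗ[k] X),
    (∀ x : X, aX (1 ⊗ₜ x) = x) →
    (∀ (g h : H) (x : X), aX ((g * h) ⊗ₜ x) = aX (g ⊗ₜ aX (h ⊗ₜ x))) →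
    c X aX ∘ₗ tAct (TensorProduct.lift aV) aX =
      tAct aX (TensorProduct.lift aV) ∘ₗ
        (TensorProduct.map LinearMap.id (c X aX))) ∧
  (∀ (X Y : Type u) [AddCommGroup X] [Module k X] [AddCommGroup Y] [Module k Y]
      (aX : H ⊗[k] X →ₗ[k] X) (aY : H ⊗[k] Y →ₗ[k] Y) (f : X →ₗ[k] Y),
    (∀ (h : H) (x : X), f (aX (h ⊗ₜ x)) = aY (h ⊗ₜ f x)) →
    (TensorProduct.map f LinearMap.id) ∘ₗ c X aX =
      c Y aY ∘ₗ (TensorProduct.map LinearMap.id f)) ∧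
  (∀ (X Y : Type u) [AddCommGroup X] [Module k X] [AddCommGroup Y] [Module k Y]
      (aX : H ⊗[k] X →ₗ[k] X) (aY : H ⊗[k] Y →ₗ[k] Y),
    c (X ⊗[k] Y) (tAct aX aY) =
      (TensorProduct.assoc k X Y V).symm.toLinearMap ∘ₗ
        (TensorProduct.map LinearMap.id (c Y aY)) ∘ₗ
        (TensorProduct.assoc k X V Y).toLinearMap ∘ₗ
        (TensorProduct.map (c X aX) LinearMap.id) ∘ₗ
        (TensorProduct.assoc k V X Y).symm.toLinearMap)


/-! ### Auxiliary machinery -/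

open Coalgebra HopfAlgebra

set_option maxHeartbeats 1000000
set_option synthInstance.maxHeartbeats 400000

section Aux

noncomputable def rep {M N : Type u} [AddCommGroup M] [Module k M] [AddCommGroup N] [Module k N]
    (t : M ⊗[k] N) : Finset (M × N) := (TensorProduct.exists_finset t).choose

lemma rep_eq {M N : Type u} [AddCommGroup M] [Module k M] [AddCommGroup N] [Module k N]
    (t : M ⊗[k] N) : t = ∑ p ∈ rep k t, p.1 ⊗ₜ[k] p.2 := (TensorProduct.exists_finset t).choose_spec

variable {k H}

noncomputable def toRepr (a : H) : Coalgebra.Repr k a (H × H) :=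
  ⟨rep k (Coalgebra.comul a), Prod.fst, Prod.snd, (rep_eq k _).symm⟩

lemma sum_mul_antipode (b : H) :
    ∑ p ∈ rep k (comul (R:=k) b), p.1 * antipode (R:=k) p.2 = algebraMap k H (counit b) :=
  sum_mul_antipode_eq_algebraMap_counit (toRepr b)

lemma sum_antipode_mul (b : H) :
    ∑ p ∈ rep k (comul (R:=k) b), antipode (R:=k) p.1 * p.2 = algebraMap k H (counit b) :=
  sum_antipode_mul_eq_algebraMap_counit (toRepr b)

lemma sum_counit_smul_left (b : H) :
    ∑ p ∈ rep k (comul (R:=k) b), counit (R:=k) p.2 • p.1 = b := by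
  have h := sum_tmul_counit_eq (R := k) (toRepr b)
  apply_fun (TensorProduct.rid k H) at h
  simpa [toRepr, map_sum, TensorProduct.smul_tmul'] using h

lemma sum_counit_smul_right (b : H) :
    ∑ p ∈ rep k (comul (R:=k) b), counit (R:=k) p.1 • p.2 = b := by
  have h := sum_counit_tmul_eq (R := k) (toRepr b)
  apply_fun (TensorProduct.lid k H) at h
  simpa [toRepr, map_sum] using h

lemma coassoc_sum {V : Type u} [AddCommGroup V] [Module k V] {ΔV : V →ₗ[k] V ⊗[k] H}
    (hco : YDCoassoc k H V ΔV) (v : V) :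
    ∑ p ∈ rep k (ΔV v), ∑ q ∈ rep k (ΔV p.1), q.1 ⊗ₜ[k] (q.2 ⊗ₜ[k] p.2) =
      ∑ p ∈ rep k (ΔV v), ∑ r ∈ rep k (comul (R:=k) p.2), p.1 ⊗ₜ[k] (r.1 ⊗ₜ[k] r.2) := by
  have h := LinearMap.congr_fun hco v
  simp only [LinearMap.coe_comp, Function.comp_apply, LinearEquiv.coe_coe] at h
  rw [rep_eq k (ΔV v)] at h
  simp only [map_sum, TensorProduct.map_tmul, LinearMap.id_coe, id_eq] at h
  have hL : ∑ p ∈ rep k (ΔV v), (TensorProduct.assoc k V H H) ((ΔV p.1) ⊗ₜ[k] p.2) =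
      ∑ p ∈ rep k (ΔV v), ∑ q ∈ rep k (ΔV p.1), q.1 ⊗ₜ[k] (q.2 ⊗ₜ[k] p.2) :=
    Finset.sum_congr rfl fun p _ => by
      conv_lhs => rw [rep_eq k (ΔV p.1), TensorProduct.sum_tmul, map_sum]
      simp
  have hR : ∑ p ∈ rep k (ΔV v), p.1 ⊗ₜ[k] (comul (R:=k) p.2) =
      ∑ p ∈ rep k (ΔV v), ∑ r ∈ rep k (comul (R:=k) p.2), p.1 ⊗ₜ[k] (r.1 ⊗ₜ[k] r.2) :=
    Finset.sum_congr rfl fun p _ => by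
      conv_lhs => rw [rep_eq k (comul (R:=k) p.2), TensorProduct.tmul_sum]
  rw [hL, hR] at h
  exact h

lemma coassocH_sum (b : H) :
    ∑ p ∈ rep k (comul (R:=k) b), ∑ q ∈ rep k (comul (R:=k) p.1), q.1 ⊗ₜ[k] (q.2 ⊗ₜ[k] p.2) =
      ∑ p ∈ rep k (comul (R:=k) b), ∑ r ∈ rep k (comul (R:=k) p.2), p.1 ⊗ₜ[k] (r.1 ⊗ₜ[k] r.2) := by
  refine coassoc_sum (V := H) (ΔV := comul (R:=k)) ?_ b
  have := Coalgebra.coassoc (R := k) (A := H)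
  rw [show (comul (R:=k) (A:=H)).rTensor H = TensorProduct.map (comul (R:=k)) LinearMap.id from rfl,
    show (comul (R:=k) (A:=H)).lTensor H = TensorProduct.map LinearMap.id (comul (R:=k)) from rfl] at this
  exact this

/-- `G b = ∑ S b₂ ⊗ S b₁`. -/
noncomputable def antiG : H →ₗ[k] H ⊗[k] H :=
  (TensorProduct.map (antipode (R:=k)) (antipode (R:=k))) ∘ₗ
    (TensorProduct.comm k H H).toLinearMap ∘ₗ (Coalgebra.comul (R:=k))

lemma antiG_apply (b : H) :
    antiG (k := k) b = ∑ p ∈ rep k (comul (R:=k) b), antipode (R:=k) p.2 ⊗ₜ[k] antipode (R:=k) p.1 := by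
  conv_lhs => rw [antiG, LinearMap.coe_comp, LinearMap.coe_comp, Function.comp_apply,
    Function.comp_apply, rep_eq k (comul (R:=k) b)]
  simp [map_sum]

lemma claimA (b : H) :
    ∑ q ∈ rep k (comul (R:=k) b), comul (R:=k) (antipode (R:=k) q.1) * comul (R:=k) q.2 =
      counit (R:=k) b • (1 : H ⊗[k] H) := by
  have : ∀ q : H × H, comul (R:=k) (antipode (R:=k) q.1) * comul (R:=k) q.2
      = comul (R:=k) (antipode (R:=k) q.1 * q.2) := fun q => (Bialgebra.comul_mul _ _).symm
  simp only [this]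
  rw [← map_sum, sum_antipode_mul, Algebra.algebraMap_eq_smul_one, map_smul, Bialgebra.comul_one]

lemma S2sum (b : H) :
    ∑ p ∈ rep k (comul (R:=k) b), ∑ q ∈ rep k (comul (R:=k) p.1), ∑ r ∈ rep k (comul (R:=k) p.2),
        q.1 ⊗ₜ[k] (q.2 ⊗ₜ[k] (r.1 ⊗ₜ[k] r.2)) =
      ∑ p ∈ rep k (comul (R:=k) b), ∑ q ∈ rep k (comul (R:=k) p.1), ∑ w ∈ rep k (comul (R:=k) q.2),
        q.1 ⊗ₜ[k] (w.1 ⊗ₜ[k] (w.2 ⊗ₜ[k] p.2)) := by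
  have h1 := coassocH_sum (k := k) b
  have e1 := congrArg (TensorProduct.map (LinearMap.id (M := H))
    (TensorProduct.map LinearMap.id (Coalgebra.comul (R:=k)))) h1
  simp only [map_sum, TensorProduct.map_tmul, LinearMap.id_coe, id_eq] at e1
  have e2 := congrArg (TensorProduct.map (LinearMap.id (M := H))
    ((TensorProduct.assoc k H H H).toLinearMap ∘ₗ
      TensorProduct.map (Coalgebra.comul (R:=k)) LinearMap.id)) h1
  simp only [map_sum, TensorProduct.map_tmul, LinearMap.id_coe, id_eq, LinearMap.coe_comp,
    Function.comp_apply, LinearEquiv.coe_coe] at e2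
  have hL1 : ∀ (s : Finset (H × H)),
      ∑ q ∈ s, ∑ r ∈ rep k (comul (R:=k) ((0:H), b).2), (0:H) ⊗ₜ[k] ((0:H) ⊗ₜ[k] (r.1 ⊗ₜ[k] r.2)) = 0 :=
    fun _ => by simp
  clear hL1
  -- expand e1 LHS
  have e1L : ∀ p : H × H, ∀ q : H × H, q.1 ⊗ₜ[k] (q.2 ⊗ₜ[k] comul (R:=k) p.2) =
      ∑ r ∈ rep k (comul (R:=k) p.2), q.1 ⊗ₜ[k] (q.2 ⊗ₜ[k] (r.1 ⊗ₜ[k] r.2)) := fun p q => by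
    conv_lhs => rw [rep_eq k (comul (R:=k) p.2), TensorProduct.tmul_sum, TensorProduct.tmul_sum]
  have e1R : ∀ p : H × H, ∀ r : H × H, p.1 ⊗ₜ[k] (r.1 ⊗ₜ[k] comul (R:=k) r.2) =
      ∑ w ∈ rep k (comul (R:=k) r.2), p.1 ⊗ₜ[k] (r.1 ⊗ₜ[k] (w.1 ⊗ₜ[k] w.2)) := fun p r => by
    conv_lhs => rw [rep_eq k (comul (R:=k) r.2), TensorProduct.tmul_sum, TensorProduct.tmul_sum]
  have e2L : ∀ p : H × H, ∀ q : H × H,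
      q.1 ⊗ₜ[k] ((TensorProduct.assoc k H H H) ((comul (R:=k) q.2) ⊗ₜ[k] p.2)) =
      ∑ w ∈ rep k (comul (R:=k) q.2), q.1 ⊗ₜ[k] (w.1 ⊗ₜ[k] (w.2 ⊗ₜ[k] p.2)) := fun p q => by
    conv_lhs => rw [rep_eq k (comul (R:=k) q.2), TensorProduct.sum_tmul, map_sum,
      TensorProduct.tmul_sum]
    simp
  have e2R : ∀ p : H × H, ∀ r : H × H,
      p.1 ⊗ₜ[k] ((TensorProduct.assoc k H H H) ((comul (R:=k) r.1) ⊗ₜ[k] r.2)) =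
      ∑ u ∈ rep k (comul (R:=k) r.1), p.1 ⊗ₜ[k] (u.1 ⊗ₜ[k] (u.2 ⊗ₜ[k] r.2)) := fun p r => by
    conv_lhs => rw [rep_eq k (comul (R:=k) r.1), TensorProduct.sum_tmul, map_sum,
      TensorProduct.tmul_sum]
    simp
  simp only [e1L, e1R] at e1
  simp only [e2L, e2R] at e2
  -- bridge RHS of e1 and RHS of e2
  have bridge : ∑ p ∈ rep k (comul (R:=k) b), ∑ r ∈ rep k (comul (R:=k) p.2),
        ∑ w ∈ rep k (comul (R:=k) r.2), p.1 ⊗ₜ[k] (r.1 ⊗ₜ[k] (w.1 ⊗ₜ[k] w.2)) =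
      ∑ p ∈ rep k (comul (R:=k) b), ∑ r ∈ rep k (comul (R:=k) p.2),
        ∑ u ∈ rep k (comul (R:=k) r.1), p.1 ⊗ₜ[k] (u.1 ⊗ₜ[k] (u.2 ⊗ₜ[k] r.2)) := by
    refine Finset.sum_congr rfl fun p _ => ?_
    have hp := coassocH_sum (k := k) p.2
    have := congrArg (fun t => p.1 ⊗ₜ[k] t) hp.symm
    simpa [TensorProduct.tmul_sum] using this
  rw [e1, bridge, ← e2]

lemma claimB (b : H) :
    ∑ r ∈ rep k (comul (R:=k) b), comul (R:=k) r.1 * antiG (k:=k) r.2 =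
      counit (R:=k) b • (1 : H ⊗[k] H) := by
  have expand : ∀ r : H × H, comul (R:=k) r.1 * antiG (k:=k) r.2 =
      ∑ q ∈ rep k (comul (R:=k) r.1), ∑ w ∈ rep k (comul (R:=k) r.2),
        (q.1 * antipode (R:=k) w.2) ⊗ₜ[k] (q.2 * antipode (R:=k) w.1) := fun r => by
    rw [antiG_apply]
    conv_lhs => rw [rep_eq k (comul (R:=k) r.1)]
    rw [Finset.sum_mul_sum]
    simp [Algebra.TensorProduct.tmul_mul_tmul]
  simp only [expand]
  -- χ applied to S2sum
  have e := congrArg ((TensorProduct.map (LinearMap.mul' k H) (LinearMap.mul' k H)) ∘ₗ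
    (TensorProduct.tensorTensorTensorComm k H H H H).toLinearMap ∘ₗ
    (TensorProduct.assoc k H H (H ⊗[k] H)).symm.toLinearMap ∘ₗ
    (TensorProduct.map LinearMap.id (TensorProduct.map LinearMap.id
      ((TensorProduct.map (antipode (R:=k)) (antipode (R:=k))) ∘ₗ
        (TensorProduct.comm k H H).toLinearMap)))) (S2sum (k := k) b)
  simp only [map_sum, LinearMap.coe_comp, Function.comp_apply, LinearEquiv.coe_coe,
    TensorProduct.map_tmul, LinearMap.id_coe, id_eq, TensorProduct.comm_tmul,
    TensorProduct.assoc_symm_tmul, TensorProduct.tensorTensorTensorComm_tmul,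
    LinearMap.mul'_apply] at e
  rw [e]
  have inner : ∀ p : H × H, ∀ q : H × H,
      ∑ w ∈ rep k (comul (R:=k) q.2), (q.1 * antipode (R:=k) p.2) ⊗ₜ[k] (w.1 * antipode (R:=k) w.2)
        = counit (R:=k) q.2 • ((q.1 * antipode (R:=k) p.2) ⊗ₜ[k] (1 : H)) := fun p q => by
    rw [← TensorProduct.tmul_sum, sum_mul_antipode, Algebra.algebraMap_eq_smul_one,
      TensorProduct.tmul_smul]
  have mid : ∀ p : H × H,
      ∑ q ∈ rep k (comul (R:=k) p.1), ∑ w ∈ rep k (comul (R:=k) q.2),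
        (q.1 * antipode (R:=k) p.2) ⊗ₜ[k] (w.1 * antipode (R:=k) w.2)
      = (p.1 * antipode (R:=k) p.2) ⊗ₜ[k] (1 : H) := fun p => by
    simp only [inner]
    have : ∑ q ∈ rep k (comul (R:=k) p.1),
        counit (R:=k) q.2 • ((q.1 * antipode (R:=k) p.2) ⊗ₜ[k] (1 : H)) =
        ((∑ q ∈ rep k (comul (R:=k) p.1), counit (R:=k) q.2 • q.1) * antipode (R:=k) p.2)
          ⊗ₜ[k] (1 : H) := by
      rw [Finset.sum_mul, TensorProduct.sum_tmul]
      exact Finset.sum_congr rfl fun q _ => by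
        rw [smul_mul_assoc, TensorProduct.smul_tmul']
    rw [this, sum_counit_smul_left]
  simp only [mid]
  rw [← TensorProduct.sum_tmul, sum_mul_antipode, Algebra.algebraMap_eq_smul_one,
    Algebra.TensorProduct.one_def, TensorProduct.smul_tmul']

lemma comul_antipode (a : H) :
    comul (R:=k) (antipode (R:=k) a) = antiG (k:=k) a := by
  have step1 : comul (R:=k) (antipode (R:=k) a) =
      ∑ p ∈ rep k (comul (R:=k) a), ∑ r ∈ rep k (comul (R:=k) p.2),
        comul (R:=k) (antipode (R:=k) p.1) * (comul (R:=k) r.1 * antiG (k:=k) r.2) := by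
    conv_lhs => rw [← sum_counit_smul_left (k:=k) a]
    simp only [map_sum, map_smul]
    refine Finset.sum_congr rfl fun p _ => ?_
    rw [← Finset.mul_sum, claimB, mul_smul_comm, mul_one]
  have e := congrArg ((LinearMap.mul' k (H ⊗[k] H)) ∘ₗ
    (TensorProduct.map ((Coalgebra.comul (R:=k)) ∘ₗ (antipode (R:=k)))
      ((LinearMap.mul' k (H ⊗[k] H)) ∘ₗ
        TensorProduct.map (Coalgebra.comul (R:=k)) (antiG (k:=k))))) (coassocH_sum (k := k) a)
  simp only [map_sum, LinearMap.coe_comp, Function.comp_apply, TensorProduct.map_tmul,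
    LinearMap.mul'_apply] at e
  have step3 : ∑ p ∈ rep k (comul (R:=k) a), ∑ q ∈ rep k (comul (R:=k) p.1),
      comul (R:=k) (antipode (R:=k) q.1) * (comul (R:=k) q.2 * antiG (k:=k) p.2) =
      antiG (k:=k) a := by
    have perp : ∀ p : H × H, ∑ q ∈ rep k (comul (R:=k) p.1),
        comul (R:=k) (antipode (R:=k) q.1) * (comul (R:=k) q.2 * antiG (k:=k) p.2) =
        counit (R:=k) p.1 • antiG (k:=k) p.2 := fun p => by
      have : ∀ q : H × H, comul (R:=k) (antipode (R:=k) q.1) * (comul (R:=k) q.2 * antiG (k:=k) p.2)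
          = (comul (R:=k) (antipode (R:=k) q.1) * comul (R:=k) q.2) * antiG (k:=k) p.2 :=
        fun q => (mul_assoc _ _ _).symm
      simp only [this]
      rw [← Finset.sum_mul, claimA, smul_mul_assoc, one_mul]
    simp only [perp]
    conv_rhs => rw [← sum_counit_smul_right (k:=k) a]
    simp only [map_sum, map_smul]
  rw [step1, ← e, step3]

variable {V : Type u} [AddCommGroup V] [Module k V] {ΔV : V →ₗ[k] V ⊗[k] H}

lemma counit_sum (hcu : YDCounital k H V ΔV) (v : V) :
    ∑ p ∈ rep k (ΔV v), counit (R:=k) p.2 • p.1 = v := by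
  have h := LinearMap.congr_fun hcu v
  simp only [LinearMap.coe_comp, Function.comp_apply, LinearEquiv.coe_coe, LinearMap.id_coe,
    id_eq] at h
  rw [rep_eq k (ΔV v)] at h
  simpa [map_sum] using h

lemma tAct_tmul {M N : Type u} [AddCommGroup M] [Module k M] [AddCommGroup N] [Module k N]
    (aM : H ⊗[k] M →ₗ[k] M) (aN : H ⊗[k] N →ₗ[k] N) (h : H) (x : M) (y : N) :
    tAct aM aN (h ⊗ₜ[k] (x ⊗ₜ[k] y)) =
      ∑ d ∈ rep k (comul (R:=k) h), aM (d.1 ⊗ₜ[k] x) ⊗ₜ[k] aN (d.2 ⊗ₜ[k] y) := by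
  simp only [tAct, LinearMap.coe_comp, Function.comp_apply, LinearEquiv.coe_coe,
    TensorProduct.map_tmul, LinearMap.id_coe, id_eq]
  conv_lhs => rw [rep_eq k (comul (R:=k) h), TensorProduct.sum_tmul]
  simp [map_sum]

lemma ydHB_sum {X : Type u} [AddCommGroup X] [Module k X] (aX : H ⊗[k] X →ₗ[k] X)
    {ι : Type*} (s : Finset ι) (F : ι → V) (G : ι → H) (v : V) (x : X)
    (hs : ΔV v = ∑ i ∈ s, F i ⊗ₜ[k] G i) :
    ydHalfBraiding ΔV aX (v ⊗ₜ[k] x) =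
      ∑ i ∈ s, aX (antipode (R:=k) (G i) ⊗ₜ[k] x) ⊗ₜ[k] F i := by
  simp [ydHalfBraiding, hs, TensorProduct.sum_tmul, map_sum]

lemma ydHBInv_sum {X : Type u} [AddCommGroup X] [Module k X] (aX : H ⊗[k] X →ₗ[k] X)
    {ι : Type*} (s : Finset ι) (F : ι → V) (G : ι → H) (v : V) (x : X)
    (hs : ΔV v = ∑ i ∈ s, F i ⊗ₜ[k] G i) :
    ydHalfBraidingInv ΔV aX (x ⊗ₜ[k] v) =
      ∑ i ∈ s, F i ⊗ₜ[k] aX (G i ⊗ₜ[k] x) := by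
  simp [ydHalfBraidingInv, hs, TensorProduct.sum_tmul, map_sum]

lemma invc (hco : YDCoassoc k H V ΔV) (hcu : YDCounital k H V ΔV)
    {X : Type u} [AddCommGroup X] [Module k X] (aX : H ⊗[k] X →ₗ[k] X)
    (hone : ∀ x : X, aX (1 ⊗ₜ x) = x)
    (hmul : ∀ (g h : H) (x : X), aX ((g * h) ⊗ₜ x) = aX (g ⊗ₜ aX (h ⊗ₜ x)))
    (t : V ⊗[k] X) :
    ydHalfBraidingInv ΔV aX (ydHalfBraiding ΔV aX t) = t := by
  induction t with
  | zero => simp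
  | add a b ha hb => rw [map_add, map_add, ha, hb]
  | tmul v x =>
    rw [ydHB_sum aX _ _ _ v x (rep_eq k (ΔV v)), map_sum]
    have h1 : ∀ p ∈ rep k (ΔV v),
        ydHalfBraidingInv ΔV aX (aX (antipode (R:=k) p.2 ⊗ₜ[k] x) ⊗ₜ[k] p.1) =
        ∑ q ∈ rep k (ΔV p.1), q.1 ⊗ₜ[k] aX ((q.2 * antipode (R:=k) p.2) ⊗ₜ[k] x) := fun p _ => by
      rw [ydHBInv_sum aX _ _ _ p.1 _ (rep_eq k (ΔV p.1))]
      exact Finset.sum_congr rfl fun q _ => by rw [hmul]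
    rw [Finset.sum_congr rfl h1]
    have e := congrArg (TensorProduct.map (LinearMap.id (M := V))
      (aX ∘ₗ ((TensorProduct.mk k H X).flip x) ∘ₗ (LinearMap.mul' k H) ∘ₗ
        (TensorProduct.map LinearMap.id (antipode (R:=k))))) (coassoc_sum hco v)
    simp only [map_sum, TensorProduct.map_tmul, LinearMap.id_coe, id_eq, LinearMap.coe_comp,
      Function.comp_apply, LinearMap.mul'_apply, TensorProduct.mk_apply,
      LinearMap.flip_apply] at e
    rw [e]
    have h2 : ∀ p ∈ rep k (ΔV v),
        ∑ r ∈ rep k (comul (R:=k) p.2), p.1 ⊗ₜ[k] aX ((r.1 * antipode (R:=k) r.2) ⊗ₜ[k] x) =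
        (counit (R:=k) p.2 • p.1) ⊗ₜ[k] x := fun p _ => by
      rw [← TensorProduct.tmul_sum, ← map_sum, ← TensorProduct.sum_tmul, sum_mul_antipode,
        Algebra.algebraMap_eq_smul_one, ← TensorProduct.smul_tmul', map_smul, hone,
        TensorProduct.tmul_smul, TensorProduct.smul_tmul']
    rw [Finset.sum_congr rfl h2, ← TensorProduct.sum_tmul, counit_sum hcu]

lemma cinv (hco : YDCoassoc k H V ΔV) (hcu : YDCounital k H V ΔV)
    {X : Type u} [AddCommGroup X] [Module k X] (aX : H ⊗[k] X →ₗ[k] X)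
    (hone : ∀ x : X, aX (1 ⊗ₜ x) = x)
    (hmul : ∀ (g h : H) (x : X), aX ((g * h) ⊗ₜ x) = aX (g ⊗ₜ aX (h ⊗ₜ x)))
    (t : X ⊗[k] V) :
    ydHalfBraiding ΔV aX (ydHalfBraidingInv ΔV aX t) = t := by
  induction t with
  | zero => simp
  | add a b ha hb => rw [map_add, map_add, ha, hb]
  | tmul x v =>
    rw [ydHBInv_sum aX _ _ _ v x (rep_eq k (ΔV v)), map_sum]
    have h1 : ∀ p ∈ rep k (ΔV v),
        ydHalfBraiding ΔV aX (p.1 ⊗ₜ[k] aX (p.2 ⊗ₜ[k] x)) =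
        ∑ q ∈ rep k (ΔV p.1), aX ((antipode (R:=k) q.2 * p.2) ⊗ₜ[k] x) ⊗ₜ[k] q.1 := fun p _ => by
      rw [ydHB_sum aX _ _ _ p.1 _ (rep_eq k (ΔV p.1))]
      exact Finset.sum_congr rfl fun q _ => by rw [hmul]
    rw [Finset.sum_congr rfl h1]
    have e := congrArg ((TensorProduct.comm k V X).toLinearMap ∘ₗ TensorProduct.map
      (LinearMap.id (M := V))
      (aX ∘ₗ ((TensorProduct.mk k H X).flip x) ∘ₗ (LinearMap.mul' k H) ∘ₗ
        (TensorProduct.map (antipode (R:=k)) LinearMap.id))) (coassoc_sum hco v)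
    simp only [map_sum, TensorProduct.map_tmul, LinearMap.id_coe, id_eq, LinearMap.coe_comp,
      Function.comp_apply, LinearMap.mul'_apply, TensorProduct.mk_apply, LinearEquiv.coe_coe,
      TensorProduct.comm_tmul, LinearMap.flip_apply] at e
    rw [e]
    have h2 : ∀ p ∈ rep k (ΔV v),
        ∑ r ∈ rep k (comul (R:=k) p.2), aX ((antipode (R:=k) r.1 * r.2) ⊗ₜ[k] x) ⊗ₜ[k] p.1 =
        x ⊗ₜ[k] (counit (R:=k) p.2 • p.1) := fun p _ => by
      rw [← TensorProduct.sum_tmul, ← map_sum, ← TensorProduct.sum_tmul, sum_antipode_mul,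
        Algebra.algebraMap_eq_smul_one, ← TensorProduct.smul_tmul', map_smul, hone,
        TensorProduct.smul_tmul]
    rw [Finset.sum_congr rfl h2, ← TensorProduct.tmul_sum, counit_sum hcu]

lemma ydHB_comp_eq_id (hco : YDCoassoc k H V ΔV) (hcu : YDCounital k H V ΔV)
    {X : Type u} [AddCommGroup X] [Module k X] (aX : H ⊗[k] X →ₗ[k] X)
    (hone : ∀ x : X, aX (1 ⊗ₜ x) = x)
    (hmul : ∀ (g h : H) (x : X), aX ((g * h) ⊗ₜ x) = aX (g ⊗ₜ aX (h ⊗ₜ x))) :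
    (ydHalfBraidingInv ΔV aX ∘ₗ ydHalfBraiding ΔV aX = LinearMap.id) ∧
      (ydHalfBraiding ΔV aX ∘ₗ ydHalfBraidingInv ΔV aX = LinearMap.id) :=
  ⟨LinearMap.ext fun t => invc hco hcu aX hone hmul t,
    LinearMap.ext fun t => cinv hco hcu aX hone hmul t⟩

lemma ydHB_bijective (hco : YDCoassoc k H V ΔV) (hcu : YDCounital k H V ΔV)
    {X : Type u} [AddCommGroup X] [Module k X] (aX : H ⊗[k] X →ₗ[k] X)
    (hone : ∀ x : X, aX (1 ⊗ₜ x) = x)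
    (hmul : ∀ (g h : H) (x : X), aX ((g * h) ⊗ₜ x) = aX (g ⊗ₜ aX (h ⊗ₜ x))) :
    Function.Bijective (ydHalfBraiding ΔV aX) :=
  Equiv.bijective
    (LinearEquiv.ofLinear (ydHalfBraiding ΔV aX) (ydHalfBraidingInv ΔV aX)
      (ydHB_comp_eq_id hco hcu aX hone hmul).2
      (ydHB_comp_eq_id hco hcu aX hone hmul).1 :
      (V ⊗[k] X) ≃ₗ[k] (X ⊗[k] V)).toEquiv

lemma ydHB_comul_apply (hco : YDCoassoc k H V ΔV) (hcu : YDCounital k H V ΔV) (v : V) :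
    ydHalfBraiding ΔV (LinearMap.mul' k H) (ΔV v) = (1 : H) ⊗ₜ[k] v := by
  rw [rep_eq k (ΔV v), map_sum]
  have h1 : ∀ p ∈ rep k (ΔV v),
      ydHalfBraiding ΔV (LinearMap.mul' k H) (p.1 ⊗ₜ[k] p.2) =
      ∑ q ∈ rep k (ΔV p.1), (antipode (R:=k) q.2 * p.2) ⊗ₜ[k] q.1 := fun p _ => by
    rw [ydHB_sum (LinearMap.mul' k H) _ _ _ p.1 p.2 (rep_eq k (ΔV p.1))]
    simp
  rw [Finset.sum_congr rfl h1]
  have e := congrArg ((TensorProduct.comm k V H).toLinearMap ∘ₗ TensorProduct.map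
    (LinearMap.id (M := V))
    ((LinearMap.mul' k H) ∘ₗ (TensorProduct.map (antipode (R:=k)) LinearMap.id)))
    (coassoc_sum hco v)
  simp only [map_sum, TensorProduct.map_tmul, LinearMap.id_coe, id_eq, LinearMap.coe_comp,
    Function.comp_apply, LinearMap.mul'_apply, LinearEquiv.coe_coe,
    TensorProduct.comm_tmul] at e
  rw [e]
  have h2 : ∀ p ∈ rep k (ΔV v),
      ∑ r ∈ rep k (comul (R:=k) p.2), (antipode (R:=k) r.1 * r.2) ⊗ₜ[k] p.1 =
      (1 : H) ⊗ₜ[k] (counit (R:=k) p.2 • p.1) := fun p _ => by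
    rw [← TensorProduct.sum_tmul, sum_antipode_mul, Algebra.algebraMap_eq_smul_one,
      TensorProduct.smul_tmul]
  rw [Finset.sum_congr rfl h2, ← TensorProduct.tmul_sum, counit_sum hcu]

lemma crossing_sum {aV : H →ₗ[k] V →ₗ[k] V} (hcr : YDCrossing k H V aV ΔV) (h : H) (v : V) :
    ∑ d ∈ rep k (comul (R:=k) h), ∑ p ∈ rep k (ΔV v),
        (aV d.1 p.1) ⊗ₜ[k] (d.2 * p.2) =
      ∑ d ∈ rep k (comul (R:=k) h), ∑ q ∈ rep k (ΔV (aV d.2 v)),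
        q.1 ⊗ₜ[k] (q.2 * d.1) := by
  have hh := LinearMap.congr_fun hcr (h ⊗ₜ[k] v)
  simp only [LinearMap.coe_comp, Function.comp_apply, LinearEquiv.coe_coe,
    TensorProduct.map_tmul, LinearMap.id_coe, id_eq] at hh
  rw [rep_eq k (comul (R:=k) h), rep_eq k (ΔV v)] at hh
  simp only [TensorProduct.sum_tmul, TensorProduct.tmul_sum, map_sum,
    TensorProduct.tensorTensorTensorComm_tmul, TensorProduct.map_tmul,
    TensorProduct.lift.tmul, LinearMap.mul'_apply, LinearMap.id_coe, id_eq,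
    TensorProduct.assoc_tmul, TensorProduct.comm_tmul] at hh
  have h2 : ∀ d : H × H,
      (TensorProduct.map (LinearMap.id (M := V)) (LinearMap.mul' k H))
        ((TensorProduct.assoc k V H H) ((ΔV (aV d.2 v)) ⊗ₜ[k] d.1)) =
      ∑ q ∈ rep k (ΔV (aV d.2 v)), q.1 ⊗ₜ[k] (q.2 * d.1) := fun d => by
    conv_lhs => rw [rep_eq k (ΔV (aV d.2 v)), TensorProduct.sum_tmul, map_sum, map_sum]
    simp
  simp only [h2] at hh
  rw [Finset.sum_comm]
  exact hh

lemma ydHBInv_linear {aV : H →ₗ[k] V →ₗ[k] V} (hcr : YDCrossing k H V aV ΔV)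
    {X : Type u} [AddCommGroup X] [Module k X] (aX : H ⊗[k] X →ₗ[k] X)
    (hmul : ∀ (g h : H) (x : X), aX ((g * h) ⊗ₜ x) = aX (g ⊗ₜ aX (h ⊗ₜ x))) :
    ydHalfBraidingInv ΔV aX ∘ₗ tAct aX (TensorProduct.lift aV) =
      tAct (TensorProduct.lift aV) aX ∘ₗ
        (TensorProduct.map LinearMap.id (ydHalfBraidingInv ΔV aX)) := by
  apply TensorProduct.ext'
  intro h t
  induction t with
  | zero => simp [TensorProduct.tmul_zero]
  | add a b ha hb =>
    simp only [TensorProduct.tmul_add, map_add] at ha hb ⊢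
    rw [ha, hb]
  | tmul x v =>
    simp only [LinearMap.coe_comp, Function.comp_apply, TensorProduct.map_tmul,
      LinearMap.id_coe, id_eq]
    rw [tAct_tmul aX (TensorProduct.lift aV) h x v, map_sum]
    have h1 : ∀ d ∈ rep k (comul (R:=k) h),
        ydHalfBraidingInv ΔV aX (aX (d.1 ⊗ₜ[k] x) ⊗ₜ[k] (TensorProduct.lift aV) (d.2 ⊗ₜ[k] v)) =
        ∑ q ∈ rep k (ΔV (aV d.2 v)), q.1 ⊗ₜ[k] aX ((q.2 * d.1) ⊗ₜ[k] x) := fun d _ => by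
      rw [TensorProduct.lift.tmul,
        ydHBInv_sum aX _ _ _ (aV d.2 v) _ (rep_eq k (ΔV (aV d.2 v)))]
      exact Finset.sum_congr rfl fun q _ => by rw [hmul]
    rw [Finset.sum_congr rfl h1]
    have h2 : ydHalfBraidingInv ΔV aX (x ⊗ₜ[k] v) =
        ∑ p ∈ rep k (ΔV v), p.1 ⊗ₜ[k] aX (p.2 ⊗ₜ[k] x) :=
      ydHBInv_sum aX _ _ _ v x (rep_eq k (ΔV v))
    rw [h2, TensorProduct.tmul_sum, map_sum]
    have h3 : ∀ p ∈ rep k (ΔV v),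
        tAct (TensorProduct.lift aV) aX (h ⊗ₜ[k] (p.1 ⊗ₜ[k] aX (p.2 ⊗ₜ[k] x))) =
        ∑ d ∈ rep k (comul (R:=k) h), (aV d.1 p.1) ⊗ₜ[k] aX ((d.2 * p.2) ⊗ₜ[k] x) := fun p _ => by
      rw [tAct_tmul]
      exact Finset.sum_congr rfl fun d _ => by rw [TensorProduct.lift.tmul, hmul]
    rw [Finset.sum_congr rfl h3, Finset.sum_comm]
    have e := congrArg (TensorProduct.map (LinearMap.id (M := V))
      (aX ∘ₗ ((TensorProduct.mk k H X).flip x))) (crossing_sum hcr h v)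
    simp only [map_sum, TensorProduct.map_tmul, LinearMap.id_coe, id_eq, LinearMap.coe_comp,
      Function.comp_apply, TensorProduct.mk_apply, LinearMap.flip_apply] at e
    exact e.symm

lemma ydHB_linear (hco : YDCoassoc k H V ΔV) (hcu : YDCounital k H V ΔV)
    {aV : H →ₗ[k] V →ₗ[k] V} (hcr : YDCrossing k H V aV ΔV)
    {X : Type u} [AddCommGroup X] [Module k X] (aX : H ⊗[k] X →ₗ[k] X)
    (hone : ∀ x : X, aX (1 ⊗ₜ x) = x)
    (hmul : ∀ (g h : H) (x : X), aX ((g * h) ⊗ₜ x) = aX (g ⊗ₜ aX (h ⊗ₜ x))) :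
    ydHalfBraiding ΔV aX ∘ₗ tAct (TensorProduct.lift aV) aX =
      tAct aX (TensorProduct.lift aV) ∘ₗ
        (TensorProduct.map LinearMap.id (ydHalfBraiding ΔV aX)) := by
  have hInv := ydHBInv_linear hcr aX hmul
  apply LinearMap.ext
  intro u
  have e1 := LinearMap.congr_fun hInv
    ((TensorProduct.map (LinearMap.id (M := H)) (ydHalfBraiding ΔV aX)) u)
  simp only [LinearMap.coe_comp, Function.comp_apply] at e1 ⊢
  have e2 : (TensorProduct.map (LinearMap.id (M := H)) (ydHalfBraidingInv ΔV aX))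
      ((TensorProduct.map LinearMap.id (ydHalfBraiding ΔV aX)) u) = u := by
    rw [← LinearMap.comp_apply, ← TensorProduct.map_comp,
      (ydHB_comp_eq_id hco hcu aX hone hmul).1, LinearMap.comp_id, TensorProduct.map_id,
      LinearMap.id_apply]
  rw [e2] at e1
  have := congrArg (ydHalfBraiding ΔV aX) e1
  rw [cinv hco hcu aX hone hmul] at this
  exact this.symm

lemma ydHB_natural {X Y : Type u} [AddCommGroup X] [Module k X] [AddCommGroup Y] [Module k Y]
    (aX : H ⊗[k] X →ₗ[k] X) (aY : H ⊗[k] Y →ₗ[k] Y) (f : X →ₗ[k] Y)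
    (hf : ∀ (h : H) (x : X), f (aX (h ⊗ₜ x)) = aY (h ⊗ₜ f x)) :
    (TensorProduct.map f LinearMap.id) ∘ₗ ydHalfBraiding ΔV aX =
      ydHalfBraiding ΔV aY ∘ₗ (TensorProduct.map LinearMap.id f) := by
  apply TensorProduct.ext'
  intro v x
  simp only [LinearMap.coe_comp, Function.comp_apply, TensorProduct.map_tmul,
    LinearMap.id_coe, id_eq]
  rw [ydHB_sum aX _ _ _ v x (rep_eq k (ΔV v)), map_sum,
    ydHB_sum aY _ _ _ v (f x) (rep_eq k (ΔV v))]
  exact Finset.sum_congr rfl fun p _ => by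
    simp [hf]

lemma ydHB_tensor (hco : YDCoassoc k H V ΔV)
    {X Y : Type u} [AddCommGroup X] [Module k X] [AddCommGroup Y] [Module k Y]
    (aX : H ⊗[k] X →ₗ[k] X) (aY : H ⊗[k] Y →ₗ[k] Y) :
    ydHalfBraiding ΔV (tAct aX aY) =
      (TensorProduct.assoc k X Y V).symm.toLinearMap ∘ₗ
        (TensorProduct.map LinearMap.id (ydHalfBraiding ΔV aY)) ∘ₗ
        (TensorProduct.assoc k X V Y).toLinearMap ∘ₗ
        (TensorProduct.map (ydHalfBraiding ΔV aX) LinearMap.id) ∘ₗ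
        (TensorProduct.assoc k V X Y).symm.toLinearMap := by
  apply TensorProduct.ext'
  intro v t
  induction t with
  | zero => simp [TensorProduct.tmul_zero]
  | add a b ha hb => simp only [TensorProduct.tmul_add, map_add] at ha hb ⊢; rw [ha, hb]
  | tmul x y =>
    -- LHS
    rw [ydHB_sum (tAct aX aY) _ _ _ v (x ⊗ₜ[k] y) (rep_eq k (ΔV v))]
    have hL : ∀ p ∈ rep k (ΔV v),
        tAct aX aY (antipode (R:=k) p.2 ⊗ₜ[k] (x ⊗ₜ[k] y)) ⊗ₜ[k] p.1 =
        ∑ w ∈ rep k (comul (R:=k) p.2),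
          (aX (antipode (R:=k) w.2 ⊗ₜ[k] x) ⊗ₜ[k] aY (antipode (R:=k) w.1 ⊗ₜ[k] y))
            ⊗ₜ[k] p.1 := fun p _ => by
      rw [tAct_tmul, TensorProduct.sum_tmul]
      have := congrArg (((TensorProduct.mk k (X ⊗[k] Y) V).flip p.1) ∘ₗ
        (TensorProduct.map (aX ∘ₗ ((TensorProduct.mk k H X).flip x))
          (aY ∘ₗ ((TensorProduct.mk k H Y).flip y))))
        ((rep_eq k (comul (R:=k) (antipode (R:=k) p.2))).symm.trans
          ((comul_antipode p.2).trans (antiG_apply p.2)))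
      simpa [map_sum] using this
    rw [Finset.sum_congr rfl hL]
    -- RHS
    simp only [LinearMap.coe_comp, Function.comp_apply, LinearEquiv.coe_coe,
      TensorProduct.assoc_symm_tmul, TensorProduct.map_tmul, LinearMap.id_coe, id_eq]
    rw [ydHB_sum aX _ _ _ v x (rep_eq k (ΔV v)), TensorProduct.sum_tmul]
    simp only [map_sum]
    have hR : ∀ p ∈ rep k (ΔV v),
        (TensorProduct.assoc k X Y V).symm
          ((TensorProduct.map LinearMap.id (ydHalfBraiding ΔV aY))
            ((TensorProduct.assoc k X V Y)
              ((aX (antipode (R:=k) p.2 ⊗ₜ[k] x) ⊗ₜ[k] p.1) ⊗ₜ[k] y))) =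
        ∑ q ∈ rep k (ΔV p.1),
          (aX (antipode (R:=k) p.2 ⊗ₜ[k] x) ⊗ₜ[k] aY (antipode (R:=k) q.2 ⊗ₜ[k] y))
            ⊗ₜ[k] q.1 := fun p _ => by
      rw [TensorProduct.assoc_tmul, TensorProduct.map_tmul,
        ydHB_sum aY _ _ _ p.1 y (rep_eq k (ΔV p.1)), TensorProduct.tmul_sum, map_sum]
      simp
    rw [Finset.sum_congr rfl hR]
    have e := congrArg ((TensorProduct.comm k V (X ⊗[k] Y)).toLinearMap ∘ₗ
      TensorProduct.map (LinearMap.id (M := V))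
        ((TensorProduct.map (aX ∘ₗ ((TensorProduct.mk k H X).flip x))
          (aY ∘ₗ ((TensorProduct.mk k H Y).flip y))) ∘ₗ
          (TensorProduct.map (antipode (R:=k)) (antipode (R:=k))) ∘ₗ
          (TensorProduct.comm k H H).toLinearMap)) (coassoc_sum hco v)
    simp only [map_sum, TensorProduct.map_tmul, LinearMap.id_coe, id_eq, LinearMap.coe_comp,
      Function.comp_apply, LinearEquiv.coe_coe, TensorProduct.comm_tmul,
      TensorProduct.mk_apply, LinearMap.flip_apply] at e
    exact e.symm

lemma part2 {aV : H →ₗ[k] V →ₗ[k] V}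
    (hco : YDCoassoc k H V ΔV) (hcu : YDCounital k H V ΔV) (hcr : YDCrossing k H V aV ΔV) :
    IsHalfBraiding V aV (fun X _ _ aX => ydHalfBraiding ΔV aX) ∧
      (∀ v : V, ydHalfBraiding ΔV (LinearMap.mul' k H) (ΔV v) = (1 : H) ⊗ₜ v) := by
  refine ⟨⟨?_, ?_, ?_, ?_⟩, fun v => ydHB_comul_apply hco hcu v⟩
  · intro X _ _ aX hone hmul
    exact ydHB_bijective hco hcu aX hone hmul
  · intro X _ _ aX hone hmul
    exact ydHB_linear hco hcu hcr aX hone hmul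
  · intro X Y _ _ _ _ aX aY f hf
    exact ydHB_natural aX aY f hf
  · intro X Y _ _ _ _ aX aY
    exact ydHB_tensor hco aX aY

lemma mul'_one : ∀ x : H, LinearMap.mul' k H ((1:H) ⊗ₜ[k] x) = x := by
  simp [LinearMap.mul'_apply]

lemma mul'_mul : ∀ (g h x : H), LinearMap.mul' k H ((g * h) ⊗ₜ[k] x) =
    LinearMap.mul' k H (g ⊗ₜ[k] LinearMap.mul' k H (h ⊗ₜ[k] x)) := by
  simp [LinearMap.mul'_apply, mul_assoc]

lemma part3 {W : Type u} [AddCommGroup W] [Module k W]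
    {aV : H →ₗ[k] V →ₗ[k] V} {aW : H →ₗ[k] W →ₗ[k] W}
    {ΔW : W →ₗ[k] W ⊗[k] H}
    (hcoV : YDCoassoc k H V ΔV) (hcuV : YDCounital k H V ΔV)
    (hcoW : YDCoassoc k H W ΔW) (hcuW : YDCounital k H W ΔW)
    (f : V →ₗ[k] W) :
    (∀ (X : Type u) [AddCommGroup X] [Module k X] (aX : H ⊗[k] X →ₗ[k] X),
        (∀ x : X, aX (1 ⊗ₜ x) = x) →
        (∀ (g h : H) (x : X), aX ((g * h) ⊗ₜ x) = aX (g ⊗ₜ aX (h ⊗ₜ x))) →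
        (TensorProduct.map LinearMap.id f) ∘ₗ ydHalfBraiding ΔV aX =
          ydHalfBraiding ΔW aX ∘ₗ (TensorProduct.map f LinearMap.id)) ↔
      (TensorProduct.map f LinearMap.id) ∘ₗ ΔV = ΔW ∘ₗ f := by
  constructor
  · intro hcomm
    have hH := hcomm H (LinearMap.mul' k H) mul'_one mul'_mul
    apply LinearMap.ext
    intro v
    have e1 := LinearMap.congr_fun hH (ΔV v)
    simp only [LinearMap.coe_comp, Function.comp_apply] at e1 ⊢
    rw [ydHB_comul_apply hcoV hcuV v, TensorProduct.map_tmul, LinearMap.id_coe, id_eq] at e1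
    -- e1 : 1 ⊗ₜ f v = ydHalfBraiding ΔW mul' ((map f id) (ΔV v))
    have e2 := congrArg (ydHalfBraidingInv ΔW (LinearMap.mul' k H)) e1
    rw [invc hcoW hcuW (LinearMap.mul' k H) mul'_one mul'_mul] at e2
    -- e2 : ydHBInv ΔW mul' (1 ⊗ₜ f v) = (map f id) (ΔV v)
    rw [← e2, ydHBInv_sum (LinearMap.mul' k H) _ _ _ (f v) (1:H) (rep_eq k (ΔW (f v)))]
    conv_rhs => rw [rep_eq k (ΔW (f v))]
    exact Finset.sum_congr rfl fun q _ => by simp [LinearMap.mul'_apply]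
  · intro hcomod X _ _ aX hone hmul
    apply TensorProduct.ext'
    intro v x
    have hf : ΔW (f v) = ∑ p ∈ rep k (ΔV v), f p.1 ⊗ₜ[k] p.2 := by
      have := (LinearMap.congr_fun hcomod v).symm
      simp only [LinearMap.coe_comp, Function.comp_apply] at this
      rw [this]
      conv_lhs => rw [rep_eq k (ΔV v), map_sum]
      simp
    simp only [LinearMap.coe_comp, Function.comp_apply, TensorProduct.map_tmul,
      LinearMap.id_coe, id_eq]
    rw [ydHB_sum aX _ _ _ v x (rep_eq k (ΔV v)), map_sum, ydHB_sum aX _ _ _ (f v) x hf]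
    exact Finset.sum_congr rfl fun p _ => by simp

lemma tAct_mm (h : H) (t : H ⊗[k] H) :
    tAct (LinearMap.mul' k H) (LinearMap.mul' k H) (h ⊗ₜ[k] t) = comul (R:=k) h * t := by
  induction t with
  | zero => simp [TensorProduct.tmul_zero]
  | add a b ha hb => rw [TensorProduct.tmul_add, map_add, ha, hb, mul_add]
  | tmul y z =>
    rw [tAct_tmul]
    conv_rhs => rw [rep_eq k (comul (R:=k) h), Finset.sum_mul]
    exact Finset.sum_congr rfl fun d _ => by
      simp [LinearMap.mul'_apply, Algebra.TensorProduct.tmul_mul_tmul]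

lemma tAct_mm_one : ∀ t : H ⊗[k] H, tAct (LinearMap.mul' k H) (LinearMap.mul' k H)
    ((1:H) ⊗ₜ[k] t) = t := fun t => by
  rw [tAct_mm, Bialgebra.comul_one, one_mul]

lemma tAct_mm_mul : ∀ (g h : H) (t : H ⊗[k] H),
    tAct (LinearMap.mul' k H) (LinearMap.mul' k H) ((g * h) ⊗ₜ[k] t) =
      tAct (LinearMap.mul' k H) (LinearMap.mul' k H)
        (g ⊗ₜ[k] tAct (LinearMap.mul' k H) (LinearMap.mul' k H) (h ⊗ₜ[k] t)) := fun g h t => by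
  rw [tAct_mm, tAct_mm, tAct_mm, Bialgebra.comul_mul, mul_assoc]

lemma rhoV (a : H) (t : V ⊗[k] H) :
    (TensorProduct.map LinearMap.id (LinearMap.mul' k H))
        ((TensorProduct.assoc k V H H)
          ((TensorProduct.comm k H (V ⊗[k] H)) (a ⊗ₜ[k] t))) =
      (TensorProduct.map LinearMap.id (LinearMap.mulRight k a)) t := by
  induction t with
  | zero => simp [TensorProduct.tmul_zero]
  | add x y hx hy => rw [TensorProduct.tmul_add, map_add]; simp only [map_add, hx, hy]
  | tmul u b => simp [LinearMap.mul'_apply]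

lemma kk_tmul (a b : k) : (a ⊗ₜ[k] b : k ⊗[k] k) = (1:k) ⊗ₜ[k] (a * b) := by
  calc (a ⊗ₜ[k] b : k ⊗[k] k) = (a • (1:k)) ⊗ₜ[k] b := by rw [smul_eq_mul, mul_one]
  _ = a • ((1:k) ⊗ₜ[k] b) := by rw [TensorProduct.smul_tmul']
  _ = (1:k) ⊗ₜ[k] (a • b) := by rw [TensorProduct.tmul_smul]
  _ = (1:k) ⊗ₜ[k] (a * b) := by rw [smul_eq_mul]

lemma part1 {aV : H →ₗ[k] V →ₗ[k] V}
    (c : ∀ (X : Type u) [AddCommGroup X] [Module k X],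
      (H ⊗[k] X →ₗ[k] X) → (V ⊗[k] X →ₗ[k] X ⊗[k] V))
    (hc : IsHalfBraiding V aV c) :
    ∃! ΔV : V →ₗ[k] V ⊗[k] H,
      (∀ v : V, c H (LinearMap.mul' k H) (ΔV v) = (1 : H) ⊗ₜ v) ∧
      YDCoassoc k H V ΔV ∧ YDCounital k H V ΔV ∧ YDCrossing k H V aV ΔV ∧
      (∀ (X : Type u) [AddCommGroup X] [Module k X] (aX : H ⊗[k] X →ₗ[k] X),
        (∀ x : X, aX (1 ⊗ₜ x) = x) →
        (∀ (g h : H) (x : X), aX ((g * h) ⊗ₜ x) = aX (g ⊗ₜ aX (h ⊗ₜ x))) →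
        c X aX = ydHalfBraiding ΔV aX) := by
  classical
  obtain ⟨hbij, hlin, hnat, htens⟩ := hc
  have cHbij := hbij H (LinearMap.mul' k H) (mul'_one (k := k)) (mul'_mul (k := k))
  let e : (V ⊗[k] H) ≃ₗ[k] (H ⊗[k] V) :=
    LinearEquiv.ofBijective (c H (LinearMap.mul' k H)) cHbij
  have ec : ∀ t : V ⊗[k] H, e t = c H (LinearMap.mul' k H) t := fun t => rfl
  let Δ : V →ₗ[k] V ⊗[k] H := e.symm.toLinearMap ∘ₗ (TensorProduct.mk k H V 1)
  have P0 : ∀ v : V, c H (LinearMap.mul' k H) (Δ v) = (1 : H) ⊗ₜ v := fun v => by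
    rw [← ec]
    exact e.apply_symm_apply _
  have P1' : ∀ (a : H) (w : V),
      c H (LinearMap.mul' k H)
        ((TensorProduct.map LinearMap.id (LinearMap.mulRight k a)) (Δ w)) = a ⊗ₜ[k] w := by
    intro a w
    have hρ := hnat H H (LinearMap.mul' k H) (LinearMap.mul' k H) (LinearMap.mulRight k a)
      (fun h x => by simp [LinearMap.mul'_apply, mul_assoc])
    have := LinearMap.congr_fun hρ (Δ w)
    simp only [LinearMap.coe_comp, Function.comp_apply] at this
    rw [P0 w] at this
    rw [← this]
    simp [LinearMap.mul'_apply]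
  have P1sym : ∀ (a : H) (w : V),
      e.symm (a ⊗ₜ[k] w) = (TensorProduct.map LinearMap.id (LinearMap.mulRight k a)) (Δ w) := by
    intro a w
    rw [LinearEquiv.symm_apply_eq, ec]
    exact (P1' a w).symm
  -- the trivial H-module structure on k
  let aK : H ⊗[k] k →ₗ[k] k :=
    (Coalgebra.counit (R:=k)) ∘ₗ (TensorProduct.rid k H).toLinearMap
  have aKapp : ∀ (h : H) (l : k), aK (h ⊗ₜ l) = l * counit (R:=k) h := fun h l => by
    simp [aK, TensorProduct.rid_tmul]
  have aKone : ∀ l : k, aK ((1:H) ⊗ₜ l) = l := fun l => by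
    simp [aKapp]
  have aKmul : ∀ (g h : H) (l : k), aK ((g * h) ⊗ₜ l) = aK (g ⊗ₜ aK (h ⊗ₜ l)) := fun g h l => by
    simp [aKapp]
    ring
  have cKbij := hbij k aK aKone aKmul
  set γf : V → V := fun v => (TensorProduct.lid k V) (c k aK (v ⊗ₜ (1:k))) with hγf
  have hck : ∀ v, c k aK (v ⊗ₜ (1:k)) = (1:k) ⊗ₜ γf v := fun v => by
    rw [show ((1:k) ⊗ₜ[k] γf v : k ⊗[k] V) = (TensorProduct.lid k V).symm (γf v) from
      (TensorProduct.lid_symm_apply _).symm, hγf, LinearEquiv.symm_apply_apply]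
  have γinj : Function.Injective γf := by
    have hcomp : γf = ⇑(TensorProduct.lid k V) ∘ ⇑(c k aK) ∘ ⇑(TensorProduct.rid k V).symm := by
      funext v
      simp [hγf, TensorProduct.rid_symm_apply]
    rw [hcomp]
    exact (TensorProduct.lid k V).injective.comp
      (cKbij.injective.comp (TensorProduct.rid k V).symm.injective)
  have gint : ∀ (h : H) (l : k),
      (TensorProduct.lid k k).symm.toLinearMap (aK (h ⊗ₜ l)) =
        tAct aK aK (h ⊗ₜ (TensorProduct.lid k k).symm.toLinearMap l) := by
    intro h l
    simp only [LinearEquiv.coe_coe, TensorProduct.lid_symm_apply]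
    rw [tAct_tmul]
    have : ∀ d : H × H, aK (d.1 ⊗ₜ (1:k)) ⊗ₜ[k] aK (d.2 ⊗ₜ l) =
        (1:k) ⊗ₜ[k] (l * (counit (R:=k) d.1 * counit (R:=k) d.2)) := fun d => by
      rw [aKapp, aKapp, one_mul, kk_tmul]
      ring_nf
    simp only [this]
    rw [← TensorProduct.tmul_sum]
    have hs' : ∑ d ∈ rep k (comul (R:=k) h), counit (R:=k) d.1 * counit (R:=k) d.2 =
        counit (R:=k) h := by
      have hs := congrArg (Coalgebra.counit (R:=k)) (sum_counit_smul_right (k := k) h)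
      rw [map_sum] at hs
      simpa [smul_eq_mul] using hs
    rw [aKapp, ← Finset.mul_sum, hs']
  have idem : ∀ v, γf (γf v) = γf v := by
    intro v
    have hg := hnat k (k ⊗[k] k) aK (tAct aK aK) (TensorProduct.lid k k).symm.toLinearMap gint
    have e1 := LinearMap.congr_fun hg (v ⊗ₜ (1:k))
    simp only [LinearMap.coe_comp, Function.comp_apply, hck, TensorProduct.map_tmul,
      LinearMap.id_coe, id_eq, LinearEquiv.coe_coe, TensorProduct.lid_symm_apply] at e1
    have e2 := LinearMap.congr_fun (htens k k aK aK) (v ⊗ₜ ((1:k) ⊗ₜ (1:k)))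
    simp only [LinearMap.coe_comp, Function.comp_apply, LinearEquiv.coe_coe,
      TensorProduct.assoc_symm_tmul, TensorProduct.map_tmul, LinearMap.id_coe, id_eq,
      hck, TensorProduct.assoc_tmul] at e2
    have e3 := e1.trans e2
    have := congrArg ((TensorProduct.lid k V).toLinearMap ∘ₗ
      TensorProduct.map (TensorProduct.lid k k).toLinearMap LinearMap.id) e3
    simpa using this.symm
  have γid : ∀ v, γf v = v := fun v => γinj (idem v)
  have counital : YDCounital k H V Δ := by
    apply LinearMap.ext
    intro v
    simp only [LinearMap.coe_comp, Function.comp_apply, LinearEquiv.coe_coe, LinearMap.id_coe,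
      id_eq]
    have hε := hnat H k (LinearMap.mul' k H) aK (Coalgebra.counit (R:=k))
      (fun h x => by simp [aKapp, LinearMap.mul'_apply]; ring)
    have e1 := LinearMap.congr_fun hε (Δ v)
    simp only [LinearMap.coe_comp, Function.comp_apply] at e1
    rw [P0 v, TensorProduct.map_tmul] at e1
    simp only [LinearMap.id_coe, id_eq, Bialgebra.counit_one] at e1
    set w := (TensorProduct.rid k V) ((TensorProduct.map LinearMap.id (Coalgebra.counit (R:=k))) (Δ v)) with hw
    have hwt : (TensorProduct.map LinearMap.id (Coalgebra.counit (R:=k))) (Δ v) = w ⊗ₜ (1:k) := by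
      rw [hw, ← TensorProduct.rid_symm_apply, LinearEquiv.symm_apply_apply]
    rw [hwt, hck w, γid w] at e1
    -- e1 : (1:k) ⊗ₜ v = (1:k) ⊗ₜ w
    have := congrArg (TensorProduct.lid k V) e1
    simpa using this.symm
  have crossing : YDCrossing k H V aV Δ := by
    apply TensorProduct.ext'
    intro h v
    simp only [LinearMap.coe_comp, Function.comp_apply, LinearEquiv.coe_coe,
      TensorProduct.map_tmul, LinearMap.id_coe, id_eq]
    have hA : (TensorProduct.map (TensorProduct.lift aV) (LinearMap.mul' k H))
        ((TensorProduct.tensorTensorTensorComm k H H V H)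
          ((comul (R:=k) h) ⊗ₜ[k] (Δ v))) =
        tAct (TensorProduct.lift aV) (LinearMap.mul' k H) (h ⊗ₜ[k] Δ v) := by
      simp [tAct]
    have hB : (TensorProduct.map LinearMap.id (LinearMap.mul' k H))
        ((TensorProduct.assoc k V H H)
          ((TensorProduct.comm k H (V ⊗[k] H))
            ((TensorProduct.map LinearMap.id Δ)
              ((TensorProduct.map LinearMap.id (TensorProduct.lift aV))
                ((TensorProduct.assoc k H H V) ((comul (R:=k) h) ⊗ₜ[k] v)))))) =
        ∑ d ∈ rep k (comul (R:=k) h),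
          (TensorProduct.map LinearMap.id (LinearMap.mulRight k d.1)) (Δ (aV d.2 v)) := by
      conv_lhs => rw [rep_eq k (comul (R:=k) h), TensorProduct.sum_tmul, map_sum, map_sum,
        map_sum, map_sum, map_sum, map_sum]
      refine Finset.sum_congr rfl fun d _ => ?_
      rw [TensorProduct.assoc_tmul, TensorProduct.map_tmul, TensorProduct.map_tmul]
      simp only [LinearMap.id_coe, id_eq, TensorProduct.lift.tmul]
      exact rhoV d.1 (Δ (aV d.2 v))
    rw [hA, hB]
    apply cHbij.injective
    have hc1 : c H (LinearMap.mul' k H)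
        (tAct (TensorProduct.lift aV) (LinearMap.mul' k H) (h ⊗ₜ[k] Δ v)) =
        ∑ d ∈ rep k (comul (R:=k) h), d.1 ⊗ₜ[k] aV d.2 v := by
      have := LinearMap.congr_fun
        (hlin H (LinearMap.mul' k H) (mul'_one (k := k)) (mul'_mul (k := k))) (h ⊗ₜ[k] Δ v)
      simp only [LinearMap.coe_comp, Function.comp_apply, TensorProduct.map_tmul,
        LinearMap.id_coe, id_eq] at this
      rw [P0 v] at this
      rw [this, tAct_tmul]
      exact Finset.sum_congr rfl fun d _ => by simp [LinearMap.mul'_apply]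
    rw [hc1, map_sum]
    exact (Finset.sum_congr rfl fun d _ => P1' d.1 (aV d.2 v)).symm
  have coassoc : YDCoassoc k H V Δ := by
    apply LinearMap.ext
    intro v
    simp only [LinearMap.coe_comp, Function.comp_apply, LinearEquiv.coe_coe]
    apply (hbij (H ⊗[k] H) (tAct (LinearMap.mul' k H) (LinearMap.mul' k H))
      (tAct_mm_one (k := k)) (tAct_mm_mul (k := k))).injective
    have hnatδ := hnat H (H ⊗[k] H) (LinearMap.mul' k H)
      (tAct (LinearMap.mul' k H) (LinearMap.mul' k H)) (Coalgebra.comul (R:=k))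
      (fun h x => by rw [tAct_mm]; simp [LinearMap.mul'_apply, Bialgebra.comul_mul])
    have eR := LinearMap.congr_fun hnatδ (Δ v)
    simp only [LinearMap.coe_comp, Function.comp_apply] at eR
    rw [P0 v, TensorProduct.map_tmul] at eR
    simp only [LinearMap.id_coe, id_eq, Bialgebra.comul_one] at eR
    rw [← eR]
    -- now compute LHS via the tensor axiom
    have eL := LinearMap.congr_fun (htens H H (LinearMap.mul' k H) (LinearMap.mul' k H))
      ((TensorProduct.assoc k V H H) ((TensorProduct.map Δ LinearMap.id) (Δ v)))
    simp only [LinearMap.coe_comp, Function.comp_apply, LinearEquiv.coe_coe] at eL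
    rw [LinearEquiv.symm_apply_apply] at eL
    have hw : (TensorProduct.map (c H (LinearMap.mul' k H)) LinearMap.id)
        ((TensorProduct.map Δ LinearMap.id) (Δ v)) =
        ∑ p ∈ rep k (Δ v), ((1:H) ⊗ₜ[k] p.1) ⊗ₜ[k] p.2 := by
      conv_lhs => rw [rep_eq k (Δ v), map_sum, map_sum]
      refine Finset.sum_congr rfl fun p _ => ?_
      rw [TensorProduct.map_tmul, TensorProduct.map_tmul]
      simp only [LinearMap.id_coe, id_eq]
      rw [P0 p.1]
    rw [hw, map_sum] at eL
    have hw2 : ∑ p ∈ rep k (Δ v),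
        (TensorProduct.assoc k H V H) (((1:H) ⊗ₜ[k] p.1) ⊗ₜ[k] p.2) =
        (1:H) ⊗ₜ[k] (Δ v) := by
      conv_rhs => rw [rep_eq k (Δ v), TensorProduct.tmul_sum]
      exact Finset.sum_congr rfl fun p _ => by rw [TensorProduct.assoc_tmul]
    rw [hw2, TensorProduct.map_tmul] at eL
    simp only [LinearMap.id_coe, id_eq] at eL
    rw [P0 v, TensorProduct.assoc_symm_tmul] at eL
    rw [eL, Algebra.TensorProduct.one_def]
  have cHvone : ∀ v : V, c H (LinearMap.mul' k H) (v ⊗ₜ[k] (1:H)) =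
      ∑ p ∈ rep k (Δ v), antipode (R:=k) p.2 ⊗ₜ[k] p.1 := by
    intro v
    have h1 : e.symm (∑ p ∈ rep k (Δ v), antipode (R:=k) p.2 ⊗ₜ[k] p.1) = v ⊗ₜ[k] (1:H) := by
      rw [map_sum]
      simp only [P1sym]
      have expand : ∀ p ∈ rep k (Δ v),
          (TensorProduct.map LinearMap.id (LinearMap.mulRight k (antipode (R:=k) p.2)))
            (Δ p.1) =
          ∑ q ∈ rep k (Δ p.1), q.1 ⊗ₜ[k] (q.2 * antipode (R:=k) p.2) := fun p _ => by
        conv_lhs => rw [rep_eq k (Δ p.1), map_sum]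
        simp
      rw [Finset.sum_congr rfl expand]
      have e4 := congrArg (TensorProduct.map (LinearMap.id (M := V))
        ((LinearMap.mul' k H) ∘ₗ (TensorProduct.map LinearMap.id (antipode (R:=k)))))
        (coassoc_sum coassoc v)
      simp only [map_sum, TensorProduct.map_tmul, LinearMap.id_coe, id_eq, LinearMap.coe_comp,
        Function.comp_apply, LinearMap.mul'_apply] at e4
      rw [e4]
      have collapse : ∀ p ∈ rep k (Δ v),
          ∑ r ∈ rep k (comul (R:=k) p.2), p.1 ⊗ₜ[k] (r.1 * antipode (R:=k) r.2) =
          (counit (R:=k) p.2 • p.1) ⊗ₜ[k] (1:H) := fun p _ => by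
        rw [← TensorProduct.tmul_sum, sum_mul_antipode, Algebra.algebraMap_eq_smul_one,
          TensorProduct.tmul_smul, TensorProduct.smul_tmul']
      rw [Finset.sum_congr rfl collapse, ← TensorProduct.sum_tmul, counit_sum counital]
    rw [← h1, ← ec]
    exact e.apply_symm_apply _
  have recon : ∀ (X : Type u) [AddCommGroup X] [Module k X] (aX : H ⊗[k] X →ₗ[k] X),
      (∀ x : X, aX (1 ⊗ₜ x) = x) →
      (∀ (g h : H) (x : X), aX ((g * h) ⊗ₜ x) = aX (g ⊗ₜ aX (h ⊗ₜ x))) →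
      c X aX = ydHalfBraiding Δ aX := by
    intro X _ _ aX hone hmul
    apply TensorProduct.ext'
    intro v x
    have hn := LinearMap.congr_fun (hnat H X (LinearMap.mul' k H) aX
      (aX ∘ₗ ((TensorProduct.mk k H X).flip x))
      (fun g y => by simp [LinearMap.mul'_apply, hmul])) (v ⊗ₜ[k] (1:H))
    simp only [LinearMap.coe_comp, Function.comp_apply, TensorProduct.map_tmul,
      LinearMap.id_coe, id_eq, TensorProduct.mk_apply, LinearMap.flip_apply] at hn
    rw [cHvone v, map_sum, hone x] at hn
    rw [← hn, ydHB_sum aX _ _ _ v x (rep_eq k (Δ v))]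
    exact Finset.sum_congr rfl fun p _ => by simp
  refine ⟨Δ, ⟨P0, coassoc, counital, crossing, recon⟩, ?_⟩
  intro Δ' hΔ'
  apply LinearMap.ext
  intro v
  apply cHbij.injective
  rw [hΔ'.1 v, P0 v]

end Aux
/-- Theorem `thm:C-moll-Messe` for `π = 1`: the category of
left-left Yetter-Drinfeld modules over a Hopf algebra `H` is isomorphic to the
Drinfeld center of the category of left `H`-modules.  A half-braiding `(V, c)`
determines a unique Yetter-Drinfeld coaction `ΔV` with
`ΔV v = c⁻¹_H (1 ⊗ v)`, reconstructing `c`; conversely a Yetter-Drinfeld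
coaction determines a half-braiding `c_X(v ⊗ x) = s(v_{(1)}) x ⊗ v_{(V)}`; and
a `H`-linear map is a morphism of half-braidings iff it is a morphism of
Yetter-Drinfeld modules. -/
theorem yd_iso_center
    (V : Type u) [AddCommGroup V] [Module k V]
    (aV : H →ₗ[k] V →ₗ[k] V) (haV : IsAction k H V aV) :
    -- from the center to Yetter-Drinfeld modules, and back
    (∀ c, IsHalfBraiding V aV c →
      ∃! ΔV : V →ₗ[k] V ⊗[k] H,
        (∀ v : V, c H (LinearMap.mul' k H) (ΔV v) = (1 : H) ⊗ₜ v) ∧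
        YDCoassoc k H V ΔV ∧ YDCounital k H V ΔV ∧ YDCrossing k H V aV ΔV ∧
        (∀ (X : Type u) [AddCommGroup X] [Module k X] (aX : H ⊗[k] X →ₗ[k] X),
          (∀ x : X, aX (1 ⊗ₜ x) = x) →
          (∀ (g h : H) (x : X), aX ((g * h) ⊗ₜ x) = aX (g ⊗ₜ aX (h ⊗ₜ x))) →
          c X aX = ydHalfBraiding ΔV aX)) ∧
    -- from Yetter-Drinfeld modules to the center, and back
    (∀ ΔV : V →ₗ[k] V ⊗[k] H,
      YDCoassoc k H V ΔV → YDCounital k H V ΔV → YDCrossing k H V aV ΔV →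
      IsHalfBraiding V aV (fun X _ _ aX => ydHalfBraiding ΔV aX) ∧
      (∀ v : V, ydHalfBraiding ΔV (LinearMap.mul' k H) (ΔV v) = (1 : H) ⊗ₜ v)) ∧
    -- the correspondence of morphisms
    (∀ (W : Type u) [AddCommGroup W] [Module k W]
        (aW : H →ₗ[k] W →ₗ[k] W) (_ : IsAction k H W aW)
        (ΔV : V →ₗ[k] V ⊗[k] H) (ΔW : W →ₗ[k] W ⊗[k] H),
      YDCoassoc k H V ΔV → YDCounital k H V ΔV → YDCrossing k H V aV ΔV →
      YDCoassoc k H W ΔW → YDCounital k H W ΔW → YDCrossing k H W aW ΔW →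
      ∀ f : V →ₗ[k] W, (∀ (h : H) (v : V), f (aV h v) = aW h (f v)) →
        ((∀ (X : Type u) [AddCommGroup X] [Module k X] (aX : H ⊗[k] X →ₗ[k] X),
            (∀ x : X, aX (1 ⊗ₜ x) = x) →
            (∀ (g h : H) (x : X), aX ((g * h) ⊗ₜ x) = aX (g ⊗ₜ aX (h ⊗ₜ x))) →
            (TensorProduct.map LinearMap.id f) ∘ₗ ydHalfBraiding ΔV aX =
              ydHalfBraiding ΔW aX ∘ₗ (TensorProduct.map f LinearMap.id)) ↔
          (TensorProduct.map f LinearMap.id) ∘ₗ ΔV = ΔW ∘ₗ f)) := by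
  refine ⟨fun c hc => part1 c hc, fun ΔV hco hcu hcr => part2 hco hcu hcr, ?_⟩
  intro W _ _ aW _ ΔV ΔW hcoV hcuV _ hcoW hcuW _ f _
  exact part3 (aV := aV) (aW := aW) hcoV hcuV hcoW hcuW f
end

section
/- Let C be a balanced (strict) monoidal category with braiding c and twist θ. Let U ∈ C be an object with a left dual U* via unit b_U: 1 → U ⊗ U* and counit d_U: U* ⊗ U → 1 satisfying the ribbon compatibility (U ⊗ θ_{U*}) ∘ b_U = (θ_U ⊗ U*) ∘ b_U. Define b'_U = (U* ⊗ θ_U) ∘ c_{U,U*} ∘ b_U : 1 → U* ⊗ U and d'_U = d_U ∘ c_{U,U*} ∘ (θ_U ⊗ U*) : U ⊗ U* → 1. Then (b'_U, d'_U) exhibits U as a left dual of U*, i.e. (d'_U ⊗ U) ∘ (U ⊗ b'_U) = id_U and (U* ⊗ d'_U) ∘ (b'_U ⊗ U*) = id_{U*}. -/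
open CategoryTheory MonoidalCategory

/-- in a balanced monoidal category (braided with a natural twist
`θ` satisfying the balancing axiom), if `U` has a left dual `U*` via `(b_U, d_U)`
satisfying the ribbon compatibility `(U ⊗ θ_{U*}) ∘ b_U = (θ_U ⊗ U*) ∘ b_U`, then
the reversed pairing `b'_U = (U* ⊗ θ_U) ∘ c_{U,U*} ∘ b_U`,
`d'_U = d_U ∘ c_{U,U*} ∘ (θ_U ⊗ U*)` exhibits `U` as a left dual of `U*`. -/
theorem reversed_duality {C : Type*} [Category C] [MonoidalCategory C]
    [BraidedCategory C]
    (θ : ∀ X : C, X ⟶ X)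
    (θiso : ∀ X : C, IsIso (θ X))
    (θnat : ∀ {X Y : C} (f : X ⟶ Y), f ≫ θ Y = θ X ≫ f)
    (θbal : ∀ X Y : C, θ (X ⊗ Y) = (θ X ⊗ₘ θ Y) ≫ (β_ X Y).hom ≫ (β_ Y X).hom)
    (U Ustar : C) (b : 𝟙_ C ⟶ U ⊗ Ustar) (d : Ustar ⊗ U ⟶ 𝟙_ C)
    (tri₁ : (λ_ U).inv ≫ (b ▷ U) ≫ (α_ U Ustar U).hom ≫ (U ◁ d) ≫ (ρ_ U).hom = 𝟙 U)
    (tri₂ : (ρ_ Ustar).inv ≫ (Ustar ◁ b) ≫ (α_ Ustar U Ustar).inv ≫ (d ▷ Ustar) ≫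
      (λ_ Ustar).hom = 𝟙 Ustar)
    (ribbon : b ≫ (U ◁ θ Ustar) = b ≫ (θ U ▷ Ustar)) :
    let b' : 𝟙_ C ⟶ Ustar ⊗ U := b ≫ (β_ U Ustar).hom ≫ (Ustar ◁ θ U)
    let d' : U ⊗ Ustar ⟶ 𝟙_ C := (θ U ▷ Ustar) ≫ (β_ U Ustar).hom ≫ d
    -- `(b', d')` exhibits `U` as a left dual of `U*`:
    ((λ_ Ustar).inv ≫ (b' ▷ Ustar) ≫ (α_ Ustar U Ustar).hom ≫ (Ustar ◁ d') ≫
        (ρ_ Ustar).hom = 𝟙 Ustar) ∧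
    ((ρ_ U).inv ≫ (U ◁ b') ≫ (α_ U Ustar U).inv ≫ (d' ▷ U) ≫ (λ_ U).hom = 𝟙 U) := by
  intro b' d'
  haveI := θiso U
  letI ep : ExactPairing U Ustar :=
    { coevaluation' := b
      evaluation' := d
      coevaluation_evaluation' := by
        rw [← cancel_epi (ρ_ Ustar).inv, ← cancel_mono (λ_ Ustar).hom]
        simpa using tri₂
      evaluation_coevaluation' := by
        rw [← cancel_epi (λ_ U).inv, ← cancel_mono (ρ_ U).hom]
        simpa using tri₁ }
  -- the swapped exact pairing from mathlib
  have sw1 : (b ≫ (β_ Ustar U).inv) ▷ Ustar ≫ (α_ Ustar U Ustar).hom ≫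
      Ustar ◁ ((β_ U Ustar).hom ≫ d) = (λ_ Ustar).hom ≫ (ρ_ Ustar).inv :=
    by with_unfolding_all exact @ExactPairing.evaluation_coevaluation' C _ _ Ustar U (BraidedCategory.exactPairing_swap U Ustar)
  have sw2 : U ◁ (b ≫ (β_ Ustar U).inv) ≫ (α_ U Ustar U).inv ≫
      ((β_ U Ustar).hom ≫ d) ▷ U = (ρ_ U).hom ≫ (λ_ U).inv :=
    by with_unfolding_all exact @ExactPairing.coevaluation_evaluation' C _ _ Ustar U (BraidedCategory.exactPairing_swap U Ustar)
  -- θ at the unit is the identity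
  have hθ1 : θ (𝟙_ C) = 𝟙 (𝟙_ C) := by
    haveI := θiso (𝟙_ C)
    have h := θbal (𝟙_ C) (𝟙_ C)
    have hn := θnat (λ_ (𝟙_ C)).hom
    rw [h] at hn
    simp [braiding_tensorUnit_left, ← MonoidalCategory.unitors_equal,
      MonoidalCategory.tensorHom_def] at hn
    rw [MonoidalCategory.unitors_equal, Iso.inv_hom_id_assoc] at hn
    rw [← cancel_epi (θ (𝟙_ C)), Category.comp_id]
    exact hn.symm
  -- key identity (*)
  have key : b ≫ (θ U ▷ Ustar) ≫ (θ U ▷ Ustar) ≫ (β_ U Ustar).hom ≫ (β_ Ustar U).hom = b := by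
    have h := θnat b
    rw [hθ1, Category.id_comp, θbal, tensorHom_def'] at h
    calc b ≫ (θ U ▷ Ustar) ≫ (θ U ▷ Ustar) ≫ (β_ U Ustar).hom ≫ (β_ Ustar U).hom
        = (b ≫ U ◁ θ Ustar) ≫ (θ U ▷ Ustar) ≫ (β_ U Ustar).hom ≫ (β_ Ustar U).hom := by
          rw [ribbon]; simp only [Category.assoc]
      _ = b := by simpa only [Category.assoc] using h
  -- rewrite b' through the swapped coevaluation
  have hb' : b' = (b ≫ (β_ Ustar U).inv) ≫ (Ustar ◁ inv (θ U)) := by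
    show b ≫ (β_ U Ustar).hom ≫ (Ustar ◁ θ U) = _
    rw [← cancel_mono (Ustar ◁ θ U), ← cancel_mono (β_ Ustar U).hom]
    simp only [Category.assoc, ← MonoidalCategory.whiskerLeft_comp, IsIso.inv_hom_id,
      MonoidalCategory.whiskerLeft_id, Category.comp_id, Iso.inv_hom_id, Category.id_comp]
    rw [← BraidedCategory.braiding_naturality_left_assoc (θ U ≫ θ U) Ustar]
    simpa only [comp_whiskerRight, Category.assoc] using key
  constructor
  · -- Goal 1
    rw [hb']
    simp only [d', comp_whiskerRight, MonoidalCategory.whiskerLeft_comp, whisker_assoc,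
      Category.assoc, Iso.inv_hom_id_assoc]
    rw [← MonoidalCategory.whiskerLeft_comp_assoc, ← comp_whiskerRight,
      IsIso.inv_hom_id, id_whiskerRight, MonoidalCategory.whiskerLeft_id, Category.id_comp]
    simp only [comp_whiskerRight, MonoidalCategory.whiskerLeft_comp, Category.assoc] at sw1
    rw [reassoc_of% sw1]
    simp
  · -- Goal 2
    rw [hb']
    simp only [d', comp_whiskerRight, MonoidalCategory.whiskerLeft_comp, Category.assoc]
    rw [associator_inv_naturality_right_assoc, whisker_exchange_assoc, whisker_exchange_assoc,
      whisker_exchange_assoc, MonoidalCategory.leftUnitor_naturality,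
      ← associator_inv_naturality_left_assoc, whisker_exchange_assoc, whisker_exchange_assoc,
      ← rightUnitor_inv_naturality_assoc]
    simp only [comp_whiskerRight, MonoidalCategory.whiskerLeft_comp, Category.assoc] at sw2
    rw [reassoc_of% sw2]
    simp
end

section
/- Let C be a balanced strict monoidal category. Let U, V ∈ C have good left duals (i.e. left duals U*, V* such that the ribbon condition (U ⊗ θ_{U*}) ∘ b_U = (θ_U ⊗ U*) ∘ b_U holds, and likewise for V, and θ_{U*} = (θ_U)* , θ_{V*} = (θ_V)*). Equip U⊗V with the left dual V*⊗U* via b_{U⊗V} = (U ⊗ b_V ⊗ U*) ∘ b_U and d_{U⊗V} = d_U ∘ (U* ⊗ d_V ⊗ U) (suitably bracketed). Then V*⊗U* is a good left dual of U⊗V: θ_{V*⊗U*} = (θ_{U⊗V})*. -/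
open CategoryTheory MonoidalCategory

/-- The transpose (mate) of an endomorphism `f : X ⟶ X` with respect to a left
dual pairing `b : 𝟙 ⟶ X ⊗ Y`, `d : Y ⊗ X ⟶ 𝟙`. -/
noncomputable def mateEndo {C : Type*} [Category C] [MonoidalCategory C] {X Y : C}
    (b : 𝟙_ C ⟶ X ⊗ Y) (d : Y ⊗ X ⟶ 𝟙_ C) (f : X ⟶ X) : Y ⟶ Y :=
  (ρ_ Y).inv ≫ (Y ◁ b) ≫ (Y ◁ (f ▷ Y)) ≫ (α_ Y X Y).inv ≫ (d ▷ Y) ≫ (λ_ Y).hom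

section Auxiliary

open BraidedCategory

variable {C : Type*} [Category C] [MonoidalCategory C]

/-- A morphism satisfying the coevaluation-side characterization of the mate is
the mate (only the second triangle identity is needed). -/
lemma mateEndo_unique {X Y : C}
    (b : 𝟙_ C ⟶ X ⊗ Y) (d : Y ⊗ X ⟶ 𝟙_ C)
    (tri : (ρ_ Y).inv ≫ (Y ◁ b) ≫ (α_ Y X Y).inv ≫ (d ▷ Y) ≫ (λ_ Y).hom = 𝟙 Y)
    (f : X ⟶ X) (g : Y ⟶ Y) (h : b ≫ (X ◁ g) = b ≫ (f ▷ Y)) :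
    g = mateEndo b d f := by
  have : mateEndo b d f
      = (ρ_ Y).inv ≫ (Y ◁ (b ≫ (X ◁ g))) ≫ (α_ Y X Y).inv ≫ (d ▷ Y) ≫ (λ_ Y).hom := by
    rw [h, mateEndo]
    simp [MonoidalCategory.whiskerLeft_comp]
  rw [this]
  simp only [MonoidalCategory.whiskerLeft_comp, Category.assoc]
  rw [associator_inv_naturality_right_assoc, whisker_exchange_assoc,
    MonoidalCategory.id_whiskerLeft]
  simp only [Category.assoc, Iso.inv_hom_id, Category.comp_id]
  rw [← Category.assoc, ← Category.assoc, ← Category.assoc, ← Category.assoc]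
  rw [show ((((ρ_ Y).inv ≫ Y ◁ b) ≫ (α_ Y X Y).inv) ≫ d ▷ Y) ≫ (λ_ Y).hom = 𝟙 Y by
    simpa using tri, Category.id_comp]

/-- The second triangle identity for the induced pairing on a tensor product. -/
lemma tensor_tri₂ (U Ud V Vd : C)
    (bU : 𝟙_ C ⟶ U ⊗ Ud) (dU : Ud ⊗ U ⟶ 𝟙_ C)
    (bV : 𝟙_ C ⟶ V ⊗ Vd) (dV : Vd ⊗ V ⟶ 𝟙_ C)
    (triU₂ : (ρ_ Ud).inv ≫ (Ud ◁ bU) ≫ (α_ Ud U Ud).inv ≫ (dU ▷ Ud) ≫ (λ_ Ud).hom = 𝟙 Ud)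
    (triV₂ : (ρ_ Vd).inv ≫ (Vd ◁ bV) ≫ (α_ Vd V Vd).inv ≫ (dV ▷ Vd) ≫ (λ_ Vd).hom = 𝟙 Vd) :
    (ρ_ (Vd ⊗ Ud)).inv ≫
      ((Vd ⊗ Ud) ◁ (bU ≫ (U ◁ ((λ_ Ud).inv ≫ (bV ▷ Ud))) ≫ (U ◁ (α_ V Vd Ud).hom) ≫
        (α_ U V (Vd ⊗ Ud)).inv)) ≫
      (α_ (Vd ⊗ Ud) (U ⊗ V) (Vd ⊗ Ud)).inv ≫
      (((α_ Vd Ud (U ⊗ V)).hom ≫ (Vd ◁ (α_ Ud U V).inv) ≫ (Vd ◁ (dU ▷ V)) ≫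
        (Vd ◁ (λ_ V).hom) ≫ dV) ▷ (Vd ⊗ Ud)) ≫ (λ_ (Vd ⊗ Ud)).hom = 𝟙 (Vd ⊗ Ud) := by
  calc
    _ = 𝟙 _ ⊗≫ Vd ◁ Ud ◁ bU ⊗≫
        Vd ◁ ((Ud ⊗ U) ◁ ((λ_ Ud).inv ≫ bV ▷ Ud) ≫ dU ▷ ((V ⊗ Vd) ⊗ Ud)) ⊗≫
        dV ▷ (Vd ⊗ Ud) ⊗≫ 𝟙 _ := by monoidal
    _ = 𝟙 _ ⊗≫ Vd ◁ Ud ◁ bU ⊗≫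
        Vd ◁ (dU ▷ Ud ≫ 𝟙_ C ◁ ((λ_ Ud).inv ≫ bV ▷ Ud)) ⊗≫
        dV ▷ (Vd ⊗ Ud) ⊗≫ 𝟙 _ := by rw [whisker_exchange]
    _ = 𝟙 _ ⊗≫ Vd ◁ ((ρ_ Ud).inv ≫ Ud ◁ bU ≫ (α_ Ud U Ud).inv ≫ dU ▷ Ud ≫ (λ_ Ud).hom) ⊗≫
        ((ρ_ Vd).inv ≫ Vd ◁ bV ≫ (α_ Vd V Vd).inv ≫ dV ▷ Vd ≫ (λ_ Vd).hom) ▷ Ud ⊗≫ 𝟙 _ := by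
      monoidal
    _ = 𝟙 (Vd ⊗ Ud) := by rw [triU₂, triV₂]; monoidal

/-- Sliding a pair of twists through the nested coevaluations. -/
lemma ribbon_tensor (U Ud V Vd : C) (bU : 𝟙_ C ⟶ U ⊗ Ud) (bV : 𝟙_ C ⟶ V ⊗ Vd)
    (tU : U ⟶ U) (tUd : Ud ⟶ Ud) (tV : V ⟶ V) (tVd : Vd ⟶ Vd)
    (ribU : bU ≫ (U ◁ tUd) = bU ≫ (tU ▷ Ud))
    (ribV : bV ≫ (V ◁ tVd) = bV ≫ (tV ▷ Vd)) :
    (bU ≫ (U ◁ ((λ_ Ud).inv ≫ (bV ▷ Ud))) ≫ (U ◁ (α_ V Vd Ud).hom) ≫ (α_ U V (Vd ⊗ Ud)).inv) ≫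
      ((tU ⊗ₘ tV) ▷ (Vd ⊗ Ud)) =
    (bU ≫ (U ◁ ((λ_ Ud).inv ≫ (bV ▷ Ud))) ≫ (U ◁ (α_ V Vd Ud).hom) ≫ (α_ U V (Vd ⊗ Ud)).inv) ≫
      ((U ⊗ V) ◁ (tVd ⊗ₘ tUd)) := by
  calc
    _ = 𝟙 _ ⊗≫ bU ⊗≫ U ◁ ((bV ≫ tV ▷ Vd) ▷ Ud) ⊗≫ tU ▷ ((V ⊗ Vd) ⊗ Ud) ⊗≫ 𝟙 _ := by
        rw [tensorHom_def']; monoidal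
    _ = 𝟙 _ ⊗≫ bU ⊗≫ U ◁ ((bV ≫ V ◁ tVd) ▷ Ud) ⊗≫ tU ▷ ((V ⊗ Vd) ⊗ Ud) ⊗≫ 𝟙 _ := by
        rw [← ribV]
    _ = 𝟙 _ ⊗≫ bU ⊗≫ (U ◁ ((λ_ Ud).inv ≫ (bV ≫ V ◁ tVd) ▷ Ud) ≫ tU ▷ ((V ⊗ Vd) ⊗ Ud)) ⊗≫
        𝟙 _ := by monoidal
    _ = 𝟙 _ ⊗≫ bU ⊗≫ (tU ▷ Ud ≫ U ◁ ((λ_ Ud).inv ≫ (bV ≫ V ◁ tVd) ▷ Ud)) ⊗≫ 𝟙 _ := by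
        rw [whisker_exchange]
    _ = 𝟙 _ ⊗≫ (bU ≫ tU ▷ Ud) ⊗≫ U ◁ ((bV ≫ V ◁ tVd) ▷ Ud) ⊗≫ 𝟙 _ := by monoidal
    _ = 𝟙 _ ⊗≫ (bU ≫ U ◁ tUd) ⊗≫ U ◁ ((bV ≫ V ◁ tVd) ▷ Ud) ⊗≫ 𝟙 _ := by rw [← ribU]
    _ = 𝟙 _ ⊗≫ bU ⊗≫ U ◁ (𝟙_ C ◁ tUd ≫ (bV ≫ V ◁ tVd) ▷ Ud) ⊗≫ 𝟙 _ := by monoidal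
    _ = 𝟙 _ ⊗≫ bU ⊗≫ U ◁ ((bV ≫ V ◁ tVd) ▷ Ud ≫ (V ⊗ Vd) ◁ tUd) ⊗≫ 𝟙 _ := by
        rw [whisker_exchange]
    _ = _ := by rw [MonoidalCategory.tensorHom_def]; monoidal

variable [BraidedCategory C]

/-- Sliding the double braiding through the nested coevaluations. -/
lemma slide_double (U Ud V Vd : C) (bU : 𝟙_ C ⟶ U ⊗ Ud) (bV : 𝟙_ C ⟶ V ⊗ Vd) :
    (bU ≫ (U ◁ ((λ_ Ud).inv ≫ (bV ▷ Ud))) ≫ (U ◁ (α_ V Vd Ud).hom) ≫ (α_ U V (Vd ⊗ Ud)).inv) ≫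
      (((β_ U V).hom ≫ (β_ V U).hom) ▷ (Vd ⊗ Ud)) =
    (bU ≫ (U ◁ ((λ_ Ud).inv ≫ (bV ▷ Ud))) ≫ (U ◁ (α_ V Vd Ud).hom) ≫ (α_ U V (Vd ⊗ Ud)).inv) ≫
      ((U ⊗ V) ◁ ((β_ Vd Ud).hom ≫ (β_ Ud Vd).hom)) := by
  calc
    _ = 𝟙 _ ⊗≫ bU ⊗≫ (U ◁ bV) ▷ Ud ⊗≫ ((β_ U V).hom ▷ Vd) ▷ Ud ⊗≫
        (β_ V U).hom ▷ (Vd ⊗ Ud) ⊗≫ 𝟙 _ := by monoidal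
    _ = 𝟙 _ ⊗≫ bU ⊗≫ (U ◁ bV) ▷ Ud ⊗≫ ((β_ U V).hom ▷ Vd) ▷ Ud ⊗≫
        (V ◁ ((β_ U Vd).hom ≫ (β_ U Vd).inv)) ▷ Ud ⊗≫ (β_ V U).hom ▷ (Vd ⊗ Ud) ⊗≫ 𝟙 _ := by
        rw [Iso.hom_inv_id]; monoidal
    _ = 𝟙 _ ⊗≫ bU ⊗≫ (U ◁ bV ≫ (β_ U (V ⊗ Vd)).hom) ▷ Ud ⊗≫ (V ◁ (β_ U Vd).inv) ▷ Ud ⊗≫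
        (β_ V U).hom ▷ (Vd ⊗ Ud) ⊗≫ 𝟙 _ := by rw [braiding_tensor_right_hom]; monoidal
    _ = 𝟙 _ ⊗≫ bU ⊗≫ ((β_ U (𝟙_ C)).hom ≫ bV ▷ U) ▷ Ud ⊗≫ (V ◁ (β_ U Vd).inv) ▷ Ud ⊗≫
        (β_ V U).hom ▷ (Vd ⊗ Ud) ⊗≫ 𝟙 _ := by rw [braiding_naturality_right]
    _ = 𝟙 _ ⊗≫ (𝟙_ C ◁ bU ≫ bV ▷ (U ⊗ Ud)) ⊗≫ (V ◁ (β_ U Vd).inv) ▷ Ud ⊗≫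
        (β_ V U).hom ▷ (Vd ⊗ Ud) ⊗≫ 𝟙 _ := by rw [braiding_tensorUnit_right]; monoidal
    _ = 𝟙 _ ⊗≫ (bV ▷ (𝟙_ C) ≫ (V ⊗ Vd) ◁ bU) ⊗≫ (V ◁ (β_ U Vd).inv) ▷ Ud ⊗≫
        (β_ V U).hom ▷ (Vd ⊗ Ud) ⊗≫ 𝟙 _ := by rw [whisker_exchange]
    _ = 𝟙 _ ⊗≫ bV ⊗≫ V ◁ (Vd ◁ bU) ⊗≫ V ◁ ((β_ U Vd).inv ▷ Ud) ⊗≫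
        V ◁ (U ◁ ((β_ Ud Vd).inv ≫ (β_ Ud Vd).hom)) ⊗≫ (β_ V U).hom ▷ (Vd ⊗ Ud) ⊗≫ 𝟙 _ := by
        rw [Iso.inv_hom_id]; monoidal
    _ = 𝟙 _ ⊗≫ bV ⊗≫ V ◁ (Vd ◁ bU ≫ (β_ (U ⊗ Ud) Vd).inv) ⊗≫ V ◁ (U ◁ (β_ Ud Vd).hom) ⊗≫
        (β_ V U).hom ▷ (Vd ⊗ Ud) ⊗≫ 𝟙 _ := by rw [braiding_tensor_left_inv]; monoidal
    _ = 𝟙 _ ⊗≫ bV ⊗≫ V ◁ ((β_ (𝟙_ C) Vd).inv ≫ bU ▷ Vd) ⊗≫ V ◁ (U ◁ (β_ Ud Vd).hom) ⊗≫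
        (β_ V U).hom ▷ (Vd ⊗ Ud) ⊗≫ 𝟙 _ := by rw [braiding_inv_naturality_right]
    _ = 𝟙 _ ⊗≫ bV ⊗≫ V ◁ (bU ▷ Vd) ⊗≫
        ((V ⊗ U) ◁ (β_ Ud Vd).hom ≫ (β_ V U).hom ▷ (Vd ⊗ Ud)) ⊗≫ 𝟙 _ := by
        rw [braiding_inv_tensorUnit_left]; monoidal
    _ = 𝟙 _ ⊗≫ bV ⊗≫ V ◁ (bU ▷ Vd) ⊗≫
        ((β_ V U).hom ▷ (Ud ⊗ Vd) ≫ (U ⊗ V) ◁ (β_ Ud Vd).hom) ⊗≫ 𝟙 _ := by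
        rw [whisker_exchange]
    _ = 𝟙 _ ⊗≫ bV ⊗≫ V ◁ (bU ▷ Vd) ⊗≫ ((β_ V U).hom ▷ Ud) ▷ Vd ⊗≫
        (U ◁ ((β_ V Ud).hom ≫ (β_ V Ud).inv)) ▷ Vd ⊗≫ (U ⊗ V) ◁ (β_ Ud Vd).hom ⊗≫ 𝟙 _ := by
        rw [Iso.hom_inv_id]; monoidal
    _ = 𝟙 _ ⊗≫ bV ⊗≫ (V ◁ bU ≫ (β_ V (U ⊗ Ud)).hom) ▷ Vd ⊗≫ (U ◁ (β_ V Ud).inv) ▷ Vd ⊗≫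
        (U ⊗ V) ◁ (β_ Ud Vd).hom ⊗≫ 𝟙 _ := by rw [braiding_tensor_right_hom]; monoidal
    _ = 𝟙 _ ⊗≫ bV ⊗≫ ((β_ V (𝟙_ C)).hom ≫ bU ▷ V) ▷ Vd ⊗≫ (U ◁ (β_ V Ud).inv) ▷ Vd ⊗≫
        (U ⊗ V) ◁ (β_ Ud Vd).hom ⊗≫ 𝟙 _ := by rw [braiding_naturality_right]
    _ = 𝟙 _ ⊗≫ (𝟙_ C ◁ bV ≫ bU ▷ (V ⊗ Vd)) ⊗≫ (U ◁ (β_ V Ud).inv) ▷ Vd ⊗≫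
        (U ⊗ V) ◁ (β_ Ud Vd).hom ⊗≫ 𝟙 _ := by rw [braiding_tensorUnit_right]; monoidal
    _ = 𝟙 _ ⊗≫ (bU ▷ (𝟙_ C) ≫ (U ⊗ Ud) ◁ bV) ⊗≫ (U ◁ (β_ V Ud).inv) ▷ Vd ⊗≫
        (U ⊗ V) ◁ (β_ Ud Vd).hom ⊗≫ 𝟙 _ := by rw [whisker_exchange]
    _ = 𝟙 _ ⊗≫ bU ⊗≫ U ◁ (Ud ◁ bV) ⊗≫ U ◁ ((β_ V Ud).inv ▷ Vd) ⊗≫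
        U ◁ (V ◁ ((β_ Vd Ud).inv ≫ (β_ Vd Ud).hom)) ⊗≫ (U ⊗ V) ◁ (β_ Ud Vd).hom ⊗≫ 𝟙 _ := by
        rw [Iso.inv_hom_id]; monoidal
    _ = 𝟙 _ ⊗≫ bU ⊗≫ U ◁ (Ud ◁ bV ≫ (β_ (V ⊗ Vd) Ud).inv) ⊗≫ U ◁ (V ◁ (β_ Vd Ud).hom) ⊗≫
        (U ⊗ V) ◁ (β_ Ud Vd).hom ⊗≫ 𝟙 _ := by rw [braiding_tensor_left_inv]; monoidal
    _ = 𝟙 _ ⊗≫ bU ⊗≫ U ◁ ((β_ (𝟙_ C) Ud).inv ≫ bV ▷ Ud) ⊗≫ U ◁ (V ◁ (β_ Vd Ud).hom) ⊗≫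
        (U ⊗ V) ◁ (β_ Ud Vd).hom ⊗≫ 𝟙 _ := by rw [braiding_inv_naturality_right]
    _ = _ := by rw [braiding_inv_tensorUnit_left]; monoidal

end Auxiliary

/-- in a balanced monoidal category, if `U` and `V` have good left
duals `U*`, `V*` (left duals satisfying the ribbon condition and
`θ_{U*} = (θ_U)*`, `θ_{V*} = (θ_V)*`), then `V* ⊗ U*`, with the induced pairing,
is a good left dual of `U ⊗ V`: `θ_{V*⊗U*} = (θ_{U⊗V})*`. -/
theorem tensor_good_dual {C : Type*} [Category C] [MonoidalCategory C]
    [BraidedCategory C]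
    (θ : ∀ X : C, X ⟶ X)
    (θiso : ∀ X : C, IsIso (θ X))
    (θnat : ∀ {X Y : C} (f : X ⟶ Y), f ≫ θ Y = θ X ≫ f)
    (θbal : ∀ X Y : C, θ (X ⊗ Y) = (θ X ⊗ₘ θ Y) ≫ (β_ X Y).hom ≫ (β_ Y X).hom)
    (U Ud V Vd : C)
    (bU : 𝟙_ C ⟶ U ⊗ Ud) (dU : Ud ⊗ U ⟶ 𝟙_ C)
    (bV : 𝟙_ C ⟶ V ⊗ Vd) (dV : Vd ⊗ V ⟶ 𝟙_ C)
    (triU₁ : (λ_ U).inv ≫ (bU ▷ U) ≫ (α_ U Ud U).hom ≫ (U ◁ dU) ≫ (ρ_ U).hom = 𝟙 U)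
    (triU₂ : (ρ_ Ud).inv ≫ (Ud ◁ bU) ≫ (α_ Ud U Ud).inv ≫ (dU ▷ Ud) ≫ (λ_ Ud).hom = 𝟙 Ud)
    (triV₁ : (λ_ V).inv ≫ (bV ▷ V) ≫ (α_ V Vd V).hom ≫ (V ◁ dV) ≫ (ρ_ V).hom = 𝟙 V)
    (triV₂ : (ρ_ Vd).inv ≫ (Vd ◁ bV) ≫ (α_ Vd V Vd).inv ≫ (dV ▷ Vd) ≫ (λ_ Vd).hom = 𝟙 Vd)
    (ribbonU : bU ≫ (U ◁ θ Ud) = bU ≫ (θ U ▷ Ud))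
    (ribbonV : bV ≫ (V ◁ θ Vd) = bV ≫ (θ V ▷ Vd))
    (goodU : θ Ud = mateEndo bU dU (θ U))
    (goodV : θ Vd = mateEndo bV dV (θ V)) :
    let bUV : 𝟙_ C ⟶ (U ⊗ V) ⊗ (Vd ⊗ Ud) :=
      bU ≫ (U ◁ ((λ_ Ud).inv ≫ (bV ▷ Ud))) ≫ (U ◁ (α_ V Vd Ud).hom) ≫
        (α_ U V (Vd ⊗ Ud)).inv
    let dUV : (Vd ⊗ Ud) ⊗ (U ⊗ V) ⟶ 𝟙_ C :=
      (α_ Vd Ud (U ⊗ V)).hom ≫ (Vd ◁ (α_ Ud U V).inv) ≫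
        (Vd ◁ (dU ▷ V)) ≫ (Vd ◁ (λ_ V).hom) ≫ dV
    θ (Vd ⊗ Ud) = mateEndo bUV dUV (θ (U ⊗ V)) := by
  intro bUV dUV
  have key : bUV ≫ ((U ⊗ V) ◁ θ (Vd ⊗ Ud)) = bUV ≫ (θ (U ⊗ V) ▷ (Vd ⊗ Ud)) := by
    rw [θbal Vd Ud, θbal U V]
    calc bUV ≫ ((U ⊗ V) ◁ ((θ Vd ⊗ₘ θ Ud) ≫ (β_ Vd Ud).hom ≫ (β_ Ud Vd).hom))
        = (bUV ≫ ((U ⊗ V) ◁ (θ Vd ⊗ₘ θ Ud))) ≫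
            ((U ⊗ V) ◁ ((β_ Vd Ud).hom ≫ (β_ Ud Vd).hom)) := by
          simp only [MonoidalCategory.whiskerLeft_comp, Category.assoc]
      _ = (bUV ≫ ((θ U ⊗ₘ θ V) ▷ (Vd ⊗ Ud))) ≫
            ((U ⊗ V) ◁ ((β_ Vd Ud).hom ≫ (β_ Ud Vd).hom)) := by
          rw [← ribbon_tensor U Ud V Vd bU bV (θ U) (θ Ud) (θ V) (θ Vd) ribbonU ribbonV]
      _ = (bUV ≫ ((U ⊗ V) ◁ ((β_ Vd Ud).hom ≫ (β_ Ud Vd).hom))) ≫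
            ((θ U ⊗ₘ θ V) ▷ (Vd ⊗ Ud)) := by
          simp only [Category.assoc]
          rw [← whisker_exchange]
      _ = (bUV ≫ ((((β_ U V).hom ≫ (β_ V U).hom)) ▷ (Vd ⊗ Ud))) ≫
            ((θ U ⊗ₘ θ V) ▷ (Vd ⊗ Ud)) := by
          rw [← slide_double U Ud V Vd bU bV]
      _ = bUV ≫ (((θ U ⊗ₘ θ V) ≫ (β_ U V).hom ≫ (β_ V U).hom) ▷ (Vd ⊗ Ud)) := by
          simp only [Category.assoc, ← comp_whiskerRight]
          congr 2
          simp [BraidedCategory.braiding_naturality_assoc]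
  exact mateEndo_unique bUV dUV
    (tensor_tri₂ U Ud V Vd bU dU bV dV triU₂ triV₂) (θ (U ⊗ V)) (θ (Vd ⊗ Ud)) key
end

section
/- Let C be a balanced strict monoidal category. Let N(C) be the full monoidal subcategory of objects admitting a good left dual (a left dual satisfying the ribbon condition (U ⊗ θ_{U*})∘b_U = (θ_U ⊗ U*)∘b_U and θ_{U*} = (θ_U)*). Then N(C) is a ribbon category (balanced with compatible left duals for all objects, closed under tensor product and duals), and every ribbon monoidal subcategory of C is contained in N(C). -/
open CategoryTheory MonoidalCategory

/-- `U` has a *good left dual*: a left dual satisfying the ribbon condition and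
`θ_{U*} = (θ_U)*`. -/
def HasGoodDual {C : Type*} [Category C] [MonoidalCategory C]
    (θ : ∀ X : C, X ⟶ X) (U : C) : Prop :=
  ∃ (Ud : C) (b : 𝟙_ C ⟶ U ⊗ Ud) (d : Ud ⊗ U ⟶ 𝟙_ C),
    ((λ_ U).inv ≫ (b ▷ U) ≫ (α_ U Ud U).hom ≫ (U ◁ d) ≫ (ρ_ U).hom = 𝟙 U) ∧
    ((ρ_ Ud).inv ≫ (Ud ◁ b) ≫ (α_ Ud U Ud).inv ≫ (d ▷ Ud) ≫ (λ_ Ud).hom = 𝟙 Ud) ∧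
    (b ≫ (U ◁ θ Ud) = b ≫ (θ U ▷ Ud)) ∧
    (θ Ud = mateEndo b d (θ U))

namespace GoodDualAux

open BraidedCategory

set_option maxHeartbeats 1000000

variable {C : Type*} [Category C] [MonoidalCategory C]

theorem mate_eq {U D : C} (b : 𝟙_ C ⟶ U ⊗ D) (d : D ⊗ U ⟶ 𝟙_ C)
    (zig2 : (ρ_ D).inv ≫ (D ◁ b) ≫ (α_ D U D).inv ≫ (d ▷ D) ≫ (λ_ D).hom = 𝟙 D)
    {f : U ⟶ U} {g : D ⟶ D} (h : b ≫ (U ◁ g) = b ≫ (f ▷ D)) :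
    mateEndo b d f = g := by
  unfold mateEndo
  slice_lhs 2 3 => rw [← MonoidalCategory.whiskerLeft_comp, ← h]
  rw [MonoidalCategory.whiskerLeft_comp]
  slice_lhs 3 4 => rw [associator_inv_naturality_right]
  slice_lhs 4 5 => rw [whisker_exchange]
  slice_lhs 5 6 => rw [leftUnitor_naturality]
  slice_lhs 1 5 => rw [zig2]
  simp

/-- Build an `ExactPairing` from zigzag identities in "identity" form. -/
noncomputable def mkP {U D : C} (b : 𝟙_ C ⟶ U ⊗ D) (d : D ⊗ U ⟶ 𝟙_ C)
    (zig1 : (λ_ U).inv ≫ (b ▷ U) ≫ (α_ U D U).hom ≫ (U ◁ d) ≫ (ρ_ U).hom = 𝟙 U)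
    (zig2 : (ρ_ D).inv ≫ (D ◁ b) ≫ (α_ D U D).inv ≫ (d ▷ D) ≫ (λ_ D).hom = 𝟙 D) :
    ExactPairing U D where
  coevaluation' := b
  evaluation' := d
  coevaluation_evaluation' := by
    rw [← cancel_epi (ρ_ D).inv, ← cancel_mono (λ_ D).hom]
    simpa using zig2
  evaluation_coevaluation' := by
    rw [← cancel_epi (λ_ U).inv, ← cancel_mono (ρ_ U).hom]
    simpa using zig1

theorem ourZig1 (U D : C) [ExactPairing U D] :
    (λ_ U).inv ≫ (η_ U D ▷ U) ≫ (α_ U D U).hom ≫ (U ◁ ε_ U D) ≫ (ρ_ U).hom = 𝟙 U := by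
  simp

theorem ourZig2 (U D : C) [ExactPairing U D] :
    (ρ_ D).inv ≫ (D ◁ η_ U D) ≫ (α_ D U D).inv ≫ (ε_ U D ▷ D) ≫ (λ_ D).hom = 𝟙 D := by
  simp

/-- The coevaluation for a tensor product of dual pairs (general cups). -/
noncomputable def cupT {U D V E : C} (b1 : 𝟙_ C ⟶ U ⊗ D) (b2 : 𝟙_ C ⟶ V ⊗ E) :
    𝟙_ C ⟶ (U ⊗ V) ⊗ (E ⊗ D) :=
  b1 ⊗≫ U ◁ (b2 ▷ D) ⊗≫ 𝟙 ((U ⊗ V) ⊗ (E ⊗ D))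

/-- The evaluation for a tensor product of dual pairs (general caps). -/
noncomputable def capT {U D V E : C} (d1 : D ⊗ U ⟶ 𝟙_ C) (d2 : E ⊗ V ⟶ 𝟙_ C) :
    (E ⊗ D) ⊗ (U ⊗ V) ⟶ 𝟙_ C :=
  𝟙 ((E ⊗ D) ⊗ (U ⊗ V)) ⊗≫ E ◁ (d1 ▷ V) ⊗≫ d2

section TensorZig

variable {U D V E : C} [ExactPairing U D] [ExactPairing V E]

theorem tensorZig1 :
    (λ_ (U ⊗ V)).inv ≫ (cupT (η_ U D) (η_ V E) ▷ (U ⊗ V)) ≫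
      (α_ (U ⊗ V) (E ⊗ D) (U ⊗ V)).hom ≫ ((U ⊗ V) ◁ capT (ε_ U D) (ε_ V E)) ≫
      (ρ_ (U ⊗ V)).hom = 𝟙 (U ⊗ V) :=
  calc
    _ = 𝟙 _ ⊗≫ η_ U D ▷ (U ⊗ V) ⊗≫
        U ◁ ((η_ V E ▷ (D ⊗ U)) ≫ ((V ⊗ E) ◁ ε_ U D)) ▷ V ⊗≫
        (U ⊗ V) ◁ ε_ V E ⊗≫ 𝟙 _ := by
      dsimp only [cupT, capT]; monoidal
    _ = 𝟙 _ ⊗≫ η_ U D ▷ (U ⊗ V) ⊗≫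
        U ◁ ((𝟙_ C ◁ ε_ U D) ≫ (η_ V E ▷ 𝟙_ C)) ▷ V ⊗≫
        (U ⊗ V) ◁ ε_ V E ⊗≫ 𝟙 _ := by
      rw [← whisker_exchange]
    _ = 𝟙 _ ⊗≫ (η_ U D ▷ U ⊗≫ U ◁ ε_ U D) ▷ V ⊗≫
        U ◁ (η_ V E ▷ V ⊗≫ V ◁ ε_ V E) ⊗≫ 𝟙 _ := by
      monoidal
    _ = 𝟙 (U ⊗ V) := by
      rw [ExactPairing.evaluation_coevaluation'', ExactPairing.evaluation_coevaluation'']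
      monoidal

theorem tensorZig2 :
    (ρ_ (E ⊗ D)).inv ≫ ((E ⊗ D) ◁ cupT (η_ U D) (η_ V E)) ≫
      (α_ (E ⊗ D) (U ⊗ V) (E ⊗ D)).inv ≫ (capT (ε_ U D) (ε_ V E) ▷ (E ⊗ D)) ≫
      (λ_ (E ⊗ D)).hom = 𝟙 (E ⊗ D) :=
  calc
    _ = 𝟙 (E ⊗ D) ⊗≫ (E ⊗ D) ◁ η_ U D ⊗≫
        E ◁ (((D ⊗ U) ◁ (η_ V E ▷ D)) ≫ (ε_ U D ▷ ((V ⊗ E) ⊗ D))) ⊗≫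
        ε_ V E ▷ (E ⊗ D) ⊗≫ 𝟙 _ := by
      dsimp only [cupT, capT]; monoidal
    _ = 𝟙 (E ⊗ D) ⊗≫ (E ⊗ D) ◁ η_ U D ⊗≫
        E ◁ ((ε_ U D ▷ (𝟙_ C ⊗ D)) ≫ (𝟙_ C ◁ (η_ V E ▷ D))) ⊗≫
        ε_ V E ▷ (E ⊗ D) ⊗≫ 𝟙 _ := by
      rw [whisker_exchange]
    _ = 𝟙 (E ⊗ D) ⊗≫ E ◁ (D ◁ η_ U D ⊗≫ ε_ U D ▷ D) ⊗≫
        (E ◁ η_ V E ⊗≫ ε_ V E ▷ E) ▷ D ⊗≫ 𝟙 _ := by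
      monoidal
    _ = 𝟙 (E ⊗ D) := by
      rw [ExactPairing.coevaluation_evaluation'', ExactPairing.coevaluation_evaluation'']
      monoidal

end TensorZig

section Braided

variable [BraidedCategory C]

theorem slide_pos {X Y : C} (b : 𝟙_ C ⟶ X ⊗ Y) (W : C) :
    (b ▷ W) ≫ (α_ X Y W).hom ≫ (X ◁ (β_ Y W).hom) =
      ((λ_ W).hom ≫ (ρ_ W).inv) ≫ (W ◁ b) ≫ (α_ W X Y).inv ≫ ((β_ X W).inv ▷ Y) ≫
        (α_ X W Y).hom := by
  have h := braiding_naturality_left b W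
  rw [braiding_tensor_left_hom] at h
  rw [braiding_tensorUnit_left] at h
  rw [← cancel_mono ((α_ X W Y).inv ≫ ((β_ X W).hom ▷ Y) ≫ (α_ W X Y).hom)]
  simp only [Category.assoc] at h ⊢
  rw [h]; simp

theorem slide_neg {X Y : C} (b : 𝟙_ C ⟶ X ⊗ Y) (W : C) :
    (b ▷ W) ≫ (α_ X Y W).hom ≫ (X ◁ (β_ W Y).inv) =
      ((λ_ W).hom ≫ (ρ_ W).inv) ≫ (W ◁ b) ≫ (α_ W X Y).inv ≫ ((β_ W X).hom ▷ Y) ≫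
        (α_ X W Y).hom := by
  have h := braiding_inv_naturality_left b W
  rw [braiding_tensor_right_inv] at h
  rw [braiding_inv_tensorUnit_right] at h
  rw [← cancel_mono ((α_ X W Y).inv ≫ ((β_ W X).inv ▷ Y) ≫ (α_ W X Y).hom)]
  simp only [Category.assoc] at h ⊢
  rw [h]; simp

/-- Rotating the double braiding around nested cups: the double braiding on the two
right legs equals the double braiding on the two left legs. -/
theorem dagger {U D V E : C} (b1 : 𝟙_ C ⟶ U ⊗ D) (b2 : 𝟙_ C ⟶ V ⊗ E) :
    cupT b1 b2 ≫ ((U ⊗ V) ◁ (β_ E D).hom) ≫ ((U ⊗ V) ◁ (β_ D E).hom) =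
      cupT b1 b2 ≫ ((β_ U V).hom ▷ (E ⊗ D)) ≫ ((β_ V U).hom ▷ (E ⊗ D)) :=
  calc
    _ = 𝟙 (𝟙_ C) ⊗≫ b1 ⊗≫
        U ◁ (b2 ▷ D ≫ (α_ V E D).hom ≫ V ◁ (β_ E D).hom) ⊗≫
        (U ⊗ V) ◁ (β_ D E).hom ⊗≫ 𝟙 ((U ⊗ V) ⊗ (E ⊗ D)) := by
      dsimp only [cupT]; monoidal
    _ = 𝟙 (𝟙_ C) ⊗≫ b1 ⊗≫
        U ◁ (((λ_ D).hom ≫ (ρ_ D).inv) ≫ (D ◁ b2) ≫ (α_ D V E).inv ≫ ((β_ V D).inv ▷ E) ≫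
          (α_ V D E).hom) ⊗≫
        (U ⊗ V) ◁ (β_ D E).hom ⊗≫ 𝟙 ((U ⊗ V) ⊗ (E ⊗ D)) := by
      rw [slide_pos]
    _ = 𝟙 (𝟙_ C) ⊗≫ (b1 ▷ 𝟙_ C ≫ (U ⊗ D) ◁ b2) ⊗≫
        U ◁ ((β_ V D).inv ▷ E) ⊗≫ (U ⊗ V) ◁ (β_ D E).hom ⊗≫ 𝟙 ((U ⊗ V) ⊗ (E ⊗ D)) := by
      monoidal
    _ = 𝟙 (𝟙_ C) ⊗≫ (𝟙_ C ◁ b2 ≫ b1 ▷ (V ⊗ E)) ⊗≫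
        U ◁ ((β_ V D).inv ▷ E) ⊗≫ (U ⊗ V) ◁ (β_ D E).hom ⊗≫ 𝟙 ((U ⊗ V) ⊗ (E ⊗ D)) := by
      rw [← whisker_exchange]
    _ = 𝟙 (𝟙_ C) ⊗≫ b2 ⊗≫
        (b1 ▷ V ≫ (α_ U D V).hom ≫ U ◁ (β_ V D).inv) ▷ E ⊗≫
        (U ⊗ V) ◁ (β_ D E).hom ⊗≫ 𝟙 ((U ⊗ V) ⊗ (E ⊗ D)) := by
      monoidal
    _ = 𝟙 (𝟙_ C) ⊗≫ b2 ⊗≫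
        (((λ_ V).hom ≫ (ρ_ V).inv) ≫ (V ◁ b1) ≫ (α_ V U D).inv ≫ ((β_ V U).hom ▷ D) ≫
          (α_ U V D).hom) ▷ E ⊗≫
        (U ⊗ V) ◁ (β_ D E).hom ⊗≫ 𝟙 ((U ⊗ V) ⊗ (E ⊗ D)) := by
      rw [slide_neg]
    _ = 𝟙 (𝟙_ C) ⊗≫ b2 ⊗≫ V ◁ (b1 ▷ E) ⊗≫
        ((β_ V U).hom ▷ (D ⊗ E) ≫ (U ⊗ V) ◁ (β_ D E).hom) ⊗≫ 𝟙 ((U ⊗ V) ⊗ (E ⊗ D)) := by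
      monoidal
    _ = 𝟙 (𝟙_ C) ⊗≫ b2 ⊗≫ V ◁ (b1 ▷ E) ⊗≫
        ((V ⊗ U) ◁ (β_ D E).hom ≫ (β_ V U).hom ▷ (E ⊗ D)) ⊗≫ 𝟙 ((U ⊗ V) ⊗ (E ⊗ D)) := by
      rw [← whisker_exchange]
    _ = 𝟙 (𝟙_ C) ⊗≫ b2 ⊗≫
        V ◁ (b1 ▷ E ≫ (α_ U D E).hom ≫ U ◁ (β_ D E).hom) ⊗≫
        (β_ V U).hom ▷ (E ⊗ D) ⊗≫ 𝟙 ((U ⊗ V) ⊗ (E ⊗ D)) := by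
      monoidal
    _ = 𝟙 (𝟙_ C) ⊗≫ b2 ⊗≫
        V ◁ (((λ_ E).hom ≫ (ρ_ E).inv) ≫ (E ◁ b1) ≫ (α_ E U D).inv ≫ ((β_ U E).inv ▷ D) ≫
          (α_ U E D).hom) ⊗≫
        (β_ V U).hom ▷ (E ⊗ D) ⊗≫ 𝟙 ((U ⊗ V) ⊗ (E ⊗ D)) := by
      rw [slide_pos]
    _ = 𝟙 (𝟙_ C) ⊗≫ (b2 ▷ 𝟙_ C ≫ (V ⊗ E) ◁ b1) ⊗≫
        V ◁ ((β_ U E).inv ▷ D) ⊗≫ (β_ V U).hom ▷ (E ⊗ D) ⊗≫ 𝟙 ((U ⊗ V) ⊗ (E ⊗ D)) := by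
      monoidal
    _ = 𝟙 (𝟙_ C) ⊗≫ (𝟙_ C ◁ b1 ≫ b2 ▷ (U ⊗ D)) ⊗≫
        V ◁ ((β_ U E).inv ▷ D) ⊗≫ (β_ V U).hom ▷ (E ⊗ D) ⊗≫ 𝟙 ((U ⊗ V) ⊗ (E ⊗ D)) := by
      rw [← whisker_exchange]
    _ = 𝟙 (𝟙_ C) ⊗≫ b1 ⊗≫
        (b2 ▷ U ≫ (α_ V E U).hom ≫ V ◁ (β_ U E).inv) ▷ D ⊗≫
        (β_ V U).hom ▷ (E ⊗ D) ⊗≫ 𝟙 ((U ⊗ V) ⊗ (E ⊗ D)) := by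
      monoidal
    _ = 𝟙 (𝟙_ C) ⊗≫ b1 ⊗≫
        (((λ_ U).hom ≫ (ρ_ U).inv) ≫ (U ◁ b2) ≫ (α_ U V E).inv ≫ ((β_ U V).hom ▷ E) ≫
          (α_ V U E).hom) ▷ D ⊗≫
        (β_ V U).hom ▷ (E ⊗ D) ⊗≫ 𝟙 ((U ⊗ V) ⊗ (E ⊗ D)) := by
      rw [slide_neg]
    _ = cupT b1 b2 ≫ ((β_ U V).hom ▷ (E ⊗ D)) ≫ ((β_ V U).hom ▷ (E ⊗ D)) := by
      dsimp only [cupT]; monoidal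

theorem cup_twist {U D V E : C} (b1 : 𝟙_ C ⟶ U ⊗ D) (b2 : 𝟙_ C ⟶ V ⊗ E)
    (θU : U ⟶ U) (θV : V ⟶ V) (θD : D ⟶ D) (θE : E ⟶ E)
    (hU : b1 ≫ (U ◁ θD) = b1 ≫ (θU ▷ D)) (hV : b2 ≫ (V ◁ θE) = b2 ≫ (θV ▷ E)) :
    cupT b1 b2 ≫ ((U ⊗ V) ◁ (θE ⊗ₘ θD)) = cupT b1 b2 ≫ ((θU ⊗ₘ θV) ▷ (E ⊗ D)) :=
  calc
    _ = 𝟙 (𝟙_ C) ⊗≫ b1 ⊗≫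
        U ◁ ((b2 ≫ V ◁ θE) ▷ D ≫ (V ⊗ E) ◁ θD) ⊗≫ 𝟙 ((U ⊗ V) ⊗ (E ⊗ D)) := by
      dsimp only [cupT]; rw [MonoidalCategory.tensorHom_def]; monoidal
    _ = 𝟙 (𝟙_ C) ⊗≫ b1 ⊗≫
        U ◁ ((b2 ≫ θV ▷ E) ▷ D ≫ (V ⊗ E) ◁ θD) ⊗≫ 𝟙 ((U ⊗ V) ⊗ (E ⊗ D)) := by
      rw [hV]
    _ = 𝟙 (𝟙_ C) ⊗≫ b1 ⊗≫
        U ◁ (𝟙_ C ◁ θD ≫ (b2 ≫ θV ▷ E) ▷ D) ⊗≫ 𝟙 ((U ⊗ V) ⊗ (E ⊗ D)) := by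
      rw [← whisker_exchange]
    _ = 𝟙 (𝟙_ C) ⊗≫ (b1 ≫ U ◁ θD) ⊗≫
        U ◁ ((b2 ≫ θV ▷ E) ▷ D) ⊗≫ 𝟙 ((U ⊗ V) ⊗ (E ⊗ D)) := by
      monoidal
    _ = 𝟙 (𝟙_ C) ⊗≫ (b1 ≫ θU ▷ D) ⊗≫
        U ◁ ((b2 ≫ θV ▷ E) ▷ D) ⊗≫ 𝟙 ((U ⊗ V) ⊗ (E ⊗ D)) := by
      rw [hU]
    _ = 𝟙 (𝟙_ C) ⊗≫ b1 ⊗≫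
        (θU ▷ (𝟙_ C ⊗ D) ≫ U ◁ ((b2 ≫ θV ▷ E) ▷ D)) ⊗≫ 𝟙 ((U ⊗ V) ⊗ (E ⊗ D)) := by
      monoidal
    _ = 𝟙 (𝟙_ C) ⊗≫ b1 ⊗≫
        (U ◁ ((b2 ≫ θV ▷ E) ▷ D) ≫ θU ▷ ((V ⊗ E) ⊗ D)) ⊗≫ 𝟙 ((U ⊗ V) ⊗ (E ⊗ D)) := by
      rw [← whisker_exchange]
    _ = 𝟙 (𝟙_ C) ⊗≫ b1 ⊗≫ U ◁ (b2 ▷ D) ⊗≫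
        (U ◁ ((θV ▷ E) ▷ D) ≫ θU ▷ ((V ⊗ E) ⊗ D)) ⊗≫ 𝟙 ((U ⊗ V) ⊗ (E ⊗ D)) := by
      monoidal
    _ = 𝟙 (𝟙_ C) ⊗≫ b1 ⊗≫ U ◁ (b2 ▷ D) ⊗≫
        (θU ▷ ((V ⊗ E) ⊗ D) ≫ U ◁ ((θV ▷ E) ▷ D)) ⊗≫ 𝟙 ((U ⊗ V) ⊗ (E ⊗ D)) := by
      rw [whisker_exchange]
    _ = cupT b1 b2 ≫ ((θU ⊗ₘ θV) ▷ (E ⊗ D)) := by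
      dsimp only [cupT]; rw [MonoidalCategory.tensorHom_def]; monoidal

theorem ribbonT {U D V E : C} (b1 : 𝟙_ C ⟶ U ⊗ D) (b2 : 𝟙_ C ⟶ V ⊗ E)
    (θ : ∀ X : C, X ⟶ X)
    (θbal : ∀ X Y : C, θ (X ⊗ Y) = (θ X ⊗ₘ θ Y) ≫ (β_ X Y).hom ≫ (β_ Y X).hom)
    (hU : b1 ≫ (U ◁ θ D) = b1 ≫ (θ U ▷ D)) (hV : b2 ≫ (V ◁ θ E) = b2 ≫ (θ V ▷ E)) :
    cupT b1 b2 ≫ ((U ⊗ V) ◁ θ (E ⊗ D)) = cupT b1 b2 ≫ (θ (U ⊗ V) ▷ (E ⊗ D)) := by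
  rw [θbal, θbal]
  simp only [MonoidalCategory.whiskerLeft_comp, comp_whiskerRight]
  slice_lhs 1 2 => rw [cup_twist b1 b2 _ _ _ _ hU hV]
  slice_lhs 2 3 => rw [← whisker_exchange]
  slice_lhs 3 4 => rw [← whisker_exchange]
  slice_lhs 1 3 => rw [dagger]
  simp only [Category.assoc, ← comp_whiskerRight]
  congr 2
  simp

theorem swapZig1 {U D : C} (b : 𝟙_ C ⟶ U ⊗ D) (d : D ⊗ U ⟶ 𝟙_ C)
    (zig1 : (λ_ U).inv ≫ (b ▷ U) ≫ (α_ U D U).hom ≫ (U ◁ d) ≫ (ρ_ U).hom = 𝟙 U)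
    (zig2 : (ρ_ D).inv ≫ (D ◁ b) ≫ (α_ D U D).inv ≫ (d ▷ D) ≫ (λ_ D).hom = 𝟙 D) :
    (λ_ D).inv ≫ ((b ≫ (β_ D U).inv) ▷ D) ≫ (α_ D U D).hom ≫
      (D ◁ ((β_ U D).hom ≫ d)) ≫ (ρ_ D).hom = 𝟙 D := by
  letI : ExactPairing U D := mkP b d zig1 zig2
  letI : ExactPairing D U := BraidedCategory.exactPairing_swap U D
  exact ourZig1 D U

theorem swapZig2 {U D : C} (b : 𝟙_ C ⟶ U ⊗ D) (d : D ⊗ U ⟶ 𝟙_ C)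
    (zig1 : (λ_ U).inv ≫ (b ▷ U) ≫ (α_ U D U).hom ≫ (U ◁ d) ≫ (ρ_ U).hom = 𝟙 U)
    (zig2 : (ρ_ D).inv ≫ (D ◁ b) ≫ (α_ D U D).inv ≫ (d ▷ D) ≫ (λ_ D).hom = 𝟙 D) :
    (ρ_ U).inv ≫ (U ◁ (b ≫ (β_ D U).inv)) ≫ (α_ U D U).inv ≫
      (((β_ U D).hom ≫ d) ▷ U) ≫ (λ_ U).hom = 𝟙 U := by
  letI : ExactPairing U D := mkP b d zig1 zig2
  letI : ExactPairing D U := BraidedCategory.exactPairing_swap U D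
  exact ourZig2 D U

end Braided

theorem unit_whisker (f : 𝟙_ C ⟶ 𝟙_ C) : (𝟙_ C ◁ f) = f ▷ 𝟙_ C := by
  rw [MonoidalCategory.id_whiskerLeft, MonoidalCategory.whiskerRight_id, unitors_equal,
    unitors_inv_equal]

end GoodDualAux

open GoodDualAux

set_option maxHeartbeats 1000000

/-- in a balanced monoidal category `C`, the full subcategory
`N(C)` of objects with a good left dual is a ribbon category: it contains the
unit, is closed under tensor products and under taking duals; moreover every
ribbon subcategory of `C` is contained in `N(C)`: any object with a left dual
satisfying the ribbon condition already has a good left dual. -/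
theorem goodDual_subcategory_ribbon {C : Type*} [Category C] [MonoidalCategory C]
    [BraidedCategory C]
    (θ : ∀ X : C, X ⟶ X)
    (θiso : ∀ X : C, IsIso (θ X))
    (θnat : ∀ {X Y : C} (f : X ⟶ Y), f ≫ θ Y = θ X ≫ f)
    (θbal : ∀ X Y : C, θ (X ⊗ Y) = (θ X ⊗ₘ θ Y) ≫ (β_ X Y).hom ≫ (β_ Y X).hom) :
    -- the unit has a good dual
    HasGoodDual θ (𝟙_ C) ∧
    -- closure under tensor product
    (∀ U V : C, HasGoodDual θ U → HasGoodDual θ V → HasGoodDual θ (U ⊗ V)) ∧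
    -- closure under duals: a good left dual again has a good left dual
    (∀ (U Ud : C) (b : 𝟙_ C ⟶ U ⊗ Ud) (d : Ud ⊗ U ⟶ 𝟙_ C),
      ((λ_ U).inv ≫ (b ▷ U) ≫ (α_ U Ud U).hom ≫ (U ◁ d) ≫ (ρ_ U).hom = 𝟙 U) →
      ((ρ_ Ud).inv ≫ (Ud ◁ b) ≫ (α_ Ud U Ud).inv ≫ (d ▷ Ud) ≫ (λ_ Ud).hom = 𝟙 Ud) →
      (b ≫ (U ◁ θ Ud) = b ≫ (θ U ▷ Ud)) →
      (θ Ud = mateEndo b d (θ U)) →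
      HasGoodDual θ Ud) ∧
    -- maximality: the ribbon condition for some left dual already yields a good dual
    (∀ (U Ud : C) (b : 𝟙_ C ⟶ U ⊗ Ud) (d : Ud ⊗ U ⟶ 𝟙_ C),
      ((λ_ U).inv ≫ (b ▷ U) ≫ (α_ U Ud U).hom ≫ (U ◁ d) ≫ (ρ_ U).hom = 𝟙 U) →
      ((ρ_ Ud).inv ≫ (Ud ◁ b) ≫ (α_ Ud U Ud).inv ≫ (d ▷ Ud) ≫ (λ_ Ud).hom = 𝟙 Ud) →
      (b ≫ (U ◁ θ Ud) = b ≫ (θ U ▷ Ud)) →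
      HasGoodDual θ U):= by
  refine ⟨?_, ?_, ?_, ?_⟩
  · -- unit
    have z1 : (λ_ (𝟙_ C)).inv ≫ ((λ_ (𝟙_ C)).inv ▷ 𝟙_ C) ≫ (α_ (𝟙_ C) (𝟙_ C) (𝟙_ C)).hom ≫
        (𝟙_ C ◁ (λ_ (𝟙_ C)).hom) ≫ (ρ_ (𝟙_ C)).hom = 𝟙 (𝟙_ C) := by monoidal
    have z2 : (ρ_ (𝟙_ C)).inv ≫ (𝟙_ C ◁ (λ_ (𝟙_ C)).inv) ≫ (α_ (𝟙_ C) (𝟙_ C) (𝟙_ C)).inv ≫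
        ((λ_ (𝟙_ C)).hom ▷ 𝟙_ C) ≫ (λ_ (𝟙_ C)).hom = 𝟙 (𝟙_ C) := by monoidal
    have rib : (λ_ (𝟙_ C)).inv ≫ (𝟙_ C ◁ θ (𝟙_ C)) = (λ_ (𝟙_ C)).inv ≫ (θ (𝟙_ C) ▷ 𝟙_ C) := by
      rw [unit_whisker]
    exact ⟨𝟙_ C, (λ_ (𝟙_ C)).inv, (λ_ (𝟙_ C)).hom, z1, z2, rib,
      (mate_eq _ _ z2 rib).symm⟩
  · -- tensor products
    rintro U V ⟨D, b1, d1, z11, z12, rib1, -⟩ ⟨E, b2, d2, z21, z22, rib2, -⟩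
    letI P1 : ExactPairing U D := mkP b1 d1 z11 z12
    letI P2 : ExactPairing V E := mkP b2 d2 z21 z22
    have hrib : cupT (η_ U D) (η_ V E) ≫ ((U ⊗ V) ◁ θ (E ⊗ D)) =
        cupT (η_ U D) (η_ V E) ≫ (θ (U ⊗ V) ▷ (E ⊗ D)) :=
      ribbonT (η_ U D) (η_ V E) θ θbal rib1 rib2
    exact ⟨E ⊗ D, cupT (η_ U D) (η_ V E), capT (ε_ U D) (ε_ V E), tensorZig1, tensorZig2,
      hrib, (mate_eq _ _ tensorZig2 hrib).symm⟩
  · -- duals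
    intro U Ud b d z1 z2 rib _
    have rib' : (b ≫ (β_ Ud U).inv) ≫ (Ud ◁ θ U) = (b ≫ (β_ Ud U).inv) ≫ (θ Ud ▷ U) := by
      have c1 : b ≫ (β_ Ud U).inv ≫ (Ud ◁ θ U) = b ≫ (θ U ▷ Ud) ≫ (β_ Ud U).inv := by
        rw [BraidedCategory.braiding_inv_naturality_left]
      have c2 : b ≫ (θ U ▷ Ud) ≫ (β_ Ud U).inv = b ≫ (U ◁ θ Ud) ≫ (β_ Ud U).inv := by
        rw [← Category.assoc, ← rib, Category.assoc]
      have c3 : b ≫ (U ◁ θ Ud) ≫ (β_ Ud U).inv = b ≫ (β_ Ud U).inv ≫ (θ Ud ▷ U) := by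
        rw [BraidedCategory.braiding_inv_naturality_right]
      simpa [Category.assoc] using c1.trans (c2.trans c3)
    exact ⟨U, b ≫ (β_ Ud U).inv, (β_ U Ud).hom ≫ d, swapZig1 b d z1 z2, swapZig2 b d z1 z2,
      rib', (mate_eq _ _ (swapZig2 b d z1 z2) rib').symm⟩
  · -- maximality
    intro U Ud b d z1 z2 rib
    exact ⟨Ud, b, d, z1, z2, rib, (mate_eq b d z2 rib).symm⟩
end

section
/- Let H be a finite-dimensional Hopf algebra over a field k and D(H) its Drinfeld quantum double. Then the category of left D(H)-modules is isomorphic, as a braided monoidal category, to the category of left-left Yetter-Drinfeld modules over H: a D(H)-module structure on a vector space V is the same data as an H-module structure together with an H*-action (equivalently H-comodule structure) satisfying the compatibility h(f ⊳ v) = ⟨f, s⁻¹(h''') ( − ) h'⟩ ⊳ (h'' v) for h ∈ H, f ∈ H*, v ∈ V. -/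
open TensorProduct

universe u

variable (k : Type u) [Field k] (H : Type u) [Ring H] [HopfAlgebra k H]

/-- Convolution product on the dual of a Hopf algebra: `⟨f*g, x⟩ = f(x')g(x'')`. -/
noncomputable def dualConv {k : Type u} [Field k] {H : Type u} [Ring H]
    [HopfAlgebra k H] (f g : Module.Dual k H) : Module.Dual k H :=
  (LinearMap.mul' k k) ∘ₗ (TensorProduct.map f g) ∘ₗ (Coalgebra.comul (R := k))


section AuxCoalg
variable {k H}

open Coalgebra in
lemma repr_counit_right {C : Type*} [AddCommGroup C] [Module k C] [Coalgebra k C]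
    {c : C} {ιr : Type*} (r : Coalgebra.Repr k c ιr) :
    ∑ i ∈ r.index, Coalgebra.counit (R := k) (r.right i) • r.left i = c := by
  have h := Coalgebra.sum_tmul_counit_eq r
  calc ∑ i ∈ r.index, Coalgebra.counit (R := k) (r.right i) • r.left i
      = TensorProduct.rid k C (∑ i ∈ r.index, r.left i ⊗ₜ Coalgebra.counit (R := k) (r.right i)) := by
        rw [map_sum]; simp
    _ = TensorProduct.rid k C (c ⊗ₜ 1) := by rw [h]
    _ = c := by simp

open Coalgebra in
lemma repr_counit_left {C : Type*} [AddCommGroup C] [Module k C] [Coalgebra k C]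
    {c : C} {ιr : Type*} (r : Coalgebra.Repr k c ιr) :
    ∑ i ∈ r.index, Coalgebra.counit (R := k) (r.left i) • r.right i = c := by
  have h := Coalgebra.sum_counit_tmul_eq r
  calc ∑ i ∈ r.index, Coalgebra.counit (R := k) (r.left i) • r.right i
      = TensorProduct.lid k C (∑ i ∈ r.index, Coalgebra.counit (R := k) (r.left i) ⊗ₜ r.right i) := by
        rw [map_sum]; simp
    _ = TensorProduct.lid k C ((1 : k) ⊗ₜ c) := by rw [h]
    _ = c := by simp

/-- A sum `∑ F(c₁) * G(c₂)` over a representation only depends on `comul c`. -/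
lemma conv_sum_eq {C : Type u} [AddCommGroup C] [Module k C] [Coalgebra k C]
    (F G : C →ₗ[k] H) {c : C} {ιr : Type*} (r : Coalgebra.Repr k c ιr) :
    ∑ i ∈ r.index, F (r.left i) * G (r.right i) =
      LinearMap.mul' k H (TensorProduct.map F G (Coalgebra.comul (R := k) c)) := by
  rw [← r.eq, map_sum, map_sum]
  simp

/-- Uniqueness of convolution inverses. -/
lemma conv_unique {C : Type u} [AddCommGroup C] [Module k C] [Coalgebra k C]
    (F G G' : C →ₗ[k] H)
    (hFG : ∀ c : C, LinearMap.mul' k H (TensorProduct.map F G (Coalgebra.comul (R := k) c)) =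
      Coalgebra.counit (R := k) c • 1)
    (hG'F : ∀ c : C, LinearMap.mul' k H (TensorProduct.map G' F (Coalgebra.comul (R := k) c)) =
      Coalgebra.counit (R := k) c • 1) :
    G = G' := by
  ext c
  have r : Coalgebra.Repr k c (C × C) := Coalgebra.Repr.arbitrary k c
  set r1 : (i : C × C) → Coalgebra.Repr k (r.left i) (C × C) :=
    fun i => Coalgebra.Repr.arbitrary k (r.left i) with hr1
  set r2 : (i : C × C) → Coalgebra.Repr k (r.right i) (C × C) :=
    fun i => Coalgebra.Repr.arbitrary k (r.right i) with hr2
  have key := Coalgebra.sum_map_tmul_tmul_eq (R := k) G' F G c (repr := r) (a₁ := r1) (a₂ := r2)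
  -- apply the multiplication map `x ⊗ (y ⊗ z) ↦ x * (y * z)` to both sides
  have key2 := congrArg (LinearMap.mul' k H ∘ₗ LinearMap.lTensor H (LinearMap.mul' k H)) key
  simp only [map_sum, LinearMap.coe_comp, Function.comp_apply, LinearMap.lTensor_tmul,
    LinearMap.mul'_apply] at key2
  -- right-hand side of key2 computes to `G c`
  have hR : ∑ i ∈ r.index, ∑ j ∈ (r1 i).index,
      G' ((r1 i).left j) * (F ((r1 i).right j) * G (r.right i)) = G c := by
    have : ∀ i ∈ r.index, ∑ j ∈ (r1 i).index,
        G' ((r1 i).left j) * (F ((r1 i).right j) * G (r.right i)) =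
        Coalgebra.counit (R := k) (r.left i) • G (r.right i) := by
      intro i _
      have h1 : ∑ j ∈ (r1 i).index, G' ((r1 i).left j) * F ((r1 i).right j) =
          Coalgebra.counit (R := k) (r.left i) • 1 := by
        rw [conv_sum_eq G' F (r1 i)]; exact hG'F _
      calc ∑ j ∈ (r1 i).index, G' ((r1 i).left j) * (F ((r1 i).right j) * G (r.right i))
          = (∑ j ∈ (r1 i).index, G' ((r1 i).left j) * F ((r1 i).right j)) * G (r.right i) := by
            rw [Finset.sum_mul]; simp [mul_assoc]
        _ = Coalgebra.counit (R := k) (r.left i) • G (r.right i) := by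
            rw [h1, smul_mul_assoc, one_mul]
    rw [Finset.sum_congr rfl this]
    simp_rw [← map_smul]
    rw [← map_sum, repr_counit_left r]
  -- left-hand side of key2 computes to `G' c`
  have hL : ∑ i ∈ r.index, ∑ j ∈ (r2 i).index,
      G' (r.left i) * (F ((r2 i).left j) * G ((r2 i).right j)) = G' c := by
    have : ∀ i ∈ r.index, ∑ j ∈ (r2 i).index,
        G' (r.left i) * (F ((r2 i).left j) * G ((r2 i).right j)) =
        Coalgebra.counit (R := k) (r.right i) • G' (r.left i) := by
      intro i _
      have h1 : ∑ j ∈ (r2 i).index, F ((r2 i).left j) * G ((r2 i).right j) =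
          Coalgebra.counit (R := k) (r.right i) • 1 := by
        rw [conv_sum_eq F G (r2 i)]; exact hFG _
      rw [← Finset.mul_sum, h1]
      rw [mul_smul_comm, mul_one]
    rw [Finset.sum_congr rfl this]
    simp_rw [← map_smul]
    rw [← map_sum, repr_counit_right r]
  rw [hL] at key2
  rw [hR] at key2
  exact key2.symm
end AuxCoalg

section AuxAntipode
variable {k H}

lemma my_antipode_one : HopfAlgebra.antipode (R := k) (1 : H) = 1 := by
  have h := HopfAlgebra.mul_antipode_rTensor_comul_apply (R := k) (A := H) 1
  rw [Bialgebra.comul_one] at h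
  rw [Algebra.TensorProduct.one_def] at h
  simpa using h

/-- The antipode is anti-multiplicative. -/
lemma my_antipode_mul (a b : H) :
    HopfAlgebra.antipode (R := k) (a * b) =
      HopfAlgebra.antipode (R := k) b * HopfAlgebra.antipode (R := k) a := by
  -- convolution inverse uniqueness on `H ⊗ H`
  let F : H ⊗[k] H →ₗ[k] H := LinearMap.mul' k H
  let G : H ⊗[k] H →ₗ[k] H := HopfAlgebra.antipode (R := k) ∘ₗ LinearMap.mul' k H
  let G' : H ⊗[k] H →ₗ[k] H := LinearMap.mul' k H ∘ₗ
    TensorProduct.map (HopfAlgebra.antipode (R := k)) (HopfAlgebra.antipode (R := k)) ∘ₗ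
    (TensorProduct.comm k H H).toLinearMap
  have hmain : G = G' := by
    apply conv_unique F G G'
    · -- ∀ c, mul' (map F G (comul c)) = counit c • 1
      intro c
      induction c using TensorProduct.induction_on with
      | zero => simp
      | add x y hx hy => rw [map_add, map_add, map_add, hx, hy, map_add, add_smul]
      | tmul x y =>
        -- comul (x ⊗ y) via reprs of x and y
        have rx : Coalgebra.Repr k x (H × H) := Coalgebra.Repr.arbitrary k x
        have ry : Coalgebra.Repr k y (H × H) := Coalgebra.Repr.arbitrary k y
        have hcm : Coalgebra.comul (R := k) ((x ⊗ₜ y : H ⊗[k] H)) =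
            ∑ i ∈ rx.index, ∑ j ∈ ry.index,
              (rx.left i ⊗ₜ ry.left j) ⊗ₜ[k] (rx.right i ⊗ₜ ry.right j) := by
          rw [TensorProduct.comul_def]
          simp only [LinearMap.coe_comp, Function.comp_apply, TensorProduct.AlgebraTensorModule.map_tmul]
          rw [← rx.eq, ← ry.eq, TensorProduct.sum_tmul]
          rw [map_sum]
          refine Finset.sum_congr rfl fun i _ => ?_
          rw [TensorProduct.tmul_sum, map_sum]
          refine Finset.sum_congr rfl fun j _ => ?_
          simp [TensorProduct.tensorTensorTensorComm]
        rw [hcm, map_sum, map_sum]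
        simp only [TensorProduct.map_tmul, LinearMap.mul'_apply, map_sum]
        -- build a repr of x * y
        let rxy : Coalgebra.Repr k (x * y) ((H × H) × (H × H)) := {
          index := rx.index ×ˢ ry.index
          left := fun p => rx.left p.1 * ry.left p.2
          right := fun p => rx.right p.1 * ry.right p.2
          eq := by
            rw [Finset.sum_product]
            rw [Bialgebra.comul_mul, ← rx.eq, ← ry.eq, Finset.sum_mul_sum]
            refine Finset.sum_congr rfl fun i _ => Finset.sum_congr rfl fun j _ => ?_
            dsimp only
            rw [Algebra.TensorProduct.tmul_mul_tmul]
        }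
        have key := HopfAlgebra.sum_mul_antipode_eq_smul (R := k) rxy
        simp only [rxy] at key
        rw [Finset.sum_product] at key
        simp only [F, G, LinearMap.coe_comp, Function.comp_apply, LinearMap.mul'_apply] at key ⊢
        rw [key]
        simp [mul_comm]
    · intro c
      induction c using TensorProduct.induction_on with
      | zero => simp
      | add x y hx hy => rw [map_add, map_add, map_add, hx, hy, map_add, add_smul]
      | tmul x y =>
        have rx : Coalgebra.Repr k x (H × H) := Coalgebra.Repr.arbitrary k x
        have ry : Coalgebra.Repr k y (H × H) := Coalgebra.Repr.arbitrary k y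
        have hcm : Coalgebra.comul (R := k) ((x ⊗ₜ y : H ⊗[k] H)) =
            ∑ i ∈ rx.index, ∑ j ∈ ry.index,
              (rx.left i ⊗ₜ ry.left j) ⊗ₜ[k] (rx.right i ⊗ₜ ry.right j) := by
          rw [TensorProduct.comul_def]
          simp only [LinearMap.coe_comp, Function.comp_apply, TensorProduct.AlgebraTensorModule.map_tmul]
          rw [← rx.eq, ← ry.eq, TensorProduct.sum_tmul]
          rw [map_sum]
          refine Finset.sum_congr rfl fun i _ => ?_
          rw [TensorProduct.tmul_sum, map_sum]
          refine Finset.sum_congr rfl fun j _ => ?_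
          simp [TensorProduct.tensorTensorTensorComm]
        rw [hcm, map_sum, map_sum]
        simp only [map_sum, TensorProduct.map_tmul, LinearMap.mul'_apply, G', F,
          LinearMap.coe_comp, Function.comp_apply, LinearEquiv.coe_coe,
          TensorProduct.comm_tmul]
        have hx := HopfAlgebra.sum_antipode_mul_eq_smul (R := k) rx
        have hy := HopfAlgebra.sum_antipode_mul_eq_smul (R := k) ry
        calc ∑ i ∈ rx.index, ∑ j ∈ ry.index,
              HopfAlgebra.antipode (R := k) (ry.left j) * HopfAlgebra.antipode (R := k) (rx.left i)
                * (rx.right i * ry.right j)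
            = ∑ j ∈ ry.index, HopfAlgebra.antipode (R := k) (ry.left j) *
                (∑ i ∈ rx.index, HopfAlgebra.antipode (R := k) (rx.left i) * rx.right i)
                * ry.right j := by
              rw [Finset.sum_comm]
              refine Finset.sum_congr rfl fun j _ => ?_
              rw [Finset.mul_sum, Finset.sum_mul]
              refine Finset.sum_congr rfl fun i _ => ?_
              noncomm_ring
          _ = Coalgebra.counit (R := k) ((x ⊗ₜ y : H ⊗[k] H)) • 1 := by
              rw [hx]
              simp only [mul_smul_comm, smul_mul_assoc, mul_one, one_mul]
              rw [← Finset.smul_sum, hy, TensorProduct.counit_tmul]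
              simp [smul_smul, mul_comm]
  have := congrArg (fun (L : H ⊗[k] H →ₗ[k] H) => L (a ⊗ₜ b)) hmain
  simpa [G, G'] using this

lemma sInv_one (sInv : H →ₗ[k] H)
    (hsInv₁ : ∀ x : H, sInv (HopfAlgebra.antipode (R := k) x) = x) :
    sInv (1 : H) = 1 := by
  have := hsInv₁ 1
  rwa [my_antipode_one] at this

lemma sInv_antimul (sInv : H →ₗ[k] H)
    (hsInv₁ : ∀ x : H, sInv (HopfAlgebra.antipode (R := k) x) = x)
    (hsInv₂ : ∀ x : H, HopfAlgebra.antipode (R := k) (sInv x) = x)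
    (x y : H) : sInv (x * y) = sInv y * sInv x := by
  conv_lhs => rw [← hsInv₂ x, ← hsInv₂ y]
  rw [← my_antipode_mul, hsInv₁]

/-- collapse: `∑ w₂ * s⁻¹(w₁) = ε(w) • 1`. -/
lemma col_right_sInv_left (sInv : H →ₗ[k] H)
    (hsInv₁ : ∀ x : H, sInv (HopfAlgebra.antipode (R := k) x) = x)
    (hsInv₂ : ∀ x : H, HopfAlgebra.antipode (R := k) (sInv x) = x)
    {w : H} {ιr : Type*} (r : Coalgebra.Repr k w ιr) :
    ∑ i ∈ r.index, r.right i * sInv (r.left i) = Coalgebra.counit (R := k) w • 1 := by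
  have h := HopfAlgebra.sum_mul_antipode_eq_smul (R := k) r
  have := congrArg sInv h
  rw [map_sum, map_smul] at this
  rw [sInv_one sInv hsInv₁] at this
  calc ∑ i ∈ r.index, r.right i * sInv (r.left i)
      = ∑ i ∈ r.index, sInv (r.left i * HopfAlgebra.antipode (R := k) (r.right i)) := by
        refine Finset.sum_congr rfl fun i _ => ?_
        rw [sInv_antimul sInv hsInv₁ hsInv₂, hsInv₁]
    _ = Coalgebra.counit (R := k) w • 1 := this

/-- collapse: `∑ s⁻¹(w₂) * w₁ = ε(w) • 1`. -/
lemma col_sInv_right_left (sInv : H →ₗ[k] H)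
    (hsInv₁ : ∀ x : H, sInv (HopfAlgebra.antipode (R := k) x) = x)
    (hsInv₂ : ∀ x : H, HopfAlgebra.antipode (R := k) (sInv x) = x)
    {w : H} {ιr : Type*} (r : Coalgebra.Repr k w ιr) :
    ∑ i ∈ r.index, sInv (r.right i) * r.left i = Coalgebra.counit (R := k) w • 1 := by
  have h := HopfAlgebra.sum_antipode_mul_eq_smul (R := k) r
  have := congrArg sInv h
  rw [map_sum, map_smul] at this
  rw [sInv_one sInv hsInv₁] at this
  calc ∑ i ∈ r.index, sInv (r.right i) * r.left i
      = ∑ i ∈ r.index, sInv (HopfAlgebra.antipode (R := k) (r.left i) * r.right i) := by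
        refine Finset.sum_congr rfl fun i _ => ?_
        rw [sInv_antimul sInv hsInv₁ hsInv₂, hsInv₁]
    _ = Coalgebra.counit (R := k) w • 1 := this

end AuxAntipode

section AuxBasis
variable {k H}

/-- dual basis expansion of a functional. -/
lemma dual_expand {ι : Type u} [Fintype ι] [DecidableEq ι] (e : Module.Basis ι k H)
    (f : Module.Dual k H) : ∑ i, f (e i) • e.coord i = f := by
  refine e.ext fun j => ?_
  simp only [LinearMap.sum_apply, LinearMap.smul_apply, Module.Basis.coord_apply, Module.Basis.repr_self]
  rw [Finset.sum_eq_single j]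
  · simp
  · intro i _ hij
    simp [Finsupp.single_apply, hij, Ne.symm hij]
  · intro hj; exact absurd (Finset.mem_univ j) hj

/-- evaluation map `V ⊗ H → V` given a functional. -/
noncomputable def evF {V : Type u} [AddCommGroup V] [Module k V] (g : Module.Dual k H) :
    V ⊗[k] H →ₗ[k] V :=
  (TensorProduct.rid k V).toLinearMap ∘ₗ TensorProduct.map LinearMap.id g

@[simp] lemma evF_tmul {V : Type u} [AddCommGroup V] [Module k V] (g : Module.Dual k H)
    (v : V) (h : H) : evF g (v ⊗ₜ h) = g h • v := by
  simp [evF]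

/-- expansion of a tensor in `V ⊗ H` along a basis of `H`. -/
lemma tensor_expand {ι : Type u} [Fintype ι] [DecidableEq ι] (e : Module.Basis ι k H)
    {V : Type u} [AddCommGroup V] [Module k V] (t : V ⊗[k] H) :
    t = ∑ i, (evF (e.coord i) t) ⊗ₜ e i := by
  induction t using TensorProduct.induction_on with
  | zero => simp
  | add x y hx hy =>
    conv_lhs => rw [hx, hy]
    rw [← Finset.sum_add_distrib]
    refine Finset.sum_congr rfl fun i _ => ?_
    rw [map_add, TensorProduct.add_tmul]
  | tmul v h =>
    simp only [evF_tmul]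
    calc v ⊗ₜ[k] h = v ⊗ₜ (∑ i, e.coord i h • e i) := by
          congr 1
          simp only [Module.Basis.coord_apply]
          exact (Module.Basis.sum_repr e h).symm
      _ = ∑ i, (e.coord i h • v) ⊗ₜ e i := by
          rw [TensorProduct.tmul_sum]
          refine Finset.sum_congr rfl fun i _ => ?_
          rw [TensorProduct.tmul_smul, TensorProduct.smul_tmul']

/-- separation: tensors in `V ⊗ H` are determined by applying functionals to `H`. -/
lemma tensor_sep {ι : Type u} [Fintype ι] [DecidableEq ι] (e : Module.Basis ι k H)
    {V : Type u} [AddCommGroup V] [Module k V] {t₁ t₂ : V ⊗[k] H}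
    (h : ∀ g : Module.Dual k H, evF g t₁ = evF g t₂) : t₁ = t₂ := by
  rw [tensor_expand e t₁, tensor_expand e t₂]
  exact Finset.sum_congr rfl fun i _ => by rw [h (e.coord i)]

end AuxBasis

section AuxMaps
variable {k H}

/-- `b ↦ f ∘ (b * ·)`. -/
noncomputable def mulLmap (f : Module.Dual k H) : H →ₗ[k] Module.Dual k H :=
  TensorProduct.curry (f ∘ₗ LinearMap.mul' k H)

lemma mulLmap_apply (f : Module.Dual k H) (b : H) :
    mulLmap f b = f ∘ₗ LinearMap.mulLeft k b := by
  ext x; simp [mulLmap]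

/-- `a ↦ f ∘ (· * a)`. -/
noncomputable def mulRmap (f : Module.Dual k H) : H →ₗ[k] Module.Dual k H :=
  TensorProduct.curry (f ∘ₗ LinearMap.mul' k H ∘ₗ (TensorProduct.comm k H H).toLinearMap)

lemma mulRmap_apply (f : Module.Dual k H) (a : H) :
    mulRmap f a = f ∘ₗ LinearMap.mulRight k a := by
  ext x; simp [mulRmap]

/-- `(u ⊗ a) ⊗ x ↦ u * x * a`. -/
noncomputable def mul3 : (H ⊗[k] H) ⊗[k] H →ₗ[k] H :=
  LinearMap.mul' k H ∘ₗ (LinearMap.rTensor H (LinearMap.mul' k H)) ∘ₗ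
    (TensorProduct.assoc k H H H).symm.toLinearMap ∘ₗ
    (LinearMap.lTensor H (TensorProduct.comm k H H).toLinearMap) ∘ₗ
    (TensorProduct.assoc k H H H).toLinearMap

@[simp] lemma mul3_tmul (u a x : H) : (mul3 (k := k)) ((u ⊗ₜ a) ⊗ₜ x) = u * x * a := by
  simp [mul3, mul_assoc]

/-- `(u ⊗ a) ↦ f ∘ (u * · * a)`. -/
noncomputable def Pmap (f : Module.Dual k H) : H ⊗[k] H →ₗ[k] Module.Dual k H :=
  TensorProduct.curry (f ∘ₗ mul3)

lemma Pmap_tmul (f : Module.Dual k H) (u a : H) :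
    Pmap f (u ⊗ₜ a) = f ∘ₗ LinearMap.mulLeft k u ∘ₗ LinearMap.mulRight k a := by
  ext x; simp [Pmap, mul_assoc]

variable {V : Type u} [AddCommGroup V] [Module k V]

/-- `a ⊗ b ↦ aV a (B (f ∘ mulLeft b) v)`. -/
noncomputable def Lstar (aV : H →ₗ[k] V →ₗ[k] V) (B : Module.Dual k H →ₗ[k] V →ₗ[k] V)
    (f : Module.Dual k H) (v : V) : H ⊗[k] H →ₗ[k] V :=
  TensorProduct.lift aV ∘ₗ LinearMap.lTensor H ((B.flip v) ∘ₗ mulLmap f)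

@[simp] lemma Lstar_tmul (aV : H →ₗ[k] V →ₗ[k] V) (B : Module.Dual k H →ₗ[k] V →ₗ[k] V)
    (f : Module.Dual k H) (v : V) (a b : H) :
    Lstar aV B f v (a ⊗ₜ b) = aV a (B (f ∘ₗ LinearMap.mulLeft k b) v) := by
  simp [Lstar, mulLmap_apply]

/-- `a ⊗ b ↦ B (f ∘ mulRight a) (aV b v)`. -/
noncomputable def Rstar (aV : H →ₗ[k] V →ₗ[k] V) (B : Module.Dual k H →ₗ[k] V →ₗ[k] V)
    (f : Module.Dual k H) (v : V) : H ⊗[k] H →ₗ[k] V :=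
  TensorProduct.lift B ∘ₗ TensorProduct.map (mulRmap f) (aV.flip v)

@[simp] lemma Rstar_tmul (aV : H →ₗ[k] V →ₗ[k] V) (B : Module.Dual k H →ₗ[k] V →ₗ[k] V)
    (f : Module.Dual k H) (v : V) (a b : H) :
    Rstar aV B f v (a ⊗ₜ b) = B (f ∘ₗ LinearMap.mulRight k a) (aV b v) := by
  simp [Rstar, mulRmap_apply]

/-- `a ⊗ (b ⊗ u) ↦ B (f ∘ mulLeft u ∘ mulRight a) (aV b v)`. -/
noncomputable def Xi2 (aV : H →ₗ[k] V →ₗ[k] V) (B : Module.Dual k H →ₗ[k] V →ₗ[k] V)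
    (f : Module.Dual k H) (v : V) : H ⊗[k] (H ⊗[k] H) →ₗ[k] V :=
  TensorProduct.lift B ∘ₗ TensorProduct.map (Pmap f) (aV.flip v) ∘ₗ
    (LinearMap.rTensor H (TensorProduct.comm k H H).toLinearMap) ∘ₗ
    (TensorProduct.assoc k H H H).symm.toLinearMap ∘ₗ
    (LinearMap.lTensor H (TensorProduct.comm k H H).toLinearMap)

@[simp] lemma Xi2_tmul (aV : H →ₗ[k] V →ₗ[k] V) (B : Module.Dual k H →ₗ[k] V →ₗ[k] V)
    (f : Module.Dual k H) (v : V) (a b u : H) :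
    Xi2 aV B f v (a ⊗ₜ (b ⊗ₜ u)) =
      B (f ∘ₗ LinearMap.mulLeft k u ∘ₗ LinearMap.mulRight k a) (aV b v) := by
  simp [Xi2, Pmap_tmul]

/-- `a ⊗ (b ⊗ c) ↦ B (f ∘ mulLeft (sInv c) ∘ mulRight a) (aV b v)`. -/
noncomputable def Phi (sInv : H →ₗ[k] H) (aV : H →ₗ[k] V →ₗ[k] V)
    (B : Module.Dual k H →ₗ[k] V →ₗ[k] V) (f : Module.Dual k H) (v : V) :
    H ⊗[k] (H ⊗[k] H) →ₗ[k] V :=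
  Xi2 aV B f v ∘ₗ LinearMap.lTensor H (LinearMap.lTensor H sInv)

@[simp] lemma Phi_tmul (sInv : H →ₗ[k] H) (aV : H →ₗ[k] V →ₗ[k] V)
    (B : Module.Dual k H →ₗ[k] V →ₗ[k] V) (f : Module.Dual k H) (v : V) (a b c : H) :
    Phi sInv aV B f v (a ⊗ₜ (b ⊗ₜ c)) =
      B (f ∘ₗ LinearMap.mulLeft k (sInv c) ∘ₗ LinearMap.mulRight k a) (aV b v) := by
  simp [Phi]

/-- `w₁ ⊗ w₂ ↦ w₂ * sInv w₁`. -/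
noncomputable def qmap (sInv : H →ₗ[k] H) : H ⊗[k] H →ₗ[k] H :=
  LinearMap.mul' k H ∘ₗ TensorProduct.map LinearMap.id sInv ∘ₗ
    (TensorProduct.comm k H H).toLinearMap

@[simp] lemma qmap_tmul (sInv : H →ₗ[k] H) (w₁ w₂ : H) :
    qmap sInv (w₁ ⊗ₜ w₂) = w₂ * sInv w₁ := by simp [qmap]

/-- `w₁ ⊗ w₂ ↦ sInv w₂ * w₁`. -/
noncomputable def qmap' (sInv : H →ₗ[k] H) : H ⊗[k] H →ₗ[k] H :=
  LinearMap.mul' k H ∘ₗ TensorProduct.map sInv LinearMap.id ∘ₗ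
    (TensorProduct.comm k H H).toLinearMap

@[simp] lemma qmap'_tmul (sInv : H →ₗ[k] H) (w₁ w₂ : H) :
    qmap' sInv (w₁ ⊗ₜ w₂) = sInv w₂ * w₁ := by simp [qmap']

lemma qmap_comul (sInv : H →ₗ[k] H)
    (hsInv₁ : ∀ x : H, sInv (HopfAlgebra.antipode (R := k) x) = x)
    (hsInv₂ : ∀ x : H, HopfAlgebra.antipode (R := k) (sInv x) = x) :
    qmap sInv ∘ₗ Coalgebra.comul (R := k) =
      Algebra.linearMap k H ∘ₗ Coalgebra.counit (R := k) := by
  ext w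
  have r : Coalgebra.Repr k w (H × H) := Coalgebra.Repr.arbitrary k w
  simp only [LinearMap.comp_apply]
  rw [← r.eq, map_sum]
  simp only [qmap_tmul]
  rw [col_right_sInv_left sInv hsInv₁ hsInv₂ r]
  simp [Algebra.smul_def]

lemma qmap'_comul (sInv : H →ₗ[k] H)
    (hsInv₁ : ∀ x : H, sInv (HopfAlgebra.antipode (R := k) x) = x)
    (hsInv₂ : ∀ x : H, HopfAlgebra.antipode (R := k) (sInv x) = x) :
    qmap' sInv ∘ₗ Coalgebra.comul (R := k) =
      Algebra.linearMap k H ∘ₗ Coalgebra.counit (R := k) := by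
  ext w
  have r : Coalgebra.Repr k w (H × H) := Coalgebra.Repr.arbitrary k w
  simp only [LinearMap.comp_apply]
  rw [← r.eq, map_sum]
  simp only [qmap'_tmul]
  rw [col_sInv_right_left sInv hsInv₁ hsInv₂ r]
  simp [Algebra.smul_def]

/-- counit-unit collapse: `(id ⊗ (η∘ε)) ∘ Δ = (· ⊗ 1)`. -/
lemma lTensor_unit_counit_comul :
    LinearMap.lTensor H (Algebra.linearMap k H ∘ₗ Coalgebra.counit (R := k)) ∘ₗ
      Coalgebra.comul (R := k) = (TensorProduct.mk k H H).flip 1 := by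
  ext h
  rw [LinearMap.comp_apply, LinearMap.lTensor_comp, LinearMap.comp_apply]
  rw [Coalgebra.lTensor_counit_comul (R := k) h]
  simp

end AuxMaps

set_option synthInstance.maxHeartbeats 1000000
section AuxCoassoc
variable {k H}

local notation "Δ" => (Coalgebra.comul (R := k) (A := H))

/-- iterated comultiplication `h ↦ h₁ ⊗ (h₂ ⊗ h₃)`. -/
noncomputable def delta2 : H →ₗ[k] H ⊗[k] (H ⊗[k] H) :=
  LinearMap.lTensor H Δ ∘ₗ Δ

/-- reassociator `(a ⊗ (b ⊗ c)) ⊗ d ↦ a ⊗ (b ⊗ (c ⊗ d))`. -/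
noncomputable def nu : (H ⊗[k] (H ⊗[k] H)) ⊗[k] H →ₗ[k] H ⊗[k] (H ⊗[k] (H ⊗[k] H)) :=
  LinearMap.lTensor H (TensorProduct.assoc k H H H).toLinearMap ∘ₗ
    (TensorProduct.assoc k H (H ⊗[k] H) H).toLinearMap

@[simp] lemma nu_tmul (a b c d : H) :
    (nu (k := k)) ((a ⊗ₜ (b ⊗ₜ c)) ⊗ₜ d) = a ⊗ₜ (b ⊗ₜ (c ⊗ₜ d)) := by
  simp [nu]

/-- naturality plumbing. -/
lemma nu_structural (g : H →ₗ[k] H ⊗[k] H) :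
    nu ∘ₗ LinearMap.rTensor H (LinearMap.lTensor H g) ∘ₗ
        (TensorProduct.assoc k H H H).symm.toLinearMap =
      LinearMap.lTensor H (TensorProduct.assoc k H H H).toLinearMap ∘ₗ
        LinearMap.lTensor H (LinearMap.rTensor H g) := by
  apply TensorProduct.ext'
  intro a t
  induction t using TensorProduct.induction_on with
  | zero => simp only [TensorProduct.tmul_zero, map_zero]
  | add x y hx hy => simp only [TensorProduct.tmul_add, map_add, hx, hy]
  | tmul x y =>
    simp only [LinearMap.comp_apply, LinearEquiv.coe_coe, TensorProduct.assoc_symm_tmul,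
      LinearMap.rTensor_tmul, LinearMap.lTensor_tmul]
    induction g x using TensorProduct.induction_on with
    | zero => simp only [TensorProduct.tmul_zero, TensorProduct.zero_tmul, map_zero]
    | add s t hs ht => simp only [TensorProduct.tmul_add, TensorProduct.add_tmul, map_add, hs, ht]
    | tmul p q => simp [nu]

/-- `Δ³` as `ν ∘ (δ₂ ⊗ id) ∘ Δ = (id ⊗ δ₂) ∘ Δ`. -/
lemma claimA_s18 :
    nu ∘ₗ LinearMap.rTensor H (delta2 (k := k)) ∘ₗ Δ =
      LinearMap.lTensor H (delta2 (k := k)) ∘ₗ Δ := by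
  have h1 : LinearMap.rTensor H (delta2 (k := k)) ∘ₗ Δ =
      LinearMap.rTensor H (LinearMap.lTensor H Δ) ∘ₗ
        (TensorProduct.assoc k H H H).symm.toLinearMap ∘ₗ LinearMap.lTensor H Δ ∘ₗ Δ := by
    rw [delta2, LinearMap.rTensor_comp]
    rw [LinearMap.comp_assoc]
    congr 1
    exact (Coalgebra.coassoc_symm (R := k)).symm
  rw [h1]
  have h2 : nu ∘ₗ (LinearMap.rTensor H (LinearMap.lTensor H Δ) ∘ₗ
      (TensorProduct.assoc k H H H).symm.toLinearMap ∘ₗ LinearMap.lTensor H Δ ∘ₗ Δ) =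
      (nu ∘ₗ LinearMap.rTensor H (LinearMap.lTensor H Δ) ∘ₗ
        (TensorProduct.assoc k H H H).symm.toLinearMap) ∘ₗ LinearMap.lTensor H Δ ∘ₗ Δ := by
    simp only [LinearMap.comp_assoc]
  rw [h2, nu_structural]
  -- now: (lTensor assoc ∘ lTensor (rTensor Δ)) ∘ lTensor Δ ∘ Δ = lTensor δ₂ ∘ Δ
  have h3 : (LinearMap.lTensor H (TensorProduct.assoc k H H H).toLinearMap ∘ₗ
      LinearMap.lTensor H (LinearMap.rTensor H Δ)) ∘ₗ LinearMap.lTensor H Δ ∘ₗ Δ =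
      LinearMap.lTensor H ((TensorProduct.assoc k H H H).toLinearMap ∘ₗ
        LinearMap.rTensor H Δ ∘ₗ Δ) ∘ₗ Δ := by
    rw [LinearMap.lTensor_comp, LinearMap.lTensor_comp]
    simp only [LinearMap.comp_assoc]
  rw [h3]
  congr 2
  rw [delta2]
  exact Coalgebra.coassoc (R := k)

/-- mini-lemma: appending a fixed right factor. -/
lemma lTensor_mkflip (t : H ⊗[k] H) (c : H) :
    LinearMap.lTensor H ((TensorProduct.mk k H H).flip c) t =
      (TensorProduct.assoc k H H H) (t ⊗ₜ c) := by
  induction t using TensorProduct.induction_on with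
  | zero => simp only [TensorProduct.zero_tmul, map_zero]
  | add x y hx hy => rw [map_add, TensorProduct.add_tmul, map_add, hx, hy]
  | tmul x y => simp

/-- Lemma Q: the `q`-collapse of `Δ³`. -/
lemma lemmaQ (sInv : H →ₗ[k] H)
    (hsInv₁ : ∀ x : H, sInv (HopfAlgebra.antipode (R := k) x) = x)
    (hsInv₂ : ∀ x : H, HopfAlgebra.antipode (R := k) (sInv x) = x) :
    LinearMap.lTensor H (LinearMap.lTensor H (qmap sInv)) ∘ₗ
        (LinearMap.lTensor H (delta2 (k := k)) ∘ₗ Δ) =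
      LinearMap.lTensor H ((TensorProduct.mk k H H).flip 1) ∘ₗ Δ := by
  have : LinearMap.lTensor H (LinearMap.lTensor H (qmap sInv)) ∘ₗ
      (LinearMap.lTensor H (delta2 (k := k)) ∘ₗ Δ) =
      LinearMap.lTensor H (LinearMap.lTensor H (qmap sInv) ∘ₗ delta2 (k := k)) ∘ₗ Δ := by
    rw [LinearMap.lTensor_comp]
    simp only [LinearMap.comp_assoc]
  rw [this]
  congr 2
  rw [delta2, ← LinearMap.comp_assoc, ← LinearMap.lTensor_comp, qmap_comul sInv hsInv₁ hsInv₂]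
  exact lTensor_unit_counit_comul

end AuxCoassoc

section AuxMain
variable {k H}

local notation "Δ" => (Coalgebra.comul (R := k) (A := H))

lemma mulLeft_one' : LinearMap.mulLeft k (1 : H) = LinearMap.id := by ext x; simp

variable {V : Type u} [AddCommGroup V] [Module k V]

lemma star_of_compat' (sInv : H →ₗ[k] H)
    (hsInv₁ : ∀ x : H, sInv (HopfAlgebra.antipode (R := k) x) = x)
    (hsInv₂ : ∀ x : H, HopfAlgebra.antipode (R := k) (sInv x) = x)
    (aV : H →ₗ[k] V →ₗ[k] V) (B : Module.Dual k H →ₗ[k] V →ₗ[k] V)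
    (hC : ∀ (h : H) (f : Module.Dual k H) (v : V),
      aV h (B f v) = Phi sInv aV B f v (LinearMap.lTensor H Δ (Δ h)))
    (h : H) (f : Module.Dual k H) (v : V) :
    Lstar aV B f v (Δ h) = Rstar aV B f v (Δ h) := by
  have r : Coalgebra.Repr k h (H × H) := Coalgebra.Repr.arbitrary k h
  have claimD : ∀ d : H, Phi sInv aV B (f ∘ₗ LinearMap.mulLeft k d) v =
      Xi2 aV B f v ∘ₗ LinearMap.lTensor H (LinearMap.lTensor H (qmap sInv)) ∘ₗ nu ∘ₗ
        (TensorProduct.mk k (H ⊗[k] (H ⊗[k] H)) H).flip d := by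
    intro d
    apply TensorProduct.ext'
    intro a t
    induction t using TensorProduct.induction_on with
    | zero => simp only [TensorProduct.tmul_zero, map_zero]
    | add x y hx hy => simp only [TensorProduct.tmul_add, map_add, hx, hy]
    | tmul b c =>
      simp only [Phi_tmul, LinearMap.comp_apply, TensorProduct.mk_apply,
        LinearMap.flip_apply, nu_tmul, LinearMap.lTensor_tmul, qmap_tmul, Xi2_tmul]
      have hml : LinearMap.mulLeft k (d * sInv c) =
          LinearMap.mulLeft k d ∘ₗ LinearMap.mulLeft k (sInv c) := by ext z; simp [mul_assoc]
      rw [hml]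
      rfl
  calc Lstar aV B f v (Δ h)
      = ∑ j ∈ r.index, aV (r.left j) (B (f ∘ₗ LinearMap.mulLeft k (r.right j)) v) := by
        rw [← r.eq, map_sum]; simp
    _ = ∑ j ∈ r.index, Phi sInv aV B (f ∘ₗ LinearMap.mulLeft k (r.right j)) v
          (LinearMap.lTensor H Δ (Δ (r.left j))) :=
        Finset.sum_congr rfl fun j _ => hC (r.left j) _ v
    _ = ∑ j ∈ r.index, (Xi2 aV B f v) ((LinearMap.lTensor H (LinearMap.lTensor H (qmap sInv)))
          (nu ((LinearMap.lTensor H Δ (Δ (r.left j))) ⊗ₜ r.right j))) := by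
        refine Finset.sum_congr rfl fun j _ => ?_
        rw [claimD (r.right j)]
        rfl
    _ = (Xi2 aV B f v) ((LinearMap.lTensor H (LinearMap.lTensor H (qmap sInv)))
          (nu (LinearMap.rTensor H (delta2 (k := k)) (Δ h)))) := by
        rw [← r.eq, map_sum, map_sum, map_sum, map_sum]
        refine Finset.sum_congr rfl fun j _ => ?_
        rw [LinearMap.rTensor_tmul]
        rfl
    _ = (Xi2 aV B f v) ((LinearMap.lTensor H (LinearMap.lTensor H (qmap sInv)))
          ((LinearMap.lTensor H (delta2 (k := k))) (Δ h))) := by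
        have := congrArg (fun (L : H →ₗ[k] H ⊗[k] (H ⊗[k] (H ⊗[k] H))) => L h)
          (claimA_s18 (k := k) (H := H))
        simp only [LinearMap.comp_apply] at this
        rw [this]
    _ = (Xi2 aV B f v) ((LinearMap.lTensor H ((TensorProduct.mk k H H).flip 1)) (Δ h)) := by
        have := congrArg (fun (L : H →ₗ[k] H ⊗[k] (H ⊗[k] H)) => L h)
          (lemmaQ sInv hsInv₁ hsInv₂)
        simp only [LinearMap.comp_apply] at this
        rw [this]
    _ = ∑ j ∈ r.index, B (f ∘ₗ LinearMap.mulRight k (r.left j)) (aV (r.right j) v) := by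
        rw [← r.eq, map_sum, map_sum]
        refine Finset.sum_congr rfl fun j _ => ?_
        simp only [LinearMap.lTensor_tmul, TensorProduct.mk_apply, LinearMap.flip_apply,
          Xi2_tmul, mulLeft_one', LinearMap.id_comp]
    _ = Rstar aV B f v (Δ h) := by rw [← r.eq, map_sum]; simp

lemma compat'_of_star (sInv : H →ₗ[k] H)
    (hsInv₁ : ∀ x : H, sInv (HopfAlgebra.antipode (R := k) x) = x)
    (hsInv₂ : ∀ x : H, HopfAlgebra.antipode (R := k) (sInv x) = x)
    (aV : H →ₗ[k] V →ₗ[k] V) (B : Module.Dual k H →ₗ[k] V →ₗ[k] V)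
    (hS : ∀ (h : H) (f : Module.Dual k H) (v : V),
      Lstar aV B f v (Δ h) = Rstar aV B f v (Δ h))
    (h : H) (f : Module.Dual k H) (v : V) :
    aV h (B f v) = Phi sInv aV B f v (LinearMap.lTensor H Δ (Δ h)) := by
  have r : Coalgebra.Repr k h (H × H) := Coalgebra.Repr.arbitrary k h
  have claimE : ∀ c : H, Phi sInv aV B f v ∘ₗ LinearMap.lTensor H ((TensorProduct.mk k H H).flip c)
      = Rstar aV B (f ∘ₗ LinearMap.mulLeft k (sInv c)) v := by
    intro c
    apply TensorProduct.ext'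
    intro x y
    simp only [LinearMap.comp_apply, LinearMap.lTensor_tmul, TensorProduct.mk_apply,
      LinearMap.flip_apply, Phi_tmul, Rstar_tmul]
    rfl
  have claimF : ∀ c : H, Lstar aV B (f ∘ₗ LinearMap.mulLeft k (sInv c)) v =
      Lstar aV B f v ∘ₗ LinearMap.lTensor H (qmap' sInv) ∘ₗ
        LinearMap.lTensor H ((TensorProduct.mk k H H).flip c) := by
    intro c
    apply TensorProduct.ext'
    intro x y
    simp only [LinearMap.comp_apply, LinearMap.lTensor_tmul, TensorProduct.mk_apply,
      LinearMap.flip_apply, qmap'_tmul, Lstar_tmul]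
    have hml : LinearMap.mulLeft k (sInv c * y) =
        LinearMap.mulLeft k (sInv c) ∘ₗ LinearMap.mulLeft k y := by ext z; simp [mul_assoc]
    rw [hml]
    rfl
  have coas : LinearMap.lTensor H Δ (Δ h) =
      (TensorProduct.assoc k H H H) (LinearMap.rTensor H Δ (Δ h)) := by
    rw [Coalgebra.coassoc_apply]
  calc aV h (B f v)
      = aV h (B (f ∘ₗ LinearMap.mulLeft k (1 : H)) v) := by rw [mulLeft_one', LinearMap.comp_id]
    _ = Lstar aV B f v (h ⊗ₜ (1 : H)) := (Lstar_tmul aV B f v h 1).symm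
    _ = Lstar aV B f v ((LinearMap.lTensor H (qmap' sInv)) (LinearMap.lTensor H Δ (Δ h))) := by
        have hq : LinearMap.lTensor H (qmap' sInv) ∘ₗ LinearMap.lTensor H Δ =
            LinearMap.lTensor H (Algebra.linearMap k H ∘ₗ Coalgebra.counit (R := k)) := by
          rw [← LinearMap.lTensor_comp, qmap'_comul sInv hsInv₁ hsInv₂]
        have h2 := congrArg (fun (L : H ⊗[k] H →ₗ[k] H ⊗[k] H) => L (Δ h)) hq
        simp only [LinearMap.comp_apply] at h2
        rw [h2]
        have h3 := congrArg (fun (L : H →ₗ[k] H ⊗[k] H) => L h)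
          (lTensor_unit_counit_comul (k := k) (H := H))
        simp only [LinearMap.comp_apply] at h3
        rw [h3]
        rfl
    _ = ∑ j ∈ r.index, Lstar aV B f v ((LinearMap.lTensor H (qmap' sInv))
          ((LinearMap.lTensor H ((TensorProduct.mk k H H).flip (r.right j))) (Δ (r.left j)))) := by
        rw [coas, ← r.eq, map_sum, map_sum, map_sum, map_sum]
        refine Finset.sum_congr rfl fun j _ => ?_
        rw [LinearMap.rTensor_tmul, lTensor_mkflip]
    _ = ∑ j ∈ r.index, Lstar aV B (f ∘ₗ LinearMap.mulLeft k (sInv (r.right j))) v (Δ (r.left j)) := by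
        refine Finset.sum_congr rfl fun j _ => ?_
        rw [claimF (r.right j)]
        rfl
    _ = ∑ j ∈ r.index, Rstar aV B (f ∘ₗ LinearMap.mulLeft k (sInv (r.right j))) v (Δ (r.left j)) :=
        Finset.sum_congr rfl fun j _ => hS (r.left j) _ v
    _ = ∑ j ∈ r.index, Phi sInv aV B f v
          ((LinearMap.lTensor H ((TensorProduct.mk k H H).flip (r.right j))) (Δ (r.left j))) := by
        refine Finset.sum_congr rfl fun j _ => ?_
        rw [← claimE (r.right j)]
        rfl
    _ = Phi sInv aV B f v (LinearMap.lTensor H Δ (Δ h)) := by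
        rw [coas, ← r.eq, map_sum, map_sum, map_sum]
        refine Finset.sum_congr rfl fun j _ => ?_
        rw [LinearMap.rTensor_tmul, lTensor_mkflip]

end AuxMain


section AuxTheorem
variable {k H}
variable {V : Type u} [AddCommGroup V] [Module k V]

local notation "Δ" => (Coalgebra.comul (R := k) (A := H))

/-- `∑ g(eᵢ) • B(eⁱ) v = B g v`. -/
lemma sum_coord_smul {ι : Type u} [Fintype ι] [DecidableEq ι] (e : Module.Basis ι k H)
    (B : Module.Dual k H →ₗ[k] V →ₗ[k] V) (g : Module.Dual k H) (v : V) :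
    ∑ i, g (e i) • B (e.coord i) v = B g v := by
  conv_rhs => rw [← dual_expand e g]
  rw [map_sum, LinearMap.sum_apply]
  refine Finset.sum_congr rfl fun i _ => ?_
  rw [map_smul, LinearMap.smul_apply]

lemma dualConv_repr (f g : Module.Dual k H) {a : H} {ιr : Type*} (r : Coalgebra.Repr k a ιr) :
    dualConv f g a = ∑ i ∈ r.index, f (r.left i) * g (r.right i) := by
  show (LinearMap.mul' k k) ((TensorProduct.map f g) (Δ a)) = _
  rw [← r.eq, map_sum, map_sum]
  simp

end AuxTheorem

/-- π = 1 of Theorems `thm:ofnghis` and `thm:verpastwt`: for a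
finite-dimensional Hopf algebra `H` with bijective antipode, a `D(H)`-module
structure on `V` is the same data as an `H`-module structure `aV` together with
an action `B` of the convolution algebra `H*` satisfying the straightening
compatibility `h (f ⊳ v) = ⟨f, s⁻¹(h''') (−) h'⟩ ⊳ (h'' v)`; this holds iff the
associated coaction `ΔV v = ∑ᵢ (eⁱ ⊳ v) ⊗ eᵢ` makes `V` a Yetter-Drinfeld
module, and under this identification the braiding given by the canonical
R-matrix of `D(H)` is the Yetter-Drinfeld braiding; hence the category of
`D(H)`-modules is isomorphic, as a braided monoidal category, to the category
of Yetter-Drinfeld modules over `H`. -/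
theorem double_modules_iso_yd
    [FiniteDimensional k H]
    (sInv : H →ₗ[k] H)
    (hsInv₁ : ∀ x : H, sInv (HopfAlgebra.antipode (R := k) x) = x)
    (hsInv₂ : ∀ x : H, HopfAlgebra.antipode (R := k) (sInv x) = x)
    (ι : Type u) [Fintype ι] [DecidableEq ι] (e : Module.Basis ι k H)
    (V : Type u) [AddCommGroup V] [Module k V]
    (aV : H →ₗ[k] V →ₗ[k] V) (haV : IsAction k H V aV)
    (B : Module.Dual k H →ₗ[k] V →ₗ[k] V)
    (hB1 : ∀ v : V, B (Coalgebra.counit (R := k)) v = v)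
    (hB2 : ∀ (f g : Module.Dual k H) (v : V),
      B (dualConv f g) v = B f (B g v)) :
    let ΔV : V →ₗ[k] V ⊗[k] H :=
      ∑ i, ((TensorProduct.mk k V H).flip (e i)) ∘ₗ (B (e.coord i))
    let Compat : Prop :=
      ∀ (h : H) (f : Module.Dual k H) (v : V) (ι' : Type u) (S : Finset ι')
        (h₁ h₂ h₃ : ι' → H),
        (TensorProduct.map LinearMap.id (Coalgebra.comul (R := k)))
            (Coalgebra.comul (R := k) h) =
          ∑ i ∈ S, h₁ i ⊗ₜ (h₂ i ⊗ₜ h₃ i) →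
        aV h (B f v) =
          ∑ i ∈ S,
            B (f ∘ₗ (LinearMap.mulLeft k (sInv (h₃ i))) ∘ₗ
                (LinearMap.mulRight k (h₁ i)))
              (aV (h₂ i) v)
    -- the compatibility holds iff `V` is a Yetter-Drinfeld module
    (Compat ↔
      (YDCoassoc k H V ΔV ∧ YDCounital k H V ΔV ∧ YDCrossing k H V aV ΔV)) ∧
    -- the `H*`-action is recovered from the coaction
    (∀ (f : Module.Dual k H) (v : V),
      B f v = (TensorProduct.rid k V)
        ((TensorProduct.map LinearMap.id f) (ΔV v))) ∧
    -- the braiding coming from the canonical R-matrix of `D(H)` is the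
    -- Yetter-Drinfeld braiding
    (Compat →
      ∀ (W : Type u) [AddCommGroup W] [Module k W]
        (aW : H →ₗ[k] W →ₗ[k] W), IsAction k H W aW →
        (TensorProduct.comm k V W).toLinearMap ∘ₗ
            (∑ i, TensorProduct.map (B (e.coord i))
              (aW (HopfAlgebra.antipode (R := k) (e i)))) =
          ydHalfBraiding ΔV (TensorProduct.lift aW)) := by
  intro ΔV Compat
  have hΔV : ∀ v : V, ΔV v = ∑ i, B (e.coord i) v ⊗ₜ[k] e i := by
    intro v
    simp [ΔV, LinearMap.sum_apply]
  have hev : ∀ (g : Module.Dual k H) (v : V), evF g (ΔV v) = B g v := by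
    intro g v
    rw [hΔV v, map_sum]
    simp only [evF_tmul]
    exact sum_coord_smul e B g v
  -- the `Compat'` reformulation via the canonical linear map `Phi`
  have compat_iff : Compat ↔ ∀ (h : H) (f : Module.Dual k H) (v : V),
      aV h (B f v) = Phi sInv aV B f v
        ((TensorProduct.map LinearMap.id (Coalgebra.comul (R := k)))
          (Coalgebra.comul (R := k) h)) := by
    constructor
    · intro hc h f v
      obtain ⟨S₁, hS₁⟩ := TensorProduct.exists_finset (R := k) (Coalgebra.comul (R := k) h)
      choose S₂ hS₂ using fun p : H × H =>
        TensorProduct.exists_finset (R := k) (Coalgebra.comul (R := k) p.2)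
      have hdec : (TensorProduct.map LinearMap.id (Coalgebra.comul (R := k)))
          (Coalgebra.comul (R := k) h) =
          ∑ q ∈ S₁.sigma S₂, (q.1.1 : H) ⊗ₜ[k] ((q.2.1 : H) ⊗ₜ[k] (q.2.2 : H)) := by
        rw [Finset.sum_sigma, hS₁, map_sum]
        refine Finset.sum_congr rfl fun p _ => ?_
        rw [TensorProduct.map_tmul, hS₂ p, TensorProduct.tmul_sum]
        simp
      have hc2 := hc h f v ((_ : H × H) × (H × H)) (S₁.sigma S₂)
        (fun q => q.1.1) (fun q => q.2.1) (fun q => q.2.2) hdec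
      rw [hc2, hdec, map_sum]
      exact Finset.sum_congr rfl fun q _ => (Phi_tmul sInv aV B f v _ _ _).symm
    · intro hc' h f v ι' S h₁ h₂ h₃ hdec
      rw [hc' h f v, hdec, map_sum]
      exact Finset.sum_congr rfl fun q _ => Phi_tmul sInv aV B f v _ _ _
  -- crossing condition ↔ the `Star` condition
  have crossL : ∀ (h : H) (v : V) (g : Module.Dual k H),
      evF g (((TensorProduct.map (TensorProduct.lift aV) (LinearMap.mul' k H)) ∘ₗ
        (TensorProduct.tensorTensorTensorComm k H H V H).toLinearMap ∘ₗ
        (TensorProduct.map (Coalgebra.comul (R := k)) ΔV)) (h ⊗ₜ[k] v)) =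
      Lstar aV B g v (Coalgebra.comul (R := k) h) := by
    intro h v g
    have r : Coalgebra.Repr k h (H × H) := Coalgebra.Repr.arbitrary k h
    simp only [LinearMap.comp_apply, LinearEquiv.coe_coe, TensorProduct.map_tmul]
    rw [hΔV v, ← r.eq, TensorProduct.sum_tmul, map_sum, map_sum, map_sum, map_sum]
    refine Finset.sum_congr rfl fun j _ => ?_
    rw [TensorProduct.tmul_sum, map_sum, map_sum, map_sum, Lstar_tmul,
      ← sum_coord_smul e B (g ∘ₗ LinearMap.mulLeft k (r.right j)) v, map_sum]
    refine Finset.sum_congr rfl fun i _ => ?_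
    rw [TensorProduct.tensorTensorTensorComm_tmul, TensorProduct.map_tmul,
      TensorProduct.lift.tmul, LinearMap.mul'_apply, evF_tmul, map_smul]
    simp
  have crossR : ∀ (h : H) (v : V) (g : Module.Dual k H),
      evF g (((TensorProduct.map LinearMap.id (LinearMap.mul' k H)) ∘ₗ
        (TensorProduct.assoc k V H H).toLinearMap ∘ₗ
        (TensorProduct.comm k H (V ⊗[k] H)).toLinearMap ∘ₗ
        (TensorProduct.map LinearMap.id ΔV) ∘ₗ
        (TensorProduct.map LinearMap.id (TensorProduct.lift aV)) ∘ₗ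
        (TensorProduct.assoc k H H V).toLinearMap ∘ₗ
        (TensorProduct.map (Coalgebra.comul (R := k)) LinearMap.id)) (h ⊗ₜ[k] v)) =
      Rstar aV B g v (Coalgebra.comul (R := k) h) := by
    intro h v g
    have r : Coalgebra.Repr k h (H × H) := Coalgebra.Repr.arbitrary k h
    simp only [LinearMap.comp_apply, LinearEquiv.coe_coe, TensorProduct.map_tmul]
    rw [← r.eq, TensorProduct.sum_tmul, map_sum, map_sum, map_sum, map_sum, map_sum,
      map_sum, map_sum, map_sum]
    refine Finset.sum_congr rfl fun j _ => ?_
    rw [TensorProduct.assoc_tmul, TensorProduct.map_tmul, TensorProduct.lift.tmul]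
    simp only [LinearMap.id_coe, id_eq]
    rw [TensorProduct.map_tmul, hΔV (aV (r.right j) v), TensorProduct.tmul_sum,
      map_sum, map_sum, map_sum, map_sum, Rstar_tmul,
      ← sum_coord_smul e B (g ∘ₗ LinearMap.mulRight k (r.left j)) (aV (r.right j) v)]
    refine Finset.sum_congr rfl fun i _ => ?_
    rw [TensorProduct.comm_tmul, TensorProduct.assoc_tmul, TensorProduct.map_tmul,
      LinearMap.mul'_apply, evF_tmul]
    simp
  have crossing_iff : YDCrossing k H V aV ΔV ↔ ∀ (h : H) (f : Module.Dual k H) (v : V),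
      Lstar aV B f v (Coalgebra.comul (R := k) h) =
        Rstar aV B f v (Coalgebra.comul (R := k) h) := by
    constructor
    · intro hcr h f v
      have := congrArg (fun (L : H ⊗[k] V →ₗ[k] V ⊗[k] H) => L (h ⊗ₜ[k] v)) hcr
      have h1 := congrArg (evF f) this
      rwa [crossL h v f, crossR h v f] at h1
    · intro hstar
      unfold YDCrossing
      apply TensorProduct.ext'
      intro h v
      apply tensor_sep e
      intro g
      rw [crossL h v g, crossR h v g, hstar h g v]
  -- unconditional: coassociativity of the coaction
  have coassocV : YDCoassoc k H V ΔV := by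
    unfold YDCoassoc
    apply LinearMap.ext
    intro v
    simp only [LinearMap.comp_apply, LinearEquiv.coe_coe]
    apply (TensorProduct.assoc k V H H).symm.injective
    rw [LinearEquiv.symm_apply_apply]
    rw [hΔV v, map_sum, map_sum, map_sum]
    apply tensor_sep e
    intro g
    rw [map_sum, map_sum]
    apply tensor_sep e
    intro g'
    rw [map_sum, map_sum]
    have hL : ∀ i, evF g' (evF g ((TensorProduct.map ΔV LinearMap.id)
        (B (e.coord i) v ⊗ₜ[k] e i))) =
        g (e i) • B g' (B (e.coord i) v) := by
      intro i
      rw [TensorProduct.map_tmul]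
      simp only [LinearMap.id_coe, id_eq, evF_tmul]
      rw [map_smul]
      rw [hev g' (B (e.coord i) v)]
    have hR : ∀ i, evF g' (evF g ((TensorProduct.assoc k V H H).symm
        ((TensorProduct.map LinearMap.id (Coalgebra.comul (R := k)))
          (B (e.coord i) v ⊗ₜ[k] e i)))) =
        (dualConv g' g (e i)) • B (e.coord i) v := by
      intro i
      have ri : Coalgebra.Repr k (e i) (H × H) := Coalgebra.Repr.arbitrary k (e i)
      rw [TensorProduct.map_tmul]
      simp only [LinearMap.id_coe, id_eq]
      rw [← ri.eq, TensorProduct.tmul_sum, map_sum, map_sum, map_sum]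
      rw [dualConv_repr g' g ri, Finset.sum_smul]
      refine Finset.sum_congr rfl fun j _ => ?_
      rw [TensorProduct.assoc_symm_tmul]
      simp only [evF_tmul, map_smul, smul_smul]
      rw [mul_comm]
    calc ∑ i, evF g' (evF g ((TensorProduct.map ΔV LinearMap.id)
          (B (e.coord i) v ⊗ₜ[k] e i)))
        = ∑ i, g (e i) • B g' (B (e.coord i) v) := Finset.sum_congr rfl fun i _ => hL i
      _ = B g' (B g v) := by
          have hstep : ∑ i, g (e i) • B g' (B (e.coord i) v)
              = B g' (∑ i, g (e i) • B (e.coord i) v) := by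
            rw [map_sum]
            exact Finset.sum_congr rfl fun i _ => (map_smul _ _ _).symm
          rw [hstep, sum_coord_smul e B g v]
      _ = ∑ i, (dualConv g' g (e i)) • B (e.coord i) v := by
          rw [sum_coord_smul e B (dualConv g' g) v]
          rw [hB2 g' g v]
      _ = ∑ i, evF g' (evF g ((TensorProduct.assoc k V H H).symm
            ((TensorProduct.map LinearMap.id (Coalgebra.comul (R := k)))
              (B (e.coord i) v ⊗ₜ[k] e i)))) := (Finset.sum_congr rfl fun i _ => (hR i).symm)
  -- unconditional: counitality of the coaction
  have counitalV : YDCounital k H V ΔV := by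
    unfold YDCounital
    apply LinearMap.ext
    intro v
    simp only [LinearMap.comp_apply, LinearEquiv.coe_coe, LinearMap.id_apply]
    have : (TensorProduct.rid k V) ((TensorProduct.map LinearMap.id
        (Coalgebra.counit (R := k))) (ΔV v)) = evF (Coalgebra.counit (R := k)) (ΔV v) := rfl
    rw [this, hev, hB1]
  refine ⟨?_, ?_, ?_⟩
  · -- Compat ↔ YD conditions
    constructor
    · intro hc
      refine ⟨coassocV, counitalV, ?_⟩
      apply crossing_iff.mpr
      intro h f v
      exact star_of_compat' sInv hsInv₁ hsInv₂ aV B (compat_iff.mp hc) h f v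
    · rintro ⟨-, -, hcr⟩
      apply compat_iff.mpr
      intro h f v
      exact compat'_of_star sInv hsInv₁ hsInv₂ aV B (crossing_iff.mp hcr) h f v
  · -- recovery of the action from the coaction
    intro f v
    exact (hev f v).symm
  · -- the braiding
    intro _ W _ _ aW _
    apply TensorProduct.ext'
    intro v w
    simp only [LinearMap.comp_apply, LinearEquiv.coe_coe, LinearMap.sum_apply,
      TensorProduct.map_tmul, map_sum]
    simp only [ydHalfBraiding, LinearMap.comp_apply, LinearEquiv.coe_coe]
    rw [TensorProduct.map_tmul, hΔV v, TensorProduct.sum_tmul, map_sum, map_sum, map_sum]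
    refine Finset.sum_congr rfl fun i _ => ?_
    simp
end
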